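/- arXiv:1712.03033 — 4 statements merged into one kernel-verified Lean document; each statement's English description precedes it below -/
import Mathlib

section
/- The complete graph K_4 is the unique (up to isomorphism) simple 3-regular graph with κ₀(x,y) > 0 on every edge, and every edge xy of K_4 satisfies κ₀(x,y) = 2/3. -/
open Finset

variable {V : Type*}

/-- The non-normalized graph Laplacian: `Δ f (x) = ∑_{y ∼ x} (f y − f x)`. -/
noncomputable def graphLap (G : SimpleGraph V) [∀ v, Fintype (G.neighborSet v)]
    (f : V → ℝ) (x : V) : ℝ :=
  ∑ y ∈ G.neighborFinset x, (f y - f x)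

/-- The Bakry–Émery operator `Γ`: `2Γ(f,g) = Δ(fg) − fΔg − gΔf`. -/
noncomputable def graphGamma (G : SimpleGraph V) [∀ v, Fintype (G.neighborSet v)]
    (f g : V → ℝ) (x : V) : ℝ :=
  (graphLap G (fun z => f z * g z) x - f x * graphLap G g x - g x * graphLap G f x) / 2

/-- The Bakry–Émery operator `Γ₂`: `2Γ₂(f,g) = ΔΓ(f,g) − Γ(f,Δg) − Γ(Δf,g)`. -/
noncomputable def graphGamma2 (G : SimpleGraph V) [∀ v, Fintype (G.neighborSet v)]
    (f g : V → ℝ) (x : V) : ℝ :=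
  (graphLap G (graphGamma G f g) x - graphGamma G f (graphLap G g) x -
    graphGamma G (graphLap G f) g x) / 2

/-- A vertex `x` satisfies the curvature-dimension inequality `CD(0,∞)` if
`Γ₂(f)(x) ≥ 0` for all `f : V → ℝ`. -/
def SatisfiesCD (G : SimpleGraph V) [∀ v, Fintype (G.neighborSet v)] (x : V) : Prop :=
  ∀ f : V → ℝ, 0 ≤ graphGamma2 G f f x

open Classical in
/-- The idleness-0 probability measure `μ_x^0` at a vertex `x`. -/
noncomputable def muZero (G : SimpleGraph V) [∀ v, Fintype (G.neighborSet v)] (x : V) :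
    V → ℝ :=
  fun z => if G.Adj x z then 1 / (G.degree x : ℝ) else 0

/-- The Wasserstein distance `W₁(μ_x^0, μ_y^0)`: the infimum of the transport cost over
all couplings of `μ_x^0` and `μ_y^0`. -/
noncomputable def Wone (G : SimpleGraph V) [∀ v, Fintype (G.neighborSet v)] (x y : V) : ℝ :=
  sInf {w : ℝ | ∃ π : V → V → ℝ,
    (∀ u v, 0 ≤ π u v) ∧
    (∀ u v, π u v ≠ 0 → G.Adj x u ∧ G.Adj y v) ∧
    (∀ u, ∑ v ∈ G.neighborFinset y, π u v = muZero G x u) ∧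
    (∀ v, ∑ u ∈ G.neighborFinset x, π u v = muZero G y v) ∧
    w = ∑ u ∈ G.neighborFinset x, ∑ v ∈ G.neighborFinset y, (G.dist u v : ℝ) * π u v}

/-- The Ollivier–Ricci curvature with idleness `0`: `κ₀(x,y) = 1 − W₁(μ_x^0, μ_y^0)`. -/
noncomputable def kappaZero (G : SimpleGraph V) [∀ v, Fintype (G.neighborSet v)]
    (x y : V) : ℝ :=
  1 - Wone G x y

/-- The prism graph `Y n` on vertices `ZMod n × Bool`: two `n`-cycles joined by rungs;
equivalently the Cartesian product of the cycle `C_n` with `K₂`. -/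
def prismGraph (n : ℕ) : SimpleGraph (ZMod n × Bool) :=
  SimpleGraph.fromRel (fun p q => (p.2 = q.2 ∧ q.1 = p.1 + 1) ∨ (p.1 = q.1 ∧ p.2 ≠ q.2))

/-- The Möbius ladder `M n` on vertices `ZMod (2n)`: the cycle `C_{2n}` together with
all antipodal edges. -/
def mobiusLadder (n : ℕ) : SimpleGraph (ZMod (2 * n)) :=
  SimpleGraph.fromRel (fun p q => q = p + 1 ∨ q = p + (n : ZMod (2 * n)))

open Classical in
/-- The Laplacian matrix `L = D − A` of a finite graph. -/
noncomputable def lapMat (G : SimpleGraph V) [Fintype V] : Matrix V V ℝ :=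
  fun i j =>
    (if i = j then ∑ k : V, (if G.Adj i k then (1 : ℝ) else 0) else 0) -
      (if G.Adj i j then 1 else 0)

/-- `λ₁ G` : the smallest non-zero eigenvalue of the Laplacian matrix of `G`. -/
noncomputable def lambdaOne (G : SimpleGraph V) [Fintype V] : ℝ :=
  sInf {t : ℝ | t ≠ 0 ∧ ∃ v : V → ℝ, v ≠ 0 ∧ (lapMat G).mulVec v = t • v}

noncomputable instance fintypeNeighborSetOfFinite [Finite V] (G : SimpleGraph V) (v : V) :
    Fintype (G.neighborSet v) := Fintype.ofFinite _
namespace K4Aux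

variable {V : Type*}

/-- The coupling-cost set whose infimum is `Wone`. -/
def CSet (G : SimpleGraph V) [∀ v, Fintype (G.neighborSet v)] (x y : V) : Set ℝ :=
  {w : ℝ | ∃ π : V → V → ℝ,
    (∀ u v, 0 ≤ π u v) ∧
    (∀ u v, π u v ≠ 0 → G.Adj x u ∧ G.Adj y v) ∧
    (∀ u, ∑ v ∈ G.neighborFinset y, π u v = muZero G x u) ∧
    (∀ v, ∑ u ∈ G.neighborFinset x, π u v = muZero G y v) ∧
    w = ∑ u ∈ G.neighborFinset x, ∑ v ∈ G.neighborFinset y, (G.dist u v : ℝ) * π u v}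

lemma Wone_eq (G : SimpleGraph V) [∀ v, Fintype (G.neighborSet v)] (x y : V) :
    Wone G x y = sInf (CSet G x y) := rfl

lemma muZero_nonneg (G : SimpleGraph V) [∀ v, Fintype (G.neighborSet v)] (x z : V) :
    0 ≤ muZero G x z := by
  unfold muZero
  split <;> positivity

lemma muZero_of_adj (G : SimpleGraph V) [∀ v, Fintype (G.neighborSet v)] {x z : V}
    (h : G.Adj x z) : muZero G x z = 1 / (G.degree x : ℝ) := by
  simp [muZero, h]

lemma muZero_of_not_adj (G : SimpleGraph V) [∀ v, Fintype (G.neighborSet v)] {x z : V}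
    (h : ¬ G.Adj x z) : muZero G x z = 0 := by
  simp [muZero, h]

lemma sum_muZero (G : SimpleGraph V) [∀ v, Fintype (G.neighborSet v)] (x : V)
    (h : G.degree x ≠ 0) : ∑ v ∈ G.neighborFinset x, muZero G x v = 1 := by
  classical
  have h1 : ∀ v ∈ G.neighborFinset x, muZero G x v = 1 / (G.degree x : ℝ) := by
    intro v hv
    rw [SimpleGraph.mem_neighborFinset] at hv
    exact muZero_of_adj G hv
  rw [Finset.sum_congr rfl h1, Finset.sum_const, SimpleGraph.card_neighborFinset_eq_degree,
    nsmul_eq_mul]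
  field_simp

lemma CSet_nonempty (G : SimpleGraph V) [∀ v, Fintype (G.neighborSet v)] (x y : V)
    (hx : G.degree x ≠ 0) (hy : G.degree y ≠ 0) : (CSet G x y).Nonempty := by
  classical
  refine ⟨_, fun u v => muZero G x u * muZero G y v, ?_, ?_, ?_, ?_, rfl⟩
  · intro u v; exact mul_nonneg (muZero_nonneg G x u) (muZero_nonneg G y v)
  · intro u v h
    constructor
    · by_contra hc
      exact h (show muZero G x u * muZero G y v = 0 by rw [muZero_of_not_adj G hc, zero_mul])
    · by_contra hc
      exact h (show muZero G x u * muZero G y v = 0 by rw [muZero_of_not_adj G hc, mul_zero])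
  · intro u; rw [← Finset.mul_sum, sum_muZero G y hy, mul_one]
  · intro v; rw [← Finset.sum_mul, sum_muZero G x hx, one_mul]

lemma CSet_nonneg (G : SimpleGraph V) [∀ v, Fintype (G.neighborSet v)] (x y : V) :
    ∀ w ∈ CSet G x y, (0:ℝ) ≤ w := by
  rintro w ⟨π, hpos, -, -, -, rfl⟩
  refine Finset.sum_nonneg fun u _ => Finset.sum_nonneg fun v _ => ?_
  exact mul_nonneg (by positivity) (hpos u v)

lemma CSet_bddBelow (G : SimpleGraph V) [∀ v, Fintype (G.neighborSet v)] (x y : V) :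
    BddBelow (CSet G x y) := ⟨0, CSet_nonneg G x y⟩

/-- Positivity of `κ₀` on an edge of a connected cubic graph forces a common neighbor. -/
lemma common_of_pos (G : SimpleGraph V) [∀ v, Fintype (G.neighborSet v)]
    (hconn : G.Connected) (hdeg : ∀ v, G.degree v = 3) {x y : V} (_hxy : G.Adj x y)
    (hpos : 0 < kappaZero G x y) : ∃ z, G.Adj x z ∧ G.Adj y z := by
  classical
  by_contra hno
  push_neg at hno
  have hx3 : G.degree x ≠ 0 := by rw [hdeg]; norm_num
  have hy3 : G.degree y ≠ 0 := by rw [hdeg]; norm_num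
  have hW : Wone G x y < 1 := by unfold kappaZero at hpos; linarith
  rw [Wone_eq] at hW
  obtain ⟨w, hwmem, hw1⟩ := exists_lt_of_csInf_lt (CSet_nonempty G x y hx3 hy3) hW
  obtain ⟨π, hp, hs, hr, hc, rfl⟩ := hwmem
  have key : ∀ u ∈ G.neighborFinset x, ∀ v ∈ G.neighborFinset y,
      π u v ≤ (G.dist u v : ℝ) * π u v := by
    intro u _ v _
    rcases eq_or_ne (π u v) 0 with h0 | h0
    · simp [h0]
    · have hadj := hs u v h0
      have hne : u ≠ v := by rintro rfl; exact hno u hadj.1 hadj.2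
      have h1 : 1 ≤ G.dist u v := hconn.pos_dist_of_ne hne
      have h1' : (1:ℝ) ≤ (G.dist u v : ℝ) := by exact_mod_cast h1
      nlinarith [hp u v]
  have hge : (1:ℝ) ≤ ∑ u ∈ G.neighborFinset x, ∑ v ∈ G.neighborFinset y,
      (G.dist u v : ℝ) * π u v := by
    calc (1:ℝ) = ∑ u ∈ G.neighborFinset x, muZero G x u := (sum_muZero G x hx3).symm
    _ = ∑ u ∈ G.neighborFinset x, ∑ v ∈ G.neighborFinset y, π u v :=
        Finset.sum_congr rfl (fun u _ => (hr u).symm)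
    _ ≤ _ := Finset.sum_le_sum (fun u hu => Finset.sum_le_sum (key u hu))
  linarith

end K4Aux
namespace K4Aux

lemma neighborFinset_eq {V : Type*} [Fintype V] [DecidableEq V] (G : SimpleGraph V)
    [∀ v, Fintype (G.neighborSet v)] (hadj : ∀ u w : V, G.Adj u w ↔ u ≠ w) (u : V) :
    G.neighborFinset u = Finset.univ.erase u := by
  ext z
  simp [SimpleGraph.mem_neighborFinset, hadj, ne_comm]

lemma degree_eq {V : Type*} [Fintype V] [DecidableEq V] (G : SimpleGraph V)
    [∀ v, Fintype (G.neighborSet v)] (hcard : Fintype.card V = 4)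
    (hadj : ∀ u w : V, G.Adj u w ↔ u ≠ w) (u : V) : G.degree u = 3 := by
  rw [← SimpleGraph.card_neighborFinset_eq_degree, neighborFinset_eq G hadj,
    Finset.card_erase_of_mem (Finset.mem_univ u), Finset.card_univ, hcard]

lemma kappa_complete4 {V : Type*} [Fintype V] (G : SimpleGraph V)
    [∀ v, Fintype (G.neighborSet v)] (hcard : Fintype.card V = 4)
    (hadj : ∀ u w : V, G.Adj u w ↔ u ≠ w) {x y : V} (hxy : G.Adj x y) :
    kappaZero G x y = 2/3 := by
  classical
  have hdeg : ∀ u, G.degree u = 3 := degree_eq G hcard hadj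
  have hNx : G.neighborFinset x = Finset.univ.erase x := neighborFinset_eq G hadj x
  have hNy : G.neighborFinset y = Finset.univ.erase y := neighborFinset_eq G hadj y
  have hne : x ≠ y := (hadj x y).1 hxy
  have hdist1 : ∀ u v : V, u ≠ v → G.dist u v = 1 := fun u v h =>
    SimpleGraph.dist_eq_one_iff_adj.2 ((hadj u v).2 h)
  have hmu : ∀ u z : V, G.Adj u z → muZero G u z = 1/3 := by
    intro u z h
    rw [muZero_of_adj G h, hdeg]
    norm_num
  -- the optimal coupling
  have hmem : (1/3 : ℝ) ∈ CSet G x y := by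
    set π : V → V → ℝ :=
      fun u v => if (u = y ∧ v = x) ∨ (u = v ∧ u ≠ x ∧ u ≠ y) then (1/3:ℝ) else 0 with hπ
    refine ⟨π, ?_, ?_, ?_, ?_, ?_⟩
    · intro u v
      rw [hπ]
      dsimp only
      split <;> norm_num
    · intro u v h
      rw [hπ] at h
      dsimp only at h
      by_cases hc : (u = y ∧ v = x) ∨ (u = v ∧ u ≠ x ∧ u ≠ y)
      · rcases hc with ⟨rfl, rfl⟩ | ⟨rfl, hux, huy⟩
        · exact ⟨hxy, hxy.symm⟩
        · exact ⟨(hadj x u).2 (Ne.symm hux), (hadj y u).2 (Ne.symm huy)⟩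
      · rw [if_neg hc] at h
        exact absurd rfl h
    · -- row marginals
      intro u
      rw [hNy]
      by_cases huy : u = y
      · subst huy
        have eq1 : ∀ v ∈ Finset.univ.erase u, π u v = if v = x then (1/3:ℝ) else 0 := by
          intro v _
          rw [hπ]; dsimp only
          by_cases hvx : v = x
          · subst hvx; rw [if_pos (Or.inl ⟨rfl, rfl⟩), if_pos rfl]
          · rw [if_neg, if_neg hvx]
            rintro (⟨-, h⟩ | ⟨rfl, -, h⟩)
            · exact hvx h
            · exact h rfl
        rw [Finset.sum_congr rfl eq1, Finset.sum_ite_eq' _ x,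
          if_pos (Finset.mem_erase.2 ⟨hne, Finset.mem_univ x⟩), hmu x u hxy]
      · by_cases hux : u = x
        · subst hux
          have eq1 : ∀ v ∈ Finset.univ.erase y, π u v = 0 := by
            intro v _
            rw [hπ]; dsimp only
            rw [if_neg]
            rintro (⟨h, -⟩ | ⟨-, h, -⟩)
            · exact hne h
            · exact h rfl
          rw [Finset.sum_congr rfl eq1, Finset.sum_const_zero,
            muZero_of_not_adj G (G.irrefl)]
        · have eq1 : ∀ v ∈ Finset.univ.erase y, π u v = if v = u then (1/3:ℝ) else 0 := by
            intro v _
            rw [hπ]; dsimp only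
            by_cases hvu : v = u
            · subst hvu; rw [if_pos (Or.inr ⟨rfl, hux, huy⟩), if_pos rfl]
            · rw [if_neg, if_neg hvu]
              rintro (⟨h, -⟩ | ⟨h, -, -⟩)
              · exact huy h
              · exact hvu h.symm
          rw [Finset.sum_congr rfl eq1, Finset.sum_ite_eq' _ u,
            if_pos (Finset.mem_erase.2 ⟨huy, Finset.mem_univ u⟩),
            hmu x u ((hadj x u).2 (Ne.symm hux))]
    · -- column marginals
      intro v
      rw [hNx]
      by_cases hvx : v = x
      · subst hvx
        have eq1 : ∀ u ∈ Finset.univ.erase v, π u v = if u = y then (1/3:ℝ) else 0 := by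
          intro u _
          rw [hπ]; dsimp only
          by_cases huy : u = y
          · subst huy; rw [if_pos (Or.inl ⟨rfl, rfl⟩), if_pos rfl]
          · rw [if_neg, if_neg huy]
            rintro (⟨h, -⟩ | ⟨rfl, h, -⟩)
            · exact huy h
            · exact h rfl
        rw [Finset.sum_congr rfl eq1, Finset.sum_ite_eq' _ y,
          if_pos (Finset.mem_erase.2 ⟨hne.symm, Finset.mem_univ y⟩), hmu y v hxy.symm]
      · by_cases hvy : v = y
        · subst hvy
          have eq1 : ∀ u ∈ Finset.univ.erase x, π u v = 0 := by
            intro u _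
            rw [hπ]; dsimp only
            rw [if_neg]
            rintro (⟨-, h⟩ | ⟨rfl, -, h⟩)
            · exact hne h.symm
            · exact h rfl
          rw [Finset.sum_congr rfl eq1, Finset.sum_const_zero,
            muZero_of_not_adj G (G.irrefl)]
        · have eq1 : ∀ u ∈ Finset.univ.erase x, π u v = if u = v then (1/3:ℝ) else 0 := by
            intro u _
            rw [hπ]; dsimp only
            by_cases huv : u = v
            · subst huv; rw [if_pos (Or.inr ⟨rfl, hvx, hvy⟩), if_pos rfl]
            · rw [if_neg, if_neg huv]
              rintro (⟨-, h⟩ | ⟨h, -, -⟩)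
              · exact hvx h
              · exact huv h
          rw [Finset.sum_congr rfl eq1, Finset.sum_ite_eq' _ v,
            if_pos (Finset.mem_erase.2 ⟨hvx, Finset.mem_univ v⟩),
            hmu y v ((hadj y v).2 (Ne.symm hvy))]
    · -- cost
      have hterm : ∀ u v : V, (G.dist u v : ℝ) * π u v =
          (if u = y then (1:ℝ) else 0) * (if v = x then (1/3:ℝ) else 0) := by
        intro u v
        rw [hπ]; dsimp only
        by_cases h1 : u = y <;> by_cases h2 : v = x
        · rw [if_pos (Or.inl ⟨h1, h2⟩), if_pos h1, if_pos h2, h1, h2, hdist1 y x hne.symm]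
          norm_num
        · rw [if_pos h1, if_neg h2, if_neg, mul_zero, mul_zero]
          rw [h1] at *
          rintro (⟨-, h⟩ | ⟨-, -, h⟩)
          · exact h2 h
          · exact h rfl
        · rw [if_neg h1, zero_mul, if_neg, mul_zero]
          rintro (⟨h, -⟩ | ⟨heq, h, -⟩)
          · exact h1 h
          · exact h (heq.trans h2)
        · rw [if_neg h1, zero_mul]
          by_cases huv : u = v
          · subst huv
            rw [SimpleGraph.dist_self]
            norm_num
          · rw [if_neg, mul_zero]
            rintro (⟨h, -⟩ | ⟨h, -, -⟩)
            · exact h1 h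
            · exact huv h
      rw [Finset.sum_congr rfl fun u _ => Finset.sum_congr rfl fun v _ => hterm u v,
        ← Finset.sum_mul_sum, hNx, hNy, Finset.sum_ite_eq' _ y, Finset.sum_ite_eq' _ x,
        if_pos (Finset.mem_erase.2 ⟨hne.symm, Finset.mem_univ y⟩),
        if_pos (Finset.mem_erase.2 ⟨hne, Finset.mem_univ x⟩)]
      norm_num
  -- lower bound
  have hlb : ∀ w ∈ CSet G x y, (1/3 : ℝ) ≤ w := by
    rintro w ⟨π, hpos, hsupp, hrow, hcol, rfl⟩
    set f : V → ℝ := fun z => if z = x then 0 else 1 with hf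
    have hf0 : ∀ z, 0 ≤ f z := by intro z; rw [hf]; dsimp only; split <;> norm_num
    have hf1 : ∀ z, f z ≤ 1 := by intro z; rw [hf]; dsimp only; split <;> norm_num
    have hkey : ∀ u v : V, (f u - f v) * π u v ≤ (G.dist u v : ℝ) * π u v := by
      intro u v
      rcases eq_or_ne u v with rfl | h
      · simp [SimpleGraph.dist_self]
      · rw [hdist1 u v h]
        have h1 : f u - f v ≤ 1 := by have := hf1 u; have := hf0 v; linarith
        have h2 := hpos u v
        push_cast
        nlinarith
    have hsum1 : ∑ u ∈ G.neighborFinset x, ∑ v ∈ G.neighborFinset y,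
        (f u - f v) * π u v = 1/3 := by
      have expand : ∀ u v : V, (f u - f v) * π u v = f u * π u v - f v * π u v := by
        intro u v; ring
      rw [Finset.sum_congr rfl fun u _ => Finset.sum_congr rfl fun v _ => expand u v]
      rw [Finset.sum_congr rfl fun u _ => Finset.sum_sub_distrib _ _, Finset.sum_sub_distrib]
      have part1 : ∑ u ∈ G.neighborFinset x, ∑ v ∈ G.neighborFinset y, f u * π u v = 1 := by
        have e1 : ∀ u ∈ G.neighborFinset x,
            ∑ v ∈ G.neighborFinset y, f u * π u v = 1/3 := by
          intro u hu
          rw [← Finset.mul_sum, hrow u]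
          have hadjxu := (SimpleGraph.mem_neighborFinset _ _ _).1 hu
          have hux : u ≠ x := (G.ne_of_adj hadjxu).symm
          rw [hmu x u hadjxu, hf]
          dsimp only
          rw [if_neg hux, one_mul]
        rw [Finset.sum_congr rfl e1, Finset.sum_const,
          SimpleGraph.card_neighborFinset_eq_degree, hdeg, nsmul_eq_mul]
        norm_num
      have part2 : ∑ u ∈ G.neighborFinset x, ∑ v ∈ G.neighborFinset y, f v * π u v
          = 2/3 := by
        rw [Finset.sum_comm]
        have e1 : ∀ v ∈ G.neighborFinset y,
            ∑ u ∈ G.neighborFinset x, f v * π u v = f v * (1/3 : ℝ) := by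
          intro v hv
          rw [← Finset.mul_sum, hcol v,
            hmu y v ((SimpleGraph.mem_neighborFinset _ _ _).1 hv)]
        rw [Finset.sum_congr rfl e1]
        have e2 : ∀ v ∈ G.neighborFinset y, f v * (1/3:ℝ)
            = 1/3 - (if v = x then (1/3:ℝ) else 0) := by
          intro v _
          rw [hf]; dsimp only
          by_cases hvx : v = x
          · rw [if_pos hvx, if_pos hvx]; norm_num
          · rw [if_neg hvx, if_neg hvx]; norm_num
        rw [Finset.sum_congr rfl e2, Finset.sum_sub_distrib, Finset.sum_const,
          SimpleGraph.card_neighborFinset_eq_degree, hdeg, Finset.sum_ite_eq' _ x,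
          if_pos ((SimpleGraph.mem_neighborFinset _ _ _).2 hxy.symm), nsmul_eq_mul]
        norm_num
      rw [part1, part2]
      norm_num
    calc (1/3 : ℝ) = ∑ u ∈ G.neighborFinset x, ∑ v ∈ G.neighborFinset y,
        (f u - f v) * π u v := hsum1.symm
    _ ≤ _ := Finset.sum_le_sum fun u _ => Finset.sum_le_sum fun v _ => hkey u v
  have hW : Wone G x y = 1/3 := by
    rw [Wone_eq]
    exact le_antisymm (csInf_le (CSet_bddBelow G x y) hmem) (le_csInf ⟨_, hmem⟩ hlb)
  rw [kappaZero, hW]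
  norm_num

end K4Aux
namespace K4Aux

lemma neighborFinset_eq_of_three {V : Type*} [DecidableEq V] (G : SimpleGraph V)
    [∀ v, Fintype (G.neighborSet v)] {v a b c : V} (hdeg : G.degree v = 3)
    (hab : a ≠ b) (hac : a ≠ c) (hbc : b ≠ c)
    (ha : G.Adj v a) (hb : G.Adj v b) (hc : G.Adj v c) :
    G.neighborFinset v = {a, b, c} := by
  have hsub : ({a, b, c} : Finset V) ⊆ G.neighborFinset v := by
    intro z hz
    simp only [Finset.mem_insert, Finset.mem_singleton] at hz
    rcases hz with rfl | rfl | rfl <;> simpa [SimpleGraph.mem_neighborFinset]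
  have hcard3 : ({a, b, c} : Finset V).card = 3 := by
    rw [Finset.card_insert_of_notMem (by simp [hab, hac]),
      Finset.card_insert_of_notMem (by simp [hbc]), Finset.card_singleton]
  exact (Finset.eq_of_subset_of_card_le hsub
    (by rw [SimpleGraph.card_neighborFinset_eq_degree, hdeg, hcard3])).symm

lemma mem_of_three {V : Type*} (G : SimpleGraph V)
    [∀ v, Fintype (G.neighborSet v)] {v a b c : V} (hdeg : G.degree v = 3)
    (hab : a ≠ b) (hac : a ≠ c) (hbc : b ≠ c)
    (ha : G.Adj v a) (hb : G.Adj v b) (hc : G.Adj v c) :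
    ∀ z, G.Adj v z → z = a ∨ z = b ∨ z = c := by
  classical
  intro z hz
  have hm : z ∈ G.neighborFinset v := (SimpleGraph.mem_neighborFinset _ _ _).2 hz
  rw [neighborFinset_eq_of_three G hdeg hab hac hbc ha hb hc] at hm
  simpa using hm

/-- In a cubic graph where every edge lies in a triangle, any two neighbors of a common
vertex are adjacent. -/
lemma adj_of_triangles {V : Type*} (G : SimpleGraph V) [∀ v, Fintype (G.neighborSet v)]
    (hdeg : ∀ v, G.degree v = 3)
    (htri : ∀ x y, G.Adj x y → ∃ z, G.Adj x z ∧ G.Adj y z)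
    {v a b c : V} (hab : a ≠ b) (hac : a ≠ c) (hbc : b ≠ c)
    (ha : G.Adj v a) (hb : G.Adj v b) (hc : G.Adj v c) :
    G.Adj b c := by
  classical
  by_contra hnbc
  have hmemNv : ∀ z, G.Adj v z → z = a ∨ z = b ∨ z = c :=
    mem_of_three G (hdeg v) hab hac hbc ha hb hc
  have hba : G.Adj a b := by
    obtain ⟨z, hvz, hbz⟩ := htri v b hb
    rcases hmemNv z hvz with rfl | rfl | rfl
    · exact hbz.symm
    · exact absurd hbz (G.irrefl)
    · exact absurd hbz hnbc
  have hca : G.Adj a c := by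
    obtain ⟨z, hvz, hcz⟩ := htri v c hc
    rcases hmemNv z hvz with rfl | rfl | rfl
    · exact hcz.symm
    · exact absurd hcz.symm hnbc
    · exact absurd hcz (G.irrefl)
  have hvb : v ≠ b := G.ne_of_adj hb
  have hvc : v ≠ c := G.ne_of_adj hc
  have hva : v ≠ a := G.ne_of_adj ha
  have hmemNa : ∀ z, G.Adj a z → z = v ∨ z = b ∨ z = c :=
    mem_of_three G (hdeg a) hvb hvc hbc ha.symm hba hca
  -- b has a third neighbor x outside {v, a}
  have hsub2 : ({v, a} : Finset V) ⊆ G.neighborFinset b := by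
    intro z hz
    simp only [Finset.mem_insert, Finset.mem_singleton] at hz
    rcases hz with rfl | rfl <;> simp [SimpleGraph.mem_neighborFinset, hb.symm, hba.symm]
  have hnon : (G.neighborFinset b \ ({v, a} : Finset V)).Nonempty := by
    rw [← Finset.card_pos]
    have h1 := Finset.le_card_sdiff ({v, a} : Finset V) (G.neighborFinset b)
    have h2 : ({v, a} : Finset V).card ≤ 2 :=
      le_trans (Finset.card_insert_le _ _) (by simp)
    have h3 : (G.neighborFinset b).card = 3 := by
      rw [SimpleGraph.card_neighborFinset_eq_degree, hdeg]
    omega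
  obtain ⟨x, hx⟩ := hnon
  rw [Finset.mem_sdiff] at hx
  obtain ⟨hxNb, hxva⟩ := hx
  have hbx : G.Adj b x := (SimpleGraph.mem_neighborFinset _ _ _).1 hxNb
  have hxv : x ≠ v := by rintro rfl; exact hxva (by simp)
  have hxa : x ≠ a := by rintro rfl; exact hxva (by simp)
  have hxb : x ≠ b := (G.ne_of_adj hbx).symm
  have hxc : x ≠ c := by rintro rfl; exact hnbc hbx
  have hmemNb : ∀ z, G.Adj b z → z = v ∨ z = a ∨ z = x :=
    mem_of_three G (hdeg b) (G.ne_of_adj ha) hxv.symm hxa.symm hb.symm hba.symm hbx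
  obtain ⟨z, hbz2, hxz⟩ := htri b x hbx
  rcases hmemNb z hbz2 with rfl | rfl | rfl
  · rcases hmemNv x hxz.symm with rfl | rfl | rfl
    · exact hxa rfl
    · exact hxb rfl
    · exact hxc rfl
  · rcases hmemNa x hxz.symm with rfl | rfl | rfl
    · exact hxv rfl
    · exact hxb rfl
    · exact hxc rfl
  · exact absurd hxz (G.irrefl)

/-- A connected cubic graph in which every edge lies in a triangle has exactly four
vertices and is complete. -/
lemma cubic_triangle_complete {V : Type*} [Fintype V] (G : SimpleGraph V)
    [∀ v, Fintype (G.neighborSet v)] (hconn : G.Connected) (hdeg : ∀ v, G.degree v = 3)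
    (htri : ∀ x y, G.Adj x y → ∃ z, G.Adj x z ∧ G.Adj y z) :
    Fintype.card V = 4 ∧ ∀ u w : V, G.Adj u w ↔ u ≠ w := by
  classical
  obtain ⟨v⟩ := hconn.nonempty
  have h3 : (G.neighborFinset v).card = 3 := by
    rw [SimpleGraph.card_neighborFinset_eq_degree, hdeg]
  obtain ⟨a, b, c, hab, hac, hbc, hN⟩ := Finset.card_eq_three.1 h3
  have ha : G.Adj v a := by
    rw [← SimpleGraph.mem_neighborFinset, hN]; simp
  have hb : G.Adj v b := by
    rw [← SimpleGraph.mem_neighborFinset, hN]; simp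
  have hc : G.Adj v c := by
    rw [← SimpleGraph.mem_neighborFinset, hN]; simp
  have hAB : G.Adj a b := adj_of_triangles G hdeg htri hac.symm hbc.symm hab hc ha hb
  have hAC : G.Adj a c := adj_of_triangles G hdeg htri hab.symm hbc hac hb ha hc
  have hBC : G.Adj b c := adj_of_triangles G hdeg htri hab hac hbc ha hb hc
  have hva : v ≠ a := G.ne_of_adj ha
  have hvb : v ≠ b := G.ne_of_adj hb
  have hvc : v ≠ c := G.ne_of_adj hc
  have hNv : ∀ z, G.Adj v z → z = a ∨ z = b ∨ z = c :=
    mem_of_three G (hdeg v) hab hac hbc ha hb hc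
  have hNa : ∀ z, G.Adj a z → z = v ∨ z = b ∨ z = c :=
    mem_of_three G (hdeg a) hvb hvc hbc ha.symm hAB hAC
  have hNb : ∀ z, G.Adj b z → z = v ∨ z = a ∨ z = c :=
    mem_of_three G (hdeg b) hva hvc hac hb.symm hAB.symm hBC
  have hNc : ∀ z, G.Adj c z → z = v ∨ z = a ∨ z = b :=
    mem_of_three G (hdeg c) hva hvb hab hc.symm hAC.symm hBC.symm
  have hclosed : ∀ u w, G.Adj u w → (u = v ∨ u = a ∨ u = b ∨ u = c) →
      (w = v ∨ w = a ∨ w = b ∨ w = c) := by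
    intro u w huw hu
    rcases hu with rfl | rfl | rfl | rfl
    · rcases hNv w huw with rfl | rfl | rfl <;> tauto
    · rcases hNa w huw with rfl | rfl | rfl <;> tauto
    · rcases hNb w huw with rfl | rfl | rfl <;> tauto
    · rcases hNc w huw with rfl | rfl | rfl <;> tauto
  have hall : ∀ u : V, u = v ∨ u = a ∨ u = b ∨ u = c := by
    intro u
    have key : ∀ (s t : V) (p : G.Walk s t), (s = v ∨ s = a ∨ s = b ∨ s = c) →
        (t = v ∨ t = a ∨ t = b ∨ t = c) := by
      intro s t p
      induction p with
      | nil => exact id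
      | cons h q ih => exact fun hs => ih (hclosed _ _ h hs)
    obtain ⟨p⟩ := hconn.preconnected v u
    exact key v u p (Or.inl rfl)
  have huniv : (Finset.univ : Finset V) = {v, a, b, c} := by
    ext u
    simp only [Finset.mem_univ, Finset.mem_insert, Finset.mem_singleton, true_iff]
    exact hall u
  have hcard : Fintype.card V = 4 := by
    rw [← Finset.card_univ, huniv,
      Finset.card_insert_of_notMem (by simp [hva, hvb, hvc]),
      Finset.card_insert_of_notMem (by simp [hab, hac]),
      Finset.card_insert_of_notMem (by simp [hbc]), Finset.card_singleton]
  refine ⟨hcard, fun u w => ⟨G.ne_of_adj, fun hne => ?_⟩⟩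
  have hsubN : G.neighborFinset u ⊆ Finset.univ.erase u := by
    intro z hz
    rw [SimpleGraph.mem_neighborFinset] at hz
    exact Finset.mem_erase.2 ⟨(G.ne_of_adj hz).symm, Finset.mem_univ z⟩
  have hNu : G.neighborFinset u = Finset.univ.erase u :=
    Finset.eq_of_subset_of_card_le hsubN (by
      rw [Finset.card_erase_of_mem (Finset.mem_univ u), Finset.card_univ, hcard,
        SimpleGraph.card_neighborFinset_eq_degree, hdeg])
  have hw : w ∈ G.neighborFinset u := by
    rw [hNu]
    exact Finset.mem_erase.2 ⟨hne.symm, Finset.mem_univ w⟩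
  exact (SimpleGraph.mem_neighborFinset _ _ _).1 hw

end K4Aux
/-- Every edge of `K₄` has `κ₀ = 2/3`, and `K₄` is the unique (up to
isomorphism) finite connected simple 3-regular graph with `κ₀ > 0` on every edge. -/
theorem K4_unique_positively_curved_cubic :
    (∀ x y : Fin 4, (⊤ : SimpleGraph (Fin 4)).Adj x y →
      kappaZero (⊤ : SimpleGraph (Fin 4)) x y = 2 / 3) ∧
    (∀ (V : Type) [Fintype V] (G : SimpleGraph V) [∀ v, Fintype (G.neighborSet v)],
      G.Connected → (∀ v : V, G.degree v = 3) →
      ((∀ x y : V, G.Adj x y → 0 < kappaZero G x y) ↔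
        Nonempty (G ≃g (⊤ : SimpleGraph (Fin 4))))) := by
  constructor
  · intro x y hxy
    exact K4Aux.kappa_complete4 _ (by simp) (fun u w => by simp) hxy
  · intro V _ G _ hconn hdeg
    constructor
    · intro hpos
      have htri : ∀ x y, G.Adj x y → ∃ z, G.Adj x z ∧ G.Adj y z :=
        fun x y hxy => K4Aux.common_of_pos G hconn hdeg hxy (hpos x y hxy)
      obtain ⟨hcard, hadj⟩ := K4Aux.cubic_triangle_complete G hconn hdeg htri
      let e : V ≃ Fin 4 := Fintype.equivFinOfCardEq hcard
      refine ⟨{ toEquiv := e, map_rel_iff' := ?_ }⟩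
      intro p q
      rw [SimpleGraph.top_adj, hadj]
      exact e.injective.ne_iff
    · rintro ⟨φ⟩ x y hxy
      have hcard : Fintype.card V = 4 := by
        rw [Fintype.card_congr φ.toEquiv, Fintype.card_fin]
      have hadj : ∀ u w : V, G.Adj u w ↔ u ≠ w := by
        intro u w
        rw [← φ.map_adj_iff, SimpleGraph.top_adj]
        exact φ.toEquiv.injective.ne_iff
      rw [K4Aux.kappa_complete4 G hcard hadj hxy]
      norm_num
end

section
/- For every n ≥ 2, the multiset of eigenvalues of the Laplacian matrix of the Möbius ladder M_n is {3 + (−1)^{j+1} − 2cos(πj/n) : j = 0,…,2n−1}. -/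
open Finset

variable {V : Type*}

namespace MobAux


variable {n : ℕ}

lemma castInj (hn : 2 ≤ n) {a b : ℕ} (ha : a < 2*n) (hb : b < 2*n)
    (h : (a : ZMod (2*n)) = b) : a = b := by
  haveI : NeZero (2*n) := ⟨by omega⟩
  rw [← ZMod.val_cast_of_lt ha, ← ZMod.val_cast_of_lt hb, h]

lemma neg_one_eq (hn : 2 ≤ n) : (-1 : ZMod (2*n)) = ((2*n-1 : ℕ) : ZMod (2*n)) := by
  have h : (((2*n-1) + 1 : ℕ) : ZMod (2*n)) = 0 := by
    rw [show (2*n-1)+1 = 2*n by omega, ZMod.natCast_self]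
  push_cast at h
  linear_combination -h

lemma n_add_n (hn : 2 ≤ n) : (n : ZMod (2*n)) + n = 0 := by
  have : ((n : ℕ) : ZMod (2*n)) + ((n:ℕ) : ZMod (2*n)) = ((2*n : ℕ) : ZMod (2*n)) := by
    rw [← Nat.cast_add]; congr 1; omega
  rw [ZMod.natCast_self] at this
  exact this

lemma one_ne_zero' (hn : 2 ≤ n) : (1 : ZMod (2*n)) ≠ 0 := by
  intro h
  have := castInj hn (by omega) (by omega) (a := 1) (b := 0) (by push_cast; exact h)
  omega

lemma n_ne_zero' (hn : 2 ≤ n) : (n : ZMod (2*n)) ≠ 0 := by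
  intro h
  have := castInj hn (by omega) (by omega) (a := n) (b := 0) (by push_cast; exact h)
  omega

lemma one_ne_neg_one (hn : 2 ≤ n) : (1 : ZMod (2*n)) ≠ -1 := by
  rw [neg_one_eq hn]
  intro h
  have := castInj hn (by omega) (by omega) (a := 1) (b := 2*n-1) (by push_cast; exact h)
  omega

lemma one_ne_n (hn : 2 ≤ n) : (1 : ZMod (2*n)) ≠ (n : ZMod (2*n)) := by
  intro h
  have := castInj hn (by omega) (by omega) (a := 1) (b := n) (by push_cast; exact h)
  omega

lemma neg_one_ne_n (hn : 2 ≤ n) : (-1 : ZMod (2*n)) ≠ (n : ZMod (2*n)) := by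
  rw [neg_one_eq hn]
  intro h
  have := castInj hn (by omega) (by omega) (a := 2*n-1) (b := n) (by push_cast; exact h)
  omega

lemma mob_adj (hn : 2 ≤ n) (p q : ZMod (2*n)) :
    (mobiusLadder n).Adj p q ↔ (q = p + 1 ∨ q = p - 1 ∨ q = p + n) := by
  rw [mobiusLadder, SimpleGraph.fromRel_adj]
  constructor
  · rintro ⟨hne, (h | h) | (h | h)⟩
    · exact Or.inl h
    · exact Or.inr (Or.inr h)
    · refine Or.inr (Or.inl ?_)
      rw [h]; ring
    · refine Or.inr (Or.inr ?_)
      rw [h]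
      rw [add_assoc, n_add_n hn, add_zero]
  · rintro (h | h | h)
    · subst h
      refine ⟨?_, Or.inl (Or.inl rfl)⟩
      intro hpq
      exact one_ne_zero' hn (by linear_combination -hpq)
    · refine ⟨?_, Or.inr (Or.inl ?_)⟩
      · intro hpq
        rw [← hpq] at h
        exact one_ne_zero' hn (by linear_combination h)
      · rw [h]; ring
    · subst h
      refine ⟨?_, Or.inl (Or.inr rfl)⟩
      intro hpq
      exact n_ne_zero' hn (by linear_combination -hpq)

open Classical in
lemma deg_sum [NeZero (2*n)] (hn : 2 ≤ n) (k : ZMod (2*n)) :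
    (∑ j : ZMod (2*n), if (mobiusLadder n).Adj k j then (1:ℝ) else 0) = 3 := by
  have h12 : k + 1 ≠ k - 1 := fun h => one_ne_neg_one hn (by linear_combination h)
  have h13 : k + 1 ≠ k + n := fun h => one_ne_n hn (by linear_combination h)
  have h23 : k - 1 ≠ k + n := fun h => neg_one_ne_n hn (by linear_combination h)
  have step : (∑ j : ZMod (2*n), if (mobiusLadder n).Adj k j then (1:ℝ) else 0)
      = ∑ j : ZMod (2*n), if j ∈ ({k+1, k-1, k+n} : Finset (ZMod (2*n))) then (1:ℝ) else 0 := by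
    apply Finset.sum_congr rfl
    intro j _
    apply if_congr _ rfl rfl
    rw [mob_adj hn]
    simp [Finset.mem_insert]
  rw [step, Finset.sum_ite_mem, Finset.univ_inter, Finset.sum_const]
  rw [Finset.card_insert_of_notMem (by simp [h12, h13]),
      Finset.card_insert_of_notMem (by simp [h23]), Finset.card_singleton]
  norm_num

open Classical in
lemma lap_apply [NeZero (2*n)] (hn : 2 ≤ n) (k m : ZMod (2*n)) :
    lapMat (mobiusLadder n) k m =
      (if k = m then 3 else 0) + (if m = k + 1 then -1 else 0)
      + (if m = k - 1 then -1 else 0) + (if m = k + n then -1 else 0) := by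
  have h12 : k + 1 ≠ k - 1 := fun h => one_ne_neg_one hn (by linear_combination h)
  have h13 : k + 1 ≠ k + n := fun h => one_ne_n hn (by linear_combination h)
  have h23 : k - 1 ≠ k + n := fun h => neg_one_ne_n hn (by linear_combination h)
  have e1 : k + 1 ≠ k := fun h => one_ne_zero' hn (by linear_combination h)
  have e2 : k - 1 ≠ k := fun h => one_ne_zero' hn (by linear_combination -h)
  have e3 : k + n ≠ k := fun h => n_ne_zero' hn (by linear_combination h)
  unfold lapMat
  rw [deg_sum hn k]
  have hadj : (mobiusLadder n).Adj k m ↔ (m = k + 1 ∨ m = k - 1 ∨ m = k + n) := mob_adj hn k m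
  rw [show (if (mobiusLadder n).Adj k m then (1:ℝ) else 0)
      = (if (m = k + 1 ∨ m = k - 1 ∨ m = k + n) then (1:ℝ) else 0) from if_congr hadj rfl rfl]
  split_ifs with h1 h2 h3 h4 h5 <;> try norm_num
  all_goals first
    | exact h12 (by rw [← ‹m = k + 1›, ‹m = k - 1›])
    | exact h13 (by rw [← ‹m = k + 1›, ‹m = k + (n : ZMod (2*n))›])
    | exact h23 (by rw [← ‹m = k - 1›, ‹m = k + (n : ZMod (2*n))›])
    | exact e1 (by rw [← ‹m = k + 1›, ← ‹k = m›])
    | exact e2 (by rw [← ‹m = k - 1›, ← ‹k = m›])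
    | exact e3 (by rw [← ‹m = k + (n : ZMod (2*n))›, ← ‹k = m›])
    | tauto


noncomputable def om (n : ℕ) : ℂ := Complex.exp (Real.pi * Complex.I / n)

lemma om_pow_two_n (hn : 2 ≤ n) : om n ^ (2*n) = 1 := by
  rw [om, ← Complex.exp_nat_mul]
  rw [show ((2*n : ℕ) : ℂ) * (Real.pi * Complex.I / n) = 2 * Real.pi * Complex.I by
    have hn0 : (n : ℂ) ≠ 0 := Nat.cast_ne_zero.mpr (by omega)
    field_simp
    ring
    norm_num]
  exact Complex.exp_two_pi_mul_I

lemma om_pow_mod (hn : 2 ≤ n) (a : ℕ) : om n ^ a = om n ^ (a % (2*n)) := by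
  conv_lhs => rw [← Nat.div_add_mod a (2*n)]
  rw [pow_add, pow_mul, om_pow_two_n hn, one_pow, one_mul]

lemma om_pow_congr (hn : 2 ≤ n) {a b : ℕ} (h : a ≡ b [MOD 2*n]) : om n ^ a = om n ^ b := by
  rw [om_pow_mod hn a, om_pow_mod hn b, h]

lemma om_pow_n (hn : 2 ≤ n) : om n ^ n = -1 := by
  rw [om, ← Complex.exp_nat_mul]
  rw [show ((n : ℕ) : ℂ) * (Real.pi * Complex.I / n) = Real.pi * Complex.I by
    have hn0 : (n : ℂ) ≠ 0 := Nat.cast_ne_zero.mpr (by omega)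
    field_simp]
  exact Complex.exp_pi_mul_I

lemma om_ne_zero (hn : 2 ≤ n) : om n ≠ 0 := Complex.exp_ne_zero _

lemma om_pow_eq_exp (hn : 2 ≤ n) (j : ℕ) :
    om n ^ j = Complex.exp ((Real.pi * j / n : ℝ) * Complex.I) := by
  rw [om, ← Complex.exp_nat_mul]
  congr 1
  have hn0 : (n : ℂ) ≠ 0 := Nat.cast_ne_zero.mpr (by omega)
  push_cast
  field_simp

lemma om_pow_ne_one (hn : 2 ≤ n) {d : ℕ} (hd : 0 < d) (hd2 : d < 2*n) : om n ^ d ≠ 1 := by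
  rw [om_pow_eq_exp hn d]
  intro h
  rw [Complex.exp_eq_one_iff] at h
  obtain ⟨k, hk⟩ := h
  have hπ : (Real.pi : ℂ) ≠ 0 := Complex.ofReal_ne_zero.mpr Real.pi_ne_zero
  have hI : Complex.I ≠ 0 := Complex.I_ne_zero
  have hn0 : (n : ℂ) ≠ 0 := Nat.cast_ne_zero.mpr (by omega)
  have hd' : (d : ℂ) = 2 * k * n := by
    have h2 : ((Real.pi * d / n : ℝ) : ℂ) * Complex.I = (k : ℂ) * (2 * Real.pi * Complex.I) := hk
    push_cast at h2
    field_simp at h2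
    -- h2 should now be an equation implying d = 2 k n
    have := mul_right_cancel₀ hI (by linear_combination (↑Real.pi * Complex.I) * h2 : (d : ℂ) * Real.pi * Complex.I
      = (2 * k * n) * Real.pi * Complex.I)
    exact mul_right_cancel₀ hπ this
  have hdz : (d : ℤ) = 2 * k * n := by exact_mod_cast hd'
  have h1 : 0 < (d:ℤ) := by exact_mod_cast hd
  have h2 : (d:ℤ) < 2 * n := by exact_mod_cast hd2
  have hn1 : (1:ℤ) ≤ n := by exact_mod_cast Nat.one_le_of_lt hn
  rcases le_or_gt k 0 with hk0 | hk0
  · have hkn : k * (n:ℤ) ≤ 0 := mul_nonpos_of_nonpos_of_nonneg hk0 (by linarith)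
    linarith [hdz]
  · have hk1 : (1:ℤ) ≤ k := hk0
    have : 2*(n:ℤ) ≤ 2*k*n := by nlinarith
    linarith [hdz]

lemma om_pow_inj (hn : 2 ≤ n) {a b : ℕ} (ha : a < 2*n) (hb : b < 2*n)
    (h : om n ^ a = om n ^ b) : a = b := by
  rcases lt_trichotomy a b with hab | hab | hab
  · exfalso
    apply om_pow_ne_one hn (d := b - a) (by omega) (by omega)
    have : om n ^ a * om n ^ (b - a) = om n ^ a * 1 := by
      rw [← pow_add, mul_one, show a + (b - a) = b by omega, h]
    exact mul_left_cancel₀ (pow_ne_zero _ (om_ne_zero hn)) this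
  · exact hab
  · exfalso
    apply om_pow_ne_one hn (d := a - b) (by omega) (by omega)
    have : om n ^ b * om n ^ (a - b) = om n ^ b * 1 := by
      rw [← pow_add, mul_one, show b + (a - b) = a by omega, h.symm]
    exact mul_left_cancel₀ (pow_ne_zero _ (om_ne_zero hn)) this

lemma om_two_cos (hn : 2 ≤ n) (j : ℕ) :
    om n ^ j + om n ^ ((2*n-1) * j) = 2 * ((Real.cos (Real.pi * j / n) : ℝ) : ℂ) := by
  have hinv : om n ^ ((2*n-1) * j) = (om n ^ j)⁻¹ := by
    have hmul : om n ^ ((2*n-1) * j) * om n ^ j = 1 := by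
      rw [← pow_add]
      have h' : (2*n-1) * j + j = (2*n) * j := by
        rw [Nat.sub_mul, one_mul]
        have : j ≤ 2*n*j := Nat.le_mul_of_pos_left j (by omega)
        omega
      rw [h', pow_mul, om_pow_two_n hn, one_pow]
    exact eq_inv_of_mul_eq_one_left hmul
  rw [hinv, om_pow_eq_exp hn j, ← Complex.exp_neg]
  rw [Complex.exp_mul_I]
  rw [show -(((Real.pi * j / n : ℝ) : ℂ) * Complex.I) = ((-(Real.pi * j / n) : ℝ) : ℂ) * Complex.I by push_cast; ring]
  rw [Complex.exp_mul_I, Complex.ofReal_neg, Complex.cos_neg, Complex.sin_neg,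
    Complex.ofReal_cos]
  ring


variable [NeZero (2*n)]

noncomputable def Fm (n : ℕ) [NeZero (2*n)] : Matrix (ZMod (2*n)) (ZMod (2*n)) ℂ :=
  fun k j => om n ^ (k.val * j.val)

noncomputable def mu (n : ℕ) [NeZero (2*n)] (j : ZMod (2*n)) : ℂ :=
  3 - om n ^ j.val - om n ^ ((2*n-1) * j.val) - om n ^ (n * j.val)

lemma mu_real (hn : 2 ≤ n) (j : ZMod (2*n)) :
    mu n j = ((3 + (-1:ℝ)^(j.val+1) - 2 * Real.cos (Real.pi * j.val / n) : ℝ) : ℂ) := by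
  have h2c := om_two_cos hn j.val
  have hpn : om n ^ (n * j.val) = (-1:ℂ)^(j.val) := by
    rw [pow_mul, om_pow_n hn]
  rw [mu]
  push_cast [pow_succ] at h2c ⊢
  linear_combination (-1 : ℂ) * h2c - hpn

lemma F_shift (hn : 2 ≤ n) (c k j : ZMod (2*n)) :
    Fm n (k + c) j = om n ^ (c.val * j.val) * Fm n k j := by
  show om n ^ ((k + c).val * j.val) = om n ^ (c.val * j.val) * om n ^ (k.val * j.val)
  rw [← pow_add]
  apply om_pow_congr hn
  calc (k + c).val * j.val = ((k.val + c.val) % (2*n)) * j.val := by rw [ZMod.val_add]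
    _ ≡ (k.val + c.val) * j.val [MOD 2*n] := Nat.ModEq.mul_right _ (Nat.mod_modEq _ _)
    _ = c.val * j.val + k.val * j.val := by ring

lemma val_one' (hn : 2 ≤ n) : (1 : ZMod (2*n)).val = 1 := by
  haveI : Fact (1 < 2*n) := ⟨by omega⟩
  exact ZMod.val_one (2*n)

lemma val_neg_one (hn : 2 ≤ n) : (-1 : ZMod (2*n)).val = 2*n - 1 := by
  rw [neg_one_eq hn, ZMod.val_cast_of_lt (by omega)]

lemma val_n (hn : 2 ≤ n) : ((n : ZMod (2*n))).val = n := ZMod.val_cast_of_lt (by omega)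

lemma eigen (hn : 2 ≤ n) :
    (lapMat (mobiusLadder n)).map Complex.ofRealHom * Fm n
      = Fm n * Matrix.diagonal (mu n) := by
  ext k j
  rw [Matrix.mul_apply, Matrix.mul_diagonal]
  have hentry : ∀ m, (Complex.ofRealHom (lapMat (mobiusLadder n) k m))
      = (if k = m then (3:ℂ) else 0) + (if m = k+1 then -1 else 0)
        + (if m = k-1 then -1 else 0) + (if m = k + n then -1 else 0) := by
    intro m
    rw [lap_apply hn]
    split_ifs <;> norm_num
  have hsum : ∑ m, (lapMat (mobiusLadder n)).map Complex.ofRealHom k m * Fm n m j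
      = ∑ m, ((if k = m then (3:ℂ) * Fm n m j else 0) + (if m = k+1 then -Fm n m j else 0)
        + (if m = k-1 then -Fm n m j else 0) + (if m = k + n then -Fm n m j else 0)) := by
    apply Finset.sum_congr rfl
    intro m _
    rw [Matrix.map_apply, hentry m]
    rw [add_mul, add_mul, add_mul, ite_mul, ite_mul, ite_mul, ite_mul]
    norm_num
  rw [hsum]
  rw [Finset.sum_add_distrib, Finset.sum_add_distrib, Finset.sum_add_distrib]
  rw [Finset.sum_ite_eq (Finset.univ) k (fun m => (3:ℂ) * Fm n m j),
    Finset.sum_ite_eq' (Finset.univ) (k+1) (fun m => -Fm n m j),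
    Finset.sum_ite_eq' (Finset.univ) (k-1) (fun m => -Fm n m j),
    Finset.sum_ite_eq' (Finset.univ) (k + (n : ZMod (2*n))) (fun m => -Fm n m j)]
  simp only [Finset.mem_univ, if_true]
  rw [show k - 1 = k + (-1) from sub_eq_add_neg k 1]
  rw [F_shift hn 1 k j, F_shift hn (-1) k j, F_shift hn (n : ZMod (2*n)) k j]
  rw [val_one' hn, val_neg_one hn, val_n hn, mu]
  ring

lemma det_Fm_ne (hn : 2 ≤ n) : (Fm n).det ≠ 0 := by
  let e : Fin (2*n) ≃ ZMod (2*n) :=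
    { toFun := fun i => ((i : ℕ) : ZMod (2*n))
      invFun := fun x => ⟨x.val, x.val_lt⟩
      left_inv := fun i => Fin.ext (ZMod.val_cast_of_lt i.isLt)
      right_inv := fun x => ZMod.natCast_rightInverse x }
  rw [← Matrix.det_submatrix_equiv_self e (Fm n)]
  have hv : (Fm n).submatrix e e = Matrix.vandermonde (fun i : Fin (2*n) => om n ^ (i : ℕ)) := by
    ext i j
    show om n ^ ((e i).val * (e j).val) = (om n ^ (i:ℕ)) ^ (j:ℕ)
    show om n ^ ((((i:ℕ) : ZMod (2*n))).val * (((j:ℕ) : ZMod (2*n))).val) = _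
    rw [ZMod.val_cast_of_lt i.isLt, ZMod.val_cast_of_lt j.isLt, pow_mul]
  rw [hv, Matrix.det_vandermonde]
  apply Finset.prod_ne_zero_iff.mpr
  intro i _
  apply Finset.prod_ne_zero_iff.mpr
  intro j hj
  have hij : i < j := Finset.mem_Ioi.mp hj
  intro h
  have heq : om n ^ (j : ℕ) = om n ^ (i : ℕ) := sub_eq_zero.mp h
  have := om_pow_inj hn j.isLt i.isLt heq
  omega

lemma charpoly_eq (hn : 2 ≤ n) :
    ((lapMat (mobiusLadder n)).map Complex.ofRealHom).charpoly
      = ∏ j : ZMod (2*n), (Polynomial.X - Polynomial.C (mu n j)) := by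
  have hsim : Matrix.charmatrix ((lapMat (mobiusLadder n)).map Complex.ofRealHom)
        * (Fm n).map (Polynomial.C : ℂ →+* Polynomial ℂ)
      = (Fm n).map (Polynomial.C : ℂ →+* Polynomial ℂ)
        * Matrix.charmatrix (Matrix.diagonal (mu n)) := by
    rw [Matrix.charmatrix, Matrix.charmatrix, sub_mul, mul_sub]
    congr 1
    · exact (Matrix.scalar_commute Polynomial.X (fun r => Polynomial.commute_X r) _).eq
    · show (Polynomial.C : ℂ →+* Polynomial ℂ).mapMatrix ((lapMat (mobiusLadder n)).map Complex.ofRealHom)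
          * (Fm n).map (Polynomial.C : ℂ →+* Polynomial ℂ)
        = (Fm n).map (Polynomial.C : ℂ →+* Polynomial ℂ)
          * (Polynomial.C : ℂ →+* Polynomial ℂ).mapMatrix (Matrix.diagonal (mu n))
      rw [RingHom.mapMatrix_apply, RingHom.mapMatrix_apply, ← Matrix.map_mul, ← Matrix.map_mul,
        eigen hn]
  have hdet := congrArg Matrix.det hsim
  rw [Matrix.det_mul, Matrix.det_mul] at hdet
  have hCF : ((Fm n).map (Polynomial.C : ℂ →+* Polynomial ℂ)).det = Polynomial.C ((Fm n).det) := by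
    rw [← RingHom.mapMatrix_apply, ← RingHom.map_det]
  have hCne : (Polynomial.C ((Fm n).det) : Polynomial ℂ) ≠ 0 := by
    simpa using det_Fm_ne hn
  have h1 : ((lapMat (mobiusLadder n)).map Complex.ofRealHom).charpoly
      = (Matrix.diagonal (mu n)).charpoly := by
    apply mul_right_cancel₀ hCne
    calc ((lapMat (mobiusLadder n)).map Complex.ofRealHom).charpoly * Polynomial.C ((Fm n).det)
        = (Matrix.charmatrix _).det * ((Fm n).map (Polynomial.C : ℂ →+* Polynomial ℂ)).det := by
          rw [hCF]; rfl
      _ = ((Fm n).map (Polynomial.C : ℂ →+* Polynomial ℂ)).det * (Matrix.charmatrix (Matrix.diagonal (mu n))).det := hdet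
      _ = (Matrix.diagonal (mu n)).charpoly * Polynomial.C ((Fm n).det) := by
          rw [hCF]; rw [mul_comm]; rfl
  rw [h1]
  rw [Matrix.charpoly]
  have hd : Matrix.charmatrix (Matrix.diagonal (mu n))
      = Matrix.diagonal (fun j => Polynomial.X - Polynomial.C (mu n j)) := by
    ext i j
    by_cases h : i = j
    · subst h
      rw [Matrix.charmatrix_apply_eq, Matrix.diagonal_apply_eq, Matrix.diagonal_apply_eq]
    · rw [Matrix.charmatrix_apply_ne _ _ _ h, Matrix.diagonal_apply_ne _ h,
        Matrix.diagonal_apply_ne _ h, map_zero, neg_zero]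
  rw [hd, Matrix.det_diagonal]

end MobAux

/-- For `n ≥ 2`, the multiset of eigenvalues (roots of the
characteristic polynomial) of the Laplacian matrix of the Möbius ladder `M n` is
`{3 + (−1)^(j+1) − 2cos(πj/n) : j = 0,…,2n−1}`. -/
theorem mobius_laplacian_spectrum (n : ℕ) [NeZero n] (hn : 2 ≤ n) :
    (lapMat (mobiusLadder n)).charpoly.roots =
      (Multiset.range (2 * n)).map
        (fun j : ℕ => 3 + (-1 : ℝ) ^ (j + 1) - 2 * Real.cos (Real.pi * j / n)) := by
  haveI : NeZero (2*n) := ⟨by omega⟩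
  have hchar : (lapMat (mobiusLadder n)).charpoly
      = ∏ j ∈ Finset.range (2*n),
          (Polynomial.X - Polynomial.C (3 + (-1:ℝ)^(j+1) - 2*Real.cos (Real.pi * j / n))) := by
    apply Polynomial.map_injective (Complex.ofRealHom) Complex.ofReal_injective
    rw [← Matrix.charpoly_map, MobAux.charpoly_eq hn, Polynomial.map_prod]
    have hright : ∀ j ∈ Finset.range (2*n),
        ((Polynomial.X - Polynomial.C (3 + (-1:ℝ)^(j+1)
            - 2*Real.cos (Real.pi * j / n))).map Complex.ofRealHom)
          = Polynomial.X - Polynomial.C (((3 + (-1:ℝ)^(j+1)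
            - 2*Real.cos (Real.pi * j / n) : ℝ)) : ℂ) := by
      intro j _
      rw [Polynomial.map_sub, Polynomial.map_X, Polynomial.map_C]
      rfl
    rw [Finset.prod_congr rfl hright]
    apply Finset.prod_nbij' (fun (j : ZMod (2*n)) => j.val) (fun (a : ℕ) => (a : ZMod (2*n)))
    · intro a _
      exact Finset.mem_range.mpr a.val_lt
    · intro a _
      exact Finset.mem_univ _
    · intro a _
      exact ZMod.natCast_rightInverse a
    · intro a ha
      exact ZMod.val_cast_of_lt (Finset.mem_range.mp ha)
    · intro j _
      rw [MobAux.mu_real hn j]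
  rw [hchar]
  have hs : ∏ j ∈ Finset.range (2*n),
        (Polynomial.X - Polynomial.C (3 + (-1:ℝ)^(j+1) - 2*Real.cos (Real.pi * j / n)))
      = (((Multiset.range (2*n)).map
          (fun j : ℕ => 3 + (-1 : ℝ) ^ (j + 1) - 2 * Real.cos (Real.pi * j / n))).map
          (fun a => Polynomial.X - Polynomial.C a)).prod := by
    rw [Multiset.map_map, Finset.prod_eq_multiset_prod, Finset.range_val]
    rfl
  rw [hs]
  exact Polynomial.roots_multiset_prod_X_sub_C _
end

section
/- There is no family of non-negatively curved 3-regular expanders in the Ollivier-Ricci sense: if (G_i)_{i∈ℕ} is a sequence of finite simple 3-regular graphs with |V(G_i)| → ∞ such that every edge xy of every G_i satisfies κ₀(x,y) ≥ 0, then there is no ε > 0 with λ₁(G_i) ≥ ε for all i; equivalently, lim inf_i λ₁(G_i) = 0. -/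
open Finset

variable {V : Type*}

set_option linter.unusedSectionVars false

open Finset SimpleGraph

namespace NOE

open Classical in
noncomputable instance (priority := 1000) {V : Type*} (G : SimpleGraph V) : DecidableRel G.Adj :=
  fun _ _ => Classical.dec _

variable {V : Type*} [Fintype V] [DecidableEq V]

/-- every edge lies in a triangle or a square -/
def TS (G : SimpleGraph V) : Prop :=
  ∀ ⦃x y : V⦄, G.Adj x y →
    (∃ w, G.Adj x w ∧ G.Adj y w) ∨
    (∃ u v, G.Adj x u ∧ G.Adj y v ∧ G.Adj u v ∧ u ≠ y ∧ v ≠ x)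

variable (G : SimpleGraph V)

noncomputable def lev (x0 z : V) : ℕ := G.dist x0 z

noncomputable def sph (x0 : V) (ℓ : ℕ) : Finset V := univ.filter (fun z => lev G x0 z = ℓ)

noncomputable def nIn (x0 t : V) : ℕ :=
  (univ.filter (fun s => G.Adj s t ∧ lev G x0 s + 1 = lev G x0 t)).card

noncomputable def nHor (x0 t : V) : ℕ :=
  (univ.filter (fun s => G.Adj s t ∧ lev G x0 s = lev G x0 t)).card

noncomputable def nOut (x0 t : V) : ℕ :=
  (univ.filter (fun s => G.Adj s t ∧ lev G x0 s = lev G x0 t + 1)).card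

def isA (x0 t : V) : Prop := 1 ≤ lev G x0 t ∧ nIn G x0 t = 1 ∧ nHor G x0 t = 0

section Basic

variable {G}

lemma lev_adj (hconn : G.Connected) {x0 a b : V} (hab : G.Adj a b) :
    lev G x0 b ≤ lev G x0 a + 1 := by
  have h0 := hconn.dist_triangle (u := x0) (v := a) (w := b)
  have h1 : G.dist a b ≤ 1 := by
    simpa using SimpleGraph.dist_le (SimpleGraph.Walk.cons hab SimpleGraph.Walk.nil)
  unfold lev; omega

lemma lev_trichot (hconn : G.Connected) {x0 a b : V} (hab : G.Adj a b) :
    lev G x0 a + 1 = lev G x0 b ∨ lev G x0 a = lev G x0 b ∨ lev G x0 b + 1 = lev G x0 a := by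
  have h1 := lev_adj hconn (x0 := x0) hab
  have h2 := lev_adj hconn (x0 := x0) hab.symm
  omega

lemma lev_eq_zero (hconn : G.Connected) {x0 z : V} (h : lev G x0 z = 0) : z = x0 :=
  ((hconn.dist_eq_zero_iff (u := x0) (v := z)).mp h).symm

lemma lev_x0 (x0 : V) : lev G x0 x0 = 0 := by simp [lev]

lemma exists_parent (hconn : G.Connected) {x0 t : V} (h : 1 ≤ lev G x0 t) :
    ∃ s, G.Adj s t ∧ lev G x0 s + 1 = lev G x0 t := by
  obtain ⟨w, hw⟩ := hconn.exists_walk_length_eq_dist t x0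
  cases w with
  | nil => exact absurd h (by simp [lev, SimpleGraph.dist_self])
  | cons hadj p =>
      rename_i s
      refine ⟨s, hadj.symm, ?_⟩
      have hle : G.dist s x0 ≤ p.length := SimpleGraph.dist_le p
      have hlen : p.length + 1 = G.dist t x0 := by simpa using hw
      have h2 := lev_adj hconn (x0 := x0) hadj.symm
      have hc1 : G.dist x0 t = G.dist t x0 := SimpleGraph.dist_comm
      have hc2 : G.dist x0 s = G.dist s x0 := SimpleGraph.dist_comm
      unfold lev at h2 ⊢
      omega

lemma one_le_nIn (hconn : G.Connected) {x0 t : V} (h : 1 ≤ lev G x0 t) :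
    1 ≤ nIn G x0 t := by
  obtain ⟨s, hs1, hs2⟩ := exists_parent hconn h
  rw [nIn]
  exact Finset.card_pos.mpr ⟨s, by simp [hs1, hs2]⟩

lemma in_hor_out (hconn : G.Connected) (hcub : ∀ v, G.degree v = 3) (x0 t : V) :
    nIn G x0 t + nHor G x0 t + nOut G x0 t = 3 := by
  classical
  rw [nIn, nHor, nOut]
  rw [← Finset.card_union_of_disjoint, ← Finset.card_union_of_disjoint]
  · have : ((univ.filter (fun s => G.Adj s t ∧ lev G x0 s + 1 = lev G x0 t)) ∪
        (univ.filter (fun s => G.Adj s t ∧ lev G x0 s = lev G x0 t))) ∪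
        (univ.filter (fun s => G.Adj s t ∧ lev G x0 s = lev G x0 t + 1)) =
        G.neighborFinset t := by
      ext s
      simp only [Finset.mem_union, Finset.mem_filter, Finset.mem_univ, true_and,
        SimpleGraph.mem_neighborFinset]
      constructor
      · rintro ((⟨h1, _⟩ | ⟨h1, _⟩) | ⟨h1, _⟩) <;> exact h1.symm
      · intro h1
        have := lev_trichot hconn (x0 := x0) h1
        rcases this with h2 | h2 | h2
        · exact Or.inr ⟨h1.symm, by omega⟩
        · exact Or.inl (Or.inr ⟨h1.symm, by omega⟩)
        · exact Or.inl (Or.inl ⟨h1.symm, by omega⟩)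
    rw [this, SimpleGraph.card_neighborFinset_eq_degree, hcub t]
  · rw [Finset.disjoint_left]
    intro s hs1 hs2
    simp only [Finset.mem_union, Finset.mem_filter] at hs1 hs2
    rcases hs1 with ⟨_, _, h1⟩ | ⟨_, _, h1⟩ <;> omega
  · rw [Finset.disjoint_left]
    intro s hs1 hs2
    simp only [Finset.mem_filter] at hs1 hs2
    omega

end Basic

end NOE

set_option linter.unusedSectionVars false

open Finset SimpleGraph

namespace NOE

variable {V : Type*} [Fintype V] [DecidableEq V] (G : SimpleGraph V)

/-- good shared child property -/
def Q (x0 z v : V) : Prop :=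
  G.Adj z v ∧ lev G x0 v = lev G x0 z + 1 ∧
  ∃ u, u ≠ z ∧ lev G x0 u = lev G x0 z ∧ G.Adj u v ∧
    ∃ x, G.Adj x z ∧ lev G x0 x + 1 = lev G x0 z ∧ G.Adj x u

open Classical in
noncomputable def vch (x0 z : V) : V :=
  if h : ∃ v, Q G x0 z v then h.choose else z

open Classical in
noncomputable def sch (x0 s : V) : V :=
  if h : ∃ c, G.Adj c s ∧ lev G x0 c = lev G x0 s + 1 then h.choose else s

open Classical in
noncomputable def Rch (x0 t : V) : ℕ :=
  (univ.filter (fun z => isA G x0 z ∧ vch G x0 z = t)).card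

open Classical in
noncomputable def Dlev (x0 : V) : ℕ → Finset V
  | 0 => ∅
  | (ℓ+1) => univ.filter (fun t => lev G x0 t = ℓ + 1 ∧ ¬ isA G x0 t ∧ 1 ≤ nOut G x0 t ∧
      Rch G x0 t + ((Dlev x0 ℓ).filter (fun s => sch G x0 s = t)).card + 2
        = 2 * nIn G x0 t + nHor G x0 t)

open Classical in
noncomputable def fwd (x0 t : V) : ℕ :=
  ((Dlev G x0 (lev G x0 t - 1)).filter (fun s => sch G x0 s = t)).card

section Struct

variable {G}
variable (x0 : V)

/-- members of the `nIn`-filter when `nIn = 1` are the unique parent -/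
lemma parent_eq {t a b : V} (h1 : nIn G x0 t = 1) (ha : G.Adj a t)
    (ha2 : lev G x0 a + 1 = lev G x0 t) (hb : G.Adj b t) (hb2 : lev G x0 b + 1 = lev G x0 t) :
    a = b := by
  have := Finset.card_le_one.mp (le_of_eq h1)
  exact this a (by simp [ha, ha2]) b (by simp [hb, hb2])

lemma two_le_nIn {t a b : V} (hne : a ≠ b) (ha : G.Adj a t)
    (ha2 : lev G x0 a + 1 = lev G x0 t) (hb : G.Adj b t) (hb2 : lev G x0 b + 1 = lev G x0 t) :
    2 ≤ nIn G x0 t := by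
  rw [nIn]
  have : ({a, b} : Finset V) ⊆ univ.filter (fun s => G.Adj s t ∧ lev G x0 s + 1 = lev G x0 t) := by
    intro c hc
    simp only [Finset.mem_insert, Finset.mem_singleton] at hc
    rcases hc with rfl | rfl <;> simp [ha, ha2, hb, hb2]
  calc 2 = ({a, b} : Finset V).card := by rw [Finset.card_insert_of_notMem (by simpa), Finset.card_singleton]
  _ ≤ _ := Finset.card_le_card this

lemma one_le_nHor {t a : V} (ha : G.Adj a t) (ha2 : lev G x0 a = lev G x0 t) :
    1 ≤ nHor G x0 t :=
  Finset.card_pos.mpr ⟨a, by simp [nHor, ha, ha2]⟩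

lemma nHor_zero_no {t a : V} (h : nHor G x0 t = 0) (ha : G.Adj a t) :
    lev G x0 a ≠ lev G x0 t := fun he =>
  absurd h (by have := one_le_nHor x0 ha he; omega)

lemma one_le_nOut {t a : V} (ha : G.Adj a t) (ha2 : lev G x0 a = lev G x0 t + 1) :
    1 ≤ nOut G x0 t :=
  Finset.card_pos.mpr ⟨a, by simp [nOut, ha, ha2]⟩

/-- KLL : an α-vertex has a good shared child -/
lemma KLL (hconn : G.Connected) (hTS : TS G) {z : V} (hz : isA G x0 z) : ∃ v, Q G x0 z v := by
  obtain ⟨hl, hin, hhor⟩ := hz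
  obtain ⟨x, hx, hx2⟩ := exists_parent hconn hl
  rcases hTS hx with ⟨w, hxw, hzw⟩ | ⟨u, v, hxu, hzv, huv, hune, hvne⟩
  · exfalso
    have h1 : lev G x0 w ≤ lev G x0 x + 1 := lev_adj hconn hxw
    rcases lev_trichot hconn (x0 := x0) hzw with h2 | h2 | h2
    · omega
    · exact nHor_zero_no x0 hhor hzw.symm h2.symm
    · -- w is a parent of z, so w = x, contradicting Adj x w
      have : x = w := parent_eq x0 hin hx hx2 hzw.symm h2
      exact G.irrefl (this ▸ hxw)
  · refine ⟨v, hzv, ?_, u, ?_, ?_, huv, x, hx, hx2, hxu⟩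
    · -- lev v = lev z + 1
      rcases lev_trichot hconn (x0 := x0) hzv with h2 | h2 | h2
      · omega
      · exact absurd h2.symm (nHor_zero_no x0 hhor hzv.symm)
      · exfalso; exact hvne (parent_eq x0 hin hzv.symm h2 hx hx2)
    · exact hune
    · -- lev u = lev z
      have h1 : lev G x0 u ≤ lev G x0 x + 1 := lev_adj hconn hxu
      have h2 : lev G x0 v ≤ lev G x0 u + 1 := lev_adj hconn huv
      have h3 : lev G x0 v = lev G x0 z + 1 := by
        rcases lev_trichot hconn (x0 := x0) hzv with h2 | h2 | h2
        · omega
        · exact absurd h2.symm (nHor_zero_no x0 hhor hzv.symm)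
        · exact absurd (parent_eq x0 hin hzv.symm h2 hx hx2) hvne
      omega

lemma vch_spec (hconn : G.Connected) (hTS : TS G) {z : V} (hz : isA G x0 z) : Q G x0 z (vch G x0 z) := by
  rw [vch, dif_pos (KLL x0 hconn hTS hz)]
  exact (KLL x0 hconn hTS hz).choose_spec

lemma sch_spec {s : V} (hs : 1 ≤ nOut G x0 s) :
    G.Adj (sch G x0 s) s ∧ lev G x0 (sch G x0 s) = lev G x0 s + 1 := by
  have hex : ∃ c, G.Adj c s ∧ lev G x0 c = lev G x0 s + 1 := by
    obtain ⟨c, hc⟩ := Finset.card_pos.mp hs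
    simp only [nOut, Finset.mem_filter, Finset.mem_univ, true_and] at hc
    exact ⟨c, hc⟩
  rw [sch, dif_pos hex]
  exact hex.choose_spec

end Struct

end NOE

set_option linter.unusedSectionVars false
open Finset SimpleGraph
namespace NOE
variable {V : Type*} [Fintype V] [DecidableEq V] {G : SimpleGraph V}

section Struct2
variable (x0 : V)

lemma two_le_nOut {t a b : V} (hne : a ≠ b) (ha : G.Adj a t)
    (ha2 : lev G x0 a = lev G x0 t + 1) (hb : G.Adj b t) (hb2 : lev G x0 b = lev G x0 t + 1) :
    2 ≤ nOut G x0 t := by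
  rw [nOut]
  have hsub : ({a, b} : Finset V) ⊆
      univ.filter (fun s => G.Adj s t ∧ lev G x0 s = lev G x0 t + 1) := by
    intro c hc
    simp only [Finset.mem_insert, Finset.mem_singleton] at hc
    rcases hc with rfl | rfl <;> simp [ha, ha2, hb, hb2]
  calc 2 = ({a, b} : Finset V).card := by
        rw [Finset.card_insert_of_notMem (by simpa), Finset.card_singleton]
  _ ≤ _ := Finset.card_le_card hsub

lemma Dlev_mem {ℓ : ℕ} {t : V} (h : t ∈ Dlev G x0 ℓ) :
    lev G x0 t = ℓ ∧ ¬ isA G x0 t ∧ 1 ≤ nOut G x0 t ∧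
      Rch G x0 t + fwd G x0 t + 2 = 2 * nIn G x0 t + nHor G x0 t ∧ 1 ≤ ℓ := by
  classical
  cases ℓ with
  | zero => simp [Dlev] at h
  | succ ℓ =>
      rw [Dlev, Finset.mem_filter] at h
      obtain ⟨-, h1, h2, h3, h4⟩ := h
      refine ⟨h1, h2, h3, ?_, by omega⟩
      rw [fwd, h1]
      simpa using h4

lemma Dlev_mem_of {ℓ : ℕ} {t : V} (hlev : lev G x0 t = ℓ + 1) (h2 : ¬ isA G x0 t)
    (h3 : 1 ≤ nOut G x0 t)
    (h4 : Rch G x0 t + fwd G x0 t + 2 = 2 * nIn G x0 t + nHor G x0 t) :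
    t ∈ Dlev G x0 (ℓ + 1) := by
  classical
  rw [Dlev, Finset.mem_filter]
  refine ⟨Finset.mem_univ t, hlev, h2, h3, ?_⟩
  rw [fwd, hlev] at h4
  simpa using h4

lemma P_le_nIn (hconn : G.Connected) (hTS : TS G) (t : V) :
    Rch G x0 t + fwd G x0 t ≤ nIn G x0 t := by
  classical
  set Pa := univ.filter (fun z => isA G x0 z ∧ vch G x0 z = t) with hPa
  set Pb := (Dlev G x0 (lev G x0 t - 1)).filter (fun s => sch G x0 s = t) with hPb
  have hsub : Pa ∪ Pb ⊆ univ.filter (fun s => G.Adj s t ∧ lev G x0 s + 1 = lev G x0 t) := by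
    intro z hz
    rw [Finset.mem_union] at hz
    rcases hz with hz | hz
    · rw [hPa, Finset.mem_filter] at hz
      obtain ⟨-, hzA, hzv⟩ := hz
      obtain ⟨q1, q2, -⟩ := vch_spec x0 hconn hTS hzA
      rw [hzv] at q1 q2
      simp [q1, q2.symm]
    · rw [hPb, Finset.mem_filter] at hz
      obtain ⟨hzD, hzs⟩ := hz
      obtain ⟨-, -, hout, -, -⟩ := Dlev_mem x0 hzD
      obtain ⟨s1, s2⟩ := sch_spec x0 hout
      rw [hzs] at s1 s2
      simp [s1.symm, s2]
  have hdis : Disjoint Pa Pb := by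
    rw [Finset.disjoint_left]
    intro z hz hz'
    rw [hPa, Finset.mem_filter] at hz
    rw [hPb, Finset.mem_filter] at hz'
    exact (Dlev_mem x0 hz'.1).2.1 hz.2.1
  have := Finset.card_le_card hsub
  rw [Finset.card_union_of_disjoint hdis] at this
  have hb : Pb.card = fwd G x0 t := by rw [hPb, fwd]
  have ha : Pa.card = Rch G x0 t := by rw [hPa, Rch]
  rw [nIn]; omega

lemma Dlev_child (hconn : G.Connected) (hcub : ∀ v, G.degree v = 3) (hTS : TS G)
    {ℓ : ℕ} {s t : V} (hs : s ∈ Dlev G x0 ℓ) (hst : sch G x0 s = t) :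
    2 ≤ nIn G x0 t ∨ 1 ≤ nHor G x0 t := by
  obtain ⟨hlev, hnA, hout, heq, hl1⟩ := Dlev_mem x0 hs
  have hlevs : 1 ≤ lev G x0 s := by omega
  have hin1 : 1 ≤ nIn G x0 s := one_le_nIn hconn hlevs
  have hP := P_le_nIn x0 hconn hTS s
  have hsum := in_hor_out hconn hcub x0 s
  -- s has in+hor = 2, out = 1
  have hih : nIn G x0 s + nHor G x0 s = 2 := by
    rcases Nat.lt_or_ge (nIn G x0 s + nHor G x0 s) 2 with hlt | hge
    · exfalso
      exact hnA ⟨hlevs, by omega, by omega⟩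
    · omega
  have houts : nOut G x0 s = 1 := by omega
  obtain ⟨hadj_ts, hlevt0⟩ := sch_spec x0 hout
  rw [hst] at hadj_ts hlevt0
  have hchild : ∀ c, G.Adj c s → lev G x0 c = lev G x0 s + 1 → c = t := by
    intro c hc hc2
    have hcard := Finset.card_le_one.mp (le_of_eq houts)
    exact hcard c (by simp [nOut, hc, hc2]) t (by simp [nOut, hadj_ts, hlevt0])
  have hAdj : G.Adj s t := hadj_ts.symm
  rcases hTS hAdj with ⟨w, hsw, htw⟩ | ⟨u, v, hsu, htv, huv, hune, hvne⟩
  · -- triangle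
    rcases lev_trichot hconn (x0 := x0) hsw with h2 | h2 | h2
    · -- w is a child of s, so w = t, but Adj t w
      have : w = t := hchild w hsw.symm h2.symm
      exact absurd (this ▸ htw) (G.irrefl)
    · -- w is a second parent of t
      left
      exact two_le_nIn x0 (G.ne_of_adj hsw).symm htw.symm (by omega) hAdj (by omega)
    · exfalso
      have := lev_adj hconn (x0 := x0) htw.symm
      omega
  · -- square
    have hu : lev G x0 u ≤ lev G x0 s := by
      rcases lev_trichot hconn (x0 := x0) hsu with h2 | h2 | h2
      · exfalso; exact hune (hchild u hsu.symm h2.symm)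
      · omega
      · omega
    rcases lev_trichot hconn (x0 := x0) htv with h2 | h2 | h2
    · exfalso
      have := lev_adj hconn (x0 := x0) huv
      omega
    · right
      exact one_le_nHor x0 htv.symm h2.symm
    · left
      exact two_le_nIn x0 (Ne.symm hvne) hAdj (by omega) htv.symm (by omega)

lemma Rch_alpha (hconn : G.Connected) (hTS : TS G) {t : V} (ht : isA G x0 t) :
    Rch G x0 t = 0 := by
  classical
  rw [Rch, Finset.card_eq_zero, Finset.eq_empty_iff_forall_notMem]
  intro z hz
  rw [Finset.mem_filter] at hz
  obtain ⟨-, hzA, hzv⟩ := hz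
  obtain ⟨q1, q2, u, hu1, hu2, hu3, -⟩ := vch_spec x0 hconn hTS hzA
  rw [hzv] at q1 q2 hu3
  have h2 : 2 ≤ nIn G x0 t := two_le_nIn x0 (Ne.symm hu1) q1 (by omega) hu3 (by omega)
  have := ht.2.1; omega

lemma fwd_alpha (hconn : G.Connected) (hcub : ∀ v, G.degree v = 3) (hTS : TS G)
    {t : V} (ht : isA G x0 t) : fwd G x0 t = 0 := by
  classical
  rw [fwd, Finset.card_eq_zero, Finset.eq_empty_iff_forall_notMem]
  intro s hs
  rw [Finset.mem_filter] at hs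
  rcases Dlev_child x0 hconn hcub hTS hs.1 hs.2 with h | h
  · have := ht.2.1; omega
  · have := ht.2.2; omega

lemma no_sibling_alphas (hconn : G.Connected) (hcub : ∀ v, G.degree v = 3) (hTS : TS G)
    {x z z' : V} (hz : isA G x0 z) (hz' : isA G x0 z') (hne : z ≠ z')
    (hxz : G.Adj x z) (hlxz : lev G x0 x + 1 = lev G x0 z)
    (hxz' : G.Adj x z') (hlxz' : lev G x0 x + 1 = lev G x0 z')
    (hx1 : 1 ≤ lev G x0 x) : False := by
  have hin1 : 1 ≤ nIn G x0 x := one_le_nIn hconn hx1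
  have hout2 : 2 ≤ nOut G x0 x :=
    two_le_nOut x0 hne hxz.symm (by omega) hxz'.symm (by omega)
  have hsum := in_hor_out hconn hcub x0 x
  have hxA : isA G x0 x := ⟨hx1, by omega, by omega⟩
  obtain ⟨q1, q2, u, hu1, hu2, hu3, -⟩ := vch_spec x0 hconn hTS hxA
  have hvin : 2 ≤ nIn G x0 (vch G x0 x) :=
    two_le_nIn x0 hu1 hu3 (by omega) q1 (by omega)
  have hvz : vch G x0 x ≠ z := fun h => by rw [h] at hvin; have := hz.2.1; omega
  have hvz' : vch G x0 x ≠ z' := fun h => by rw [h] at hvin; have := hz'.2.1; omega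
  -- x has ≥ 3 children
  have hsub : ({z, z', vch G x0 x} : Finset V) ⊆
      univ.filter (fun s => G.Adj s x ∧ lev G x0 s = lev G x0 x + 1) := by
    intro c hc
    simp only [Finset.mem_insert, Finset.mem_singleton] at hc
    rcases hc with rfl | rfl | rfl
    · simp [hxz.symm, hlxz.symm]
    · simp [hxz'.symm, hlxz'.symm]
    · simp [q1.symm, q2]
  have h3 : 3 ≤ nOut G x0 x := by
    have hcard : ({z, z', vch G x0 x} : Finset V).card = 3 := by
      rw [Finset.card_insert_of_notMem (by simp [hne, hvz.symm, hvz'.symm]),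
        Finset.card_insert_of_notMem (by simp [hvz'.symm]), Finset.card_singleton]
    rw [nOut, ← hcard]
    exact Finset.card_le_card hsub
  omega

end Struct2
end NOE

set_option linter.unusedSectionVars false
set_option maxHeartbeats 1000000
open Finset SimpleGraph
namespace NOE
variable {V : Type*} [Fintype V] [DecidableEq V] {G : SimpleGraph V}

open Classical in
noncomputable def aA (G : SimpleGraph V) (x0 : V) (ℓ : ℕ) : ℕ :=
  (univ.filter (fun z => isA G x0 z ∧ lev G x0 z = ℓ)).card

noncomputable def eE (G : SimpleGraph V) (x0 : V) (ℓ : ℕ) : ℕ :=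
  ∑ t ∈ sph G x0 ℓ, nOut G x0 t

noncomputable def dD (G : SimpleGraph V) (x0 : V) (ℓ : ℕ) : ℕ := (Dlev G x0 ℓ).card

section Sums
variable (x0 : V)

lemma Rch_pos (hconn : G.Connected) (hTS : TS G) {t : V} (h : 1 ≤ Rch G x0 t) :
    2 ≤ nIn G x0 t := by
  classical
  obtain ⟨z, hz⟩ := Finset.card_pos.mp h
  rw [Finset.mem_filter] at hz
  obtain ⟨-, hzA, hzv⟩ := hz
  obtain ⟨q1, q2, u, hu1, hu2, hu3, -⟩ := vch_spec x0 hconn hTS hzA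
  rw [hzv] at q1 q2 hu3
  exact two_le_nIn x0 (Ne.symm hu1) q1 (by omega) hu3 (by omega)

open Classical in
lemma master (hconn : G.Connected) (hcub : ∀ v, G.degree v = 3) (hTS : TS G)
    {t : V} (h1 : 1 ≤ lev G x0 t) :
    nOut G x0 t + (Rch G x0 t + fwd G x0 t) ≤
      nIn G x0 t + ((if isA G x0 t then 1 else 0) +
        (if t ∈ Dlev G x0 (lev G x0 t) then 1 else 0)) := by
  classical
  have hsum := in_hor_out hconn hcub x0 t
  have hin1 : 1 ≤ nIn G x0 t := one_le_nIn hconn h1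
  have hP := P_le_nIn x0 hconn hTS t
  by_cases hA : isA G x0 t
  · rw [if_pos hA]
    have h2 := Rch_alpha x0 hconn hTS hA
    have h3 := fwd_alpha x0 hconn hcub hTS hA
    have h4 := hA.2.1
    have h5 := hA.2.2
    split_ifs <;> omega
  · rw [if_neg hA]
    have hAne : ¬ (nIn G x0 t = 1 ∧ nHor G x0 t = 0) := fun ⟨a, b⟩ => hA ⟨h1, a, b⟩
    by_cases hD : t ∈ Dlev G x0 (lev G x0 t)
    · rw [if_pos hD]
      obtain ⟨-, -, -, heq, -⟩ := Dlev_mem x0 hD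
      omega
    · rw [if_neg hD]
      by_cases heq : Rch G x0 t + fwd G x0 t + 2 = 2 * nIn G x0 t + nHor G x0 t
      · exfalso
        apply hD
        obtain ⟨ℓ', hℓ'⟩ : ∃ ℓ', lev G x0 t = ℓ' + 1 := ⟨lev G x0 t - 1, by omega⟩
        rw [hℓ']
        exact Dlev_mem_of x0 hℓ' hA (by omega) heq
      · omega

lemma sum_nIn_eq (hconn : G.Connected) (ℓ : ℕ) :
    ∑ t ∈ sph G x0 (ℓ + 1), nIn G x0 t = eE G x0 ℓ := by
  classical
  have key : ∀ t ∈ sph G x0 (ℓ+1), nIn G x0 t =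
      ∑ s : V, (if G.Adj s t ∧ lev G x0 s = ℓ ∧ lev G x0 t = ℓ + 1 then 1 else 0) := by
    intro t ht
    rw [sph, Finset.mem_filter] at ht
    rw [nIn, Finset.card_filter]
    apply Finset.sum_congr rfl
    intro s _
    congr 1
    simp only [eq_iff_iff]
    constructor
    · rintro ⟨h1, h2⟩; exact ⟨h1, by omega, ht.2⟩
    · rintro ⟨h1, h2, h3⟩; exact ⟨h1, by omega⟩
  have key2 : ∀ s ∈ sph G x0 ℓ, nOut G x0 s =
      ∑ t : V, (if G.Adj t s ∧ lev G x0 s = ℓ ∧ lev G x0 t = ℓ + 1 then 1 else 0) := by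
    intro s hs
    rw [sph, Finset.mem_filter] at hs
    rw [nOut, Finset.card_filter]
    apply Finset.sum_congr rfl
    intro t _
    congr 1
    simp only [eq_iff_iff]
    constructor
    · rintro ⟨h1, h2⟩; exact ⟨h1, hs.2, by omega⟩
    · rintro ⟨h1, h2, h3⟩; exact ⟨h1, by omega⟩
  rw [Finset.sum_congr rfl key, eE, Finset.sum_congr rfl key2]
  -- extend both to sums over univ
  rw [sph, Finset.sum_filter, sph, Finset.sum_filter]
  have lhs_eq : ∀ t : V, (if lev G x0 t = ℓ + 1 then
      ∑ s : V, (if G.Adj s t ∧ lev G x0 s = ℓ ∧ lev G x0 t = ℓ + 1 then 1 else 0) else 0)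
      = ∑ s : V, (if G.Adj s t ∧ lev G x0 s = ℓ ∧ lev G x0 t = ℓ + 1 then 1 else 0) := by
    intro t
    split_ifs with h
    · rfl
    · symm
      apply Finset.sum_eq_zero
      intro s _
      rw [if_neg]
      rintro ⟨-, -, h3⟩; exact h h3
  have rhs_eq : ∀ s : V, (if lev G x0 s = ℓ then
      ∑ t : V, (if G.Adj t s ∧ lev G x0 s = ℓ ∧ lev G x0 t = ℓ + 1 then 1 else 0) else 0)
      = ∑ t : V, (if G.Adj t s ∧ lev G x0 s = ℓ ∧ lev G x0 t = ℓ + 1 then 1 else 0) := by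
    intro s
    split_ifs with h
    · rfl
    · symm
      apply Finset.sum_eq_zero
      intro t _
      rw [if_neg]
      rintro ⟨-, h2, -⟩; exact h h2
  rw [Finset.sum_congr rfl (fun t _ => lhs_eq t), Finset.sum_congr rfl (fun s _ => rhs_eq s)]
  rw [Finset.sum_comm]
  apply Finset.sum_congr rfl
  intro s _
  apply Finset.sum_congr rfl
  intro t _
  congr 1
  simp only [eq_iff_iff]
  constructor
  · rintro ⟨h1, h2⟩; exact ⟨h1.symm, h2⟩
  · rintro ⟨h1, h2⟩; exact ⟨h1.symm, h2⟩

lemma sum_Rch_eq (hconn : G.Connected) (hTS : TS G) (ℓ : ℕ) :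
    ∑ t ∈ sph G x0 (ℓ + 1), Rch G x0 t = aA G x0 ℓ := by
  classical
  rw [aA]
  rw [Finset.card_eq_sum_card_fiberwise
    (f := vch G x0) (t := sph G x0 (ℓ+1)) ?_]
  · apply Finset.sum_congr rfl
    intro t ht
    rw [sph, Finset.mem_filter] at ht
    rw [Rch]
    congr 1
    ext z
    simp only [Finset.mem_filter, Finset.mem_univ, true_and]
    constructor
    · intro h
      have hq := (vch_spec x0 hconn hTS h.1).2.1
      rw [h.2] at hq
      have ht2 := ht.2
      exact ⟨⟨h.1, by omega⟩, h.2⟩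
    · tauto
  · intro z hz
    rw [Finset.mem_coe, Finset.mem_filter] at hz
    rw [sph, Finset.mem_coe, Finset.mem_filter]
    have := (vch_spec x0 hconn hTS hz.2.1).2.1
    refine ⟨Finset.mem_univ _, by omega⟩

lemma sum_fwd_eq (ℓ : ℕ) :
    ∑ t ∈ sph G x0 (ℓ + 1), fwd G x0 t = dD G x0 ℓ := by
  classical
  rw [dD]
  rw [Finset.card_eq_sum_card_fiberwise
    (f := sch G x0) (t := sph G x0 (ℓ+1)) ?_]
  · apply Finset.sum_congr rfl
    intro t ht
    rw [sph, Finset.mem_filter] at ht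
    rw [fwd, ht.2]
    simp
  · intro s hs
    obtain ⟨hlev, -, hout, -, -⟩ := Dlev_mem x0 hs
    obtain ⟨-, h2⟩ := sch_spec x0 hout
    rw [sph, Finset.mem_coe, Finset.mem_filter]
    exact ⟨Finset.mem_univ _, by omega⟩

open Classical in
lemma sum_indA_eq (ℓ : ℕ) :
    ∑ t ∈ sph G x0 ℓ, (if isA G x0 t then 1 else 0) = aA G x0 ℓ := by
  classical
  rw [aA, ← Finset.card_filter]
  congr 1
  ext z
  simp only [Finset.mem_filter, Finset.mem_univ, true_and, sph]
  tauto

open Classical in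
lemma sum_indD_eq (ℓ : ℕ) :
    ∑ t ∈ sph G x0 ℓ, (if t ∈ Dlev G x0 (lev G x0 t) then 1 else 0) = dD G x0 ℓ := by
  classical
  rw [dD]
  have : ∀ t ∈ sph G x0 ℓ, (if t ∈ Dlev G x0 (lev G x0 t) then (1:ℕ) else 0) =
      (if t ∈ Dlev G x0 ℓ then 1 else 0) := by
    intro t ht
    rw [sph, Finset.mem_filter] at ht
    rw [ht.2]
  rw [Finset.sum_congr rfl this, ← Finset.card_filter]
  congr 1
  ext t
  simp only [Finset.mem_filter, sph, Finset.mem_univ, true_and]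
  constructor
  · rintro ⟨-, h⟩; exact h
  · intro h
    exact ⟨(Dlev_mem x0 h).1, h⟩

/-- per-level inequality -/
lemma per_level (hconn : G.Connected) (hcub : ∀ v, G.degree v = 3) (hTS : TS G) (ℓ : ℕ) :
    eE G x0 (ℓ+1) + aA G x0 ℓ + dD G x0 ℓ ≤ eE G x0 ℓ + aA G x0 (ℓ+1) + dD G x0 (ℓ+1) := by
  classical
  have hm : ∀ t ∈ sph G x0 (ℓ+1), nOut G x0 t + (Rch G x0 t + fwd G x0 t) ≤
      nIn G x0 t + ((if isA G x0 t then 1 else 0) +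
        (if t ∈ Dlev G x0 (lev G x0 t) then 1 else 0)) := by
    intro t ht
    rw [sph, Finset.mem_filter] at ht
    exact master x0 hconn hcub hTS (by omega)
  have := Finset.sum_le_sum hm
  rw [Finset.sum_add_distrib, Finset.sum_add_distrib, Finset.sum_add_distrib,
    Finset.sum_add_distrib] at this
  rw [sum_nIn_eq x0 hconn, sum_Rch_eq x0 hconn hTS, sum_fwd_eq x0, sum_indA_eq x0,
    sum_indD_eq x0] at this
  have he : ∑ t ∈ sph G x0 (ℓ+1), nOut G x0 t = eE G x0 (ℓ+1) := rfl
  omega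

lemma eE_zero (hconn : G.Connected) (hcub : ∀ v, G.degree v = 3) : eE G x0 0 = 3 := by
  classical
  have hsph : sph G x0 0 = {x0} := by
    ext z
    simp only [sph, Finset.mem_filter, Finset.mem_univ, true_and, Finset.mem_singleton]
    constructor
    · exact lev_eq_zero hconn
    · rintro rfl; exact lev_x0 _
  rw [eE, hsph, Finset.sum_singleton]
  have h1 : nIn G x0 x0 = 0 := by
    rw [nIn, Finset.card_eq_zero, Finset.eq_empty_iff_forall_notMem]
    intro s hs
    rw [Finset.mem_filter] at hs
    have := lev_x0 (G := G) x0
    omega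
  have h2 : nHor G x0 x0 = 0 := by
    rw [nHor, Finset.card_eq_zero, Finset.eq_empty_iff_forall_notMem]
    intro s hs
    rw [Finset.mem_filter] at hs
    obtain ⟨-, hadj, hlev⟩ := hs
    have hx := lev_x0 (G := G) x0
    have hs0 : s = x0 := lev_eq_zero hconn (by omega)
    exact G.irrefl (hs0 ▸ hadj)
  have := in_hor_out hconn hcub x0 x0
  omega

lemma aA_zero : aA G x0 0 = 0 := by
  classical
  rw [aA, Finset.card_eq_zero, Finset.eq_empty_iff_forall_notMem]
  intro z hz
  rw [Finset.mem_filter] at hz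
  have := hz.2.1.1
  omega

lemma dD_zero : dD G x0 0 = 0 := by rw [dD]; simp [Dlev]

lemma eE_le (hconn : G.Connected) (hcub : ∀ v, G.degree v = 3) (hTS : TS G) (ℓ : ℕ) :
    eE G x0 ℓ ≤ 3 + aA G x0 ℓ + dD G x0 ℓ := by
  induction ℓ with
  | zero => rw [eE_zero x0 hconn hcub, aA_zero, dD_zero]
  | succ ℓ ih =>
      have := per_level x0 hconn hcub hTS ℓ
      omega

lemma two_aA_le (hconn : G.Connected) (hcub : ∀ v, G.degree v = 3) (ℓ : ℕ) :
    2 * aA G x0 ℓ + dD G x0 ℓ ≤ eE G x0 ℓ := by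
  classical
  set A := univ.filter (fun z => isA G x0 z ∧ lev G x0 z = ℓ) with hA
  have hsubA : A ⊆ sph G x0 ℓ := by
    intro z hz
    rw [hA, Finset.mem_filter] at hz
    rw [sph, Finset.mem_filter]
    exact ⟨Finset.mem_univ _, hz.2.2⟩
  have hsubD : Dlev G x0 ℓ ⊆ sph G x0 ℓ := by
    intro z hz
    rw [sph, Finset.mem_filter]
    exact ⟨Finset.mem_univ _, (Dlev_mem x0 hz).1⟩
  have hdis : Disjoint A (Dlev G x0 ℓ) := by
    rw [Finset.disjoint_left]
    intro z hz hz'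
    rw [hA, Finset.mem_filter] at hz
    exact (Dlev_mem x0 hz').2.1 hz.2.1
  have hsub : A ∪ Dlev G x0 ℓ ⊆ sph G x0 ℓ := Finset.union_subset hsubA hsubD
  have h1 : ∑ t ∈ A ∪ Dlev G x0 ℓ, nOut G x0 t ≤ eE G x0 ℓ := by
    rw [eE]
    exact Finset.sum_le_sum_of_subset hsub
  rw [Finset.sum_union hdis] at h1
  have h2 : ∑ t ∈ A, nOut G x0 t = 2 * aA G x0 ℓ := by
    have hc : ∀ t ∈ A, nOut G x0 t = 2 := by
      intro t ht
      rw [hA, Finset.mem_filter] at ht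
      obtain ⟨-, ⟨hl, hin, hhor⟩, -⟩ := ht
      have := in_hor_out hconn hcub x0 t
      omega
    rw [Finset.sum_congr rfl hc, Finset.sum_const, aA, ← hA, smul_eq_mul, mul_comm]
  have h3 : dD G x0 ℓ ≤ ∑ t ∈ Dlev G x0 ℓ, nOut G x0 t := by
    rw [dD]
    calc (Dlev G x0 ℓ).card = ∑ _t ∈ Dlev G x0 ℓ, 1 := by rw [Finset.sum_const, smul_eq_mul, mul_one]
    _ ≤ _ := Finset.sum_le_sum (fun t ht => (Dlev_mem x0 ht).2.2.1)
  omega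

lemma aA_le_three (hconn : G.Connected) (hcub : ∀ v, G.degree v = 3) (hTS : TS G) (ℓ : ℕ) :
    aA G x0 ℓ ≤ 3 := by
  have h1 := eE_le x0 hconn hcub hTS ℓ
  have h2 := two_aA_le x0 hconn hcub ℓ
  omega

end Sums
end NOE

set_option linter.unusedSectionVars false
set_option maxHeartbeats 1000000
open Finset SimpleGraph
namespace NOE
variable {V : Type*} [Fintype V] [DecidableEq V] {G : SimpleGraph V}

section Dbounds
variable (x0 : V)

lemma three_le_card {s : Finset V} {a b c : V} (hab : a ≠ b) (hac : a ≠ c) (hbc : b ≠ c)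
    (ha : a ∈ s) (hb : b ∈ s) (hc : c ∈ s) : 3 ≤ s.card := by
  have hsub : ({a, b, c} : Finset V) ⊆ s := by
    intro x hx
    simp only [Finset.mem_insert, Finset.mem_singleton] at hx
    rcases hx with rfl | rfl | rfl <;> assumption
  have : ({a, b, c} : Finset V).card = 3 := by
    rw [Finset.card_insert_of_notMem (by simp [hab, hac]),
      Finset.card_insert_of_notMem (by simp [hbc]), Finset.card_singleton]
  rw [← this]
  exact Finset.card_le_card hsub

lemma nIn_lev_one (hconn : G.Connected) {t : V} (h : lev G x0 t = 1) : nIn G x0 t = 1 := by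
  classical
  have h1 : 1 ≤ nIn G x0 t := one_le_nIn hconn (by omega)
  have h2 : nIn G x0 t ≤ 1 := by
    rw [nIn]
    apply Finset.card_le_one.mpr
    intro a ha b hb
    rw [Finset.mem_filter] at ha hb
    have ha0 : a = x0 := lev_eq_zero hconn (by omega)
    have hb0 : b = x0 := lev_eq_zero hconn (by omega)
    rw [ha0, hb0]
  omega

lemma Rch_lev_le_one (hconn : G.Connected) (hTS : TS G) {t : V} (h : lev G x0 t ≤ 1) :
    Rch G x0 t = 0 := by
  classical
  rw [Rch, Finset.card_eq_zero, Finset.eq_empty_iff_forall_notMem]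
  intro z hz
  rw [Finset.mem_filter] at hz
  obtain ⟨-, hzA, hzv⟩ := hz
  have h1 := (vch_spec x0 hconn hTS hzA).2.1
  have h2 := hzA.1
  rw [hzv] at h1
  omega

lemma Dlev_one_empty (hconn : G.Connected) (hcub : ∀ v, G.degree v = 3) (hTS : TS G) :
    Dlev G x0 1 = ∅ := by
  classical
  rw [Finset.eq_empty_iff_forall_notMem]
  intro t ht
  obtain ⟨hlev, hnA, hout, heq, -⟩ := Dlev_mem x0 ht
  have hfwd : fwd G x0 t = 0 := by
    rw [fwd, hlev]
    simp [Dlev]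
  have hR : Rch G x0 t = 0 := Rch_lev_le_one x0 hconn hTS (by omega)
  have hin : nIn G x0 t = 1 := nIn_lev_one x0 hconn hlev
  exact hnA ⟨by omega, hin, by omega⟩

lemma Dlev_two_shape (hconn : G.Connected) (hcub : ∀ v, G.degree v = 3) (hTS : TS G)
    {t : V} (ht : t ∈ Dlev G x0 2) : Rch G x0 t = 2 := by
  obtain ⟨hlev, hnA, hout, heq, -⟩ := Dlev_mem x0 ht
  have hfwd : fwd G x0 t = 0 := by
    rw [fwd, hlev]
    rw [Dlev_one_empty x0 hconn hcub hTS]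
    simp
  have hin1 : 1 ≤ nIn G x0 t := one_le_nIn hconn (by omega)
  have hP := P_le_nIn x0 hconn hTS t
  -- shapes
  rcases Nat.lt_or_ge (Rch G x0 t) 1 with hR | hR
  · exfalso
    have hih : nIn G x0 t + nHor G x0 t ≤ 2 := by omega
    exact hnA ⟨by omega, by omega, by omega⟩
  · have h2 := Rch_pos x0 hconn hTS hR
    omega

lemma dD_two_le_one (hconn : G.Connected) (hcub : ∀ v, G.degree v = 3) (hTS : TS G) :
    dD G x0 2 ≤ 1 := by
  classical
  have h1 : 2 * dD G x0 2 = ∑ t ∈ Dlev G x0 2, Rch G x0 t := by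
    rw [Finset.sum_congr rfl (fun t ht => (Dlev_two_shape x0 hconn hcub hTS ht)),
      Finset.sum_const, dD, smul_eq_mul, mul_comm]
  have hsub : Dlev G x0 2 ⊆ sph G x0 2 := by
    intro z hz
    rw [sph, Finset.mem_filter]
    exact ⟨Finset.mem_univ _, (Dlev_mem x0 hz).1⟩
  have h2 : ∑ t ∈ Dlev G x0 2, Rch G x0 t ≤ ∑ t ∈ sph G x0 2, Rch G x0 t :=
    Finset.sum_le_sum_of_subset hsub
  have h3 : ∑ t ∈ sph G x0 2, Rch G x0 t = aA G x0 1 := sum_Rch_eq x0 hconn hTS 1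
  have h4 := aA_le_three x0 hconn hcub hTS 1
  omega

lemma Rch_two_false (hconn : G.Connected) (hcub : ∀ v, G.degree v = 3) (hTS : TS G)
    {t : V} (hR : 2 ≤ Rch G x0 t) (hin : nIn G x0 t = 2) (h3 : 3 ≤ lev G x0 t) : False := by
  classical
  obtain ⟨z, hz, z', hz', hne⟩ := Finset.one_lt_card.mp (by omega : 1 < Rch G x0 t)
  rw [Finset.mem_filter] at hz hz'
  obtain ⟨-, hzA, hzv⟩ := hz
  obtain ⟨-, hzA', hzv'⟩ := hz'
  obtain ⟨q1, q2, u, hu1, hu2, hu3, x, hx1, hx2, hx3⟩ := vch_spec x0 hconn hTS hzA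
  obtain ⟨q1', q2', u', hu1', hu2', hu3', x', hx1', hx2', hx3'⟩ := vch_spec x0 hconn hTS hzA'
  rw [hzv] at q1 q2 hu3
  rw [hzv'] at q1' q2' hu3'
  -- z, u, z' are all parents of t; nIn t = 2 forces z' = u
  have hmem : ∀ c, G.Adj c t → lev G x0 c + 1 = lev G x0 t →
      c ∈ univ.filter (fun s => G.Adj s t ∧ lev G x0 s + 1 = lev G x0 t) := by
    intro c h1 h2; simp [h1, h2]
  have hz'u : z' = u := by
    by_contra hzu
    have : 3 ≤ nIn G x0 t := by
      rw [nIn]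
      exact three_le_card hu1 (fun h => hzu h.symm) hne (hmem u hu3 (by omega))
        (hmem z q1 (by omega)) (hmem z' q1' (by omega))
    omega
  -- now z and z' = u are sibling alphas under x
  apply no_sibling_alphas x0 hconn hcub hTS hzA hzA' hne hx1 hx2 (hz'u ▸ hx3) (by omega) (by omega)

lemma dD_succ_le (hconn : G.Connected) (hcub : ∀ v, G.degree v = 3) (hTS : TS G)
    {ℓ : ℕ} (hℓ : 2 ≤ ℓ) : dD G x0 (ℓ + 1) ≤ dD G x0 ℓ := by
  classical
  have hfwd : ∀ t ∈ Dlev G x0 (ℓ + 1), 1 ≤ fwd G x0 t := by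
    intro t ht
    obtain ⟨hlev, hnA, hout, heq, -⟩ := Dlev_mem x0 ht
    by_contra hf
    have hf0 : fwd G x0 t = 0 := by omega
    have hin1 : 1 ≤ nIn G x0 t := one_le_nIn hconn (by omega)
    have hP := P_le_nIn x0 hconn hTS t
    rcases Nat.lt_or_ge (Rch G x0 t) 1 with hR | hR
    · exact hnA ⟨by omega, by omega, by omega⟩
    · have h2 := Rch_pos x0 hconn hTS hR
      have hin2 : nIn G x0 t = 2 := by omega
      have hR2 : 2 ≤ Rch G x0 t := by omega
      exact Rch_two_false x0 hconn hcub hTS hR2 hin2 (by omega)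
  have h1 : dD G x0 (ℓ+1) ≤ ∑ t ∈ Dlev G x0 (ℓ+1), fwd G x0 t := by
    rw [dD]
    calc (Dlev G x0 (ℓ+1)).card = ∑ _t ∈ Dlev G x0 (ℓ+1), 1 := by
          rw [Finset.sum_const, smul_eq_mul, mul_one]
    _ ≤ _ := Finset.sum_le_sum hfwd
  have hsub : Dlev G x0 (ℓ+1) ⊆ sph G x0 (ℓ+1) := by
    intro z hz
    rw [sph, Finset.mem_filter]
    exact ⟨Finset.mem_univ _, (Dlev_mem x0 hz).1⟩
  have h2 : ∑ t ∈ Dlev G x0 (ℓ+1), fwd G x0 t ≤ ∑ t ∈ sph G x0 (ℓ+1), fwd G x0 t :=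
    Finset.sum_le_sum_of_subset hsub
  have h3 := sum_fwd_eq x0 (G := G) ℓ
  omega

lemma dD_le_one (hconn : G.Connected) (hcub : ∀ v, G.degree v = 3) (hTS : TS G) (ℓ : ℕ) :
    dD G x0 ℓ ≤ 1 := by
  induction ℓ with
  | zero => rw [dD_zero]; omega
  | succ n ih =>
      rcases n with _ | _ | k
      · rw [dD, Dlev_one_empty x0 hconn hcub hTS]; simp
      · exact dD_two_le_one x0 hconn hcub hTS
      · exact le_trans (dD_succ_le x0 hconn hcub hTS (by omega)) ih

lemma sph_zero (hconn : G.Connected) : sph G x0 0 = {x0} := by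
  ext z
  simp only [sph, Finset.mem_filter, Finset.mem_univ, true_and, Finset.mem_singleton]
  constructor
  · exact lev_eq_zero hconn
  · rintro rfl; exact lev_x0 _

lemma sph_card_le (hconn : G.Connected) (hcub : ∀ v, G.degree v = 3) (hTS : TS G) (ℓ : ℕ) :
    (sph G x0 ℓ).card ≤ 7 := by
  classical
  cases ℓ with
  | zero => rw [sph_zero x0 hconn]; simp
  | succ ℓ =>
      have h1 : (sph G x0 (ℓ+1)).card ≤ ∑ t ∈ sph G x0 (ℓ+1), nIn G x0 t := by
        calc (sph G x0 (ℓ+1)).card = ∑ _t ∈ sph G x0 (ℓ+1), 1 := by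
              rw [Finset.sum_const, smul_eq_mul, mul_one]
        _ ≤ _ := by
            apply Finset.sum_le_sum
            intro t ht
            rw [sph, Finset.mem_filter] at ht
            exact one_le_nIn hconn (by omega)
      rw [sum_nIn_eq x0 hconn] at h1
      have h2 := eE_le x0 hconn hcub hTS ℓ
      have h3 := aA_le_three x0 hconn hcub hTS ℓ
      have h4 := dD_le_one x0 hconn hcub hTS ℓ
      omega

end Dbounds
end NOE

set_option linter.unusedSectionVars false
set_option maxHeartbeats 1000000
open Finset SimpleGraph
namespace NOE
variable {V : Type*} [Fintype V] [DecidableEq V]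

lemma TS_of_kappa (G : SimpleGraph V) [∀ v, Fintype (G.neighborSet v)]
    (hconn : G.Connected) (hcub : ∀ v, G.degree v = 3)
    (hcurv : ∀ x y : V, G.Adj x y → 0 ≤ kappaZero G x y) : TS G := by
  classical
  intro x y hxy
  by_contra hcon
  push_neg at hcon
  obtain ⟨hnt, hns⟩ := hcon
  -- the dual certificate
  set ψ : V → ℝ := fun z => if z = x ∨ z = y then 1 else if G.Adj x z then 2 else 0 with hψ
  have hxny : x ≠ y := G.ne_of_adj hxy
  have hnoc : ∀ v, G.Adj y v → v ≠ x → ¬ G.Adj x v := by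
    intro v hv hvx hxv
    exact hnt v hxv hv
  have hψy : ψ y = 1 := by simp [hψ]
  have hψx : ψ x = 1 := by simp [hψ]
  have hψu : ∀ u, G.Adj x u → u ≠ y → ψ u = 2 := by
    intro u hu huy
    have hux : u ≠ x := fun h => G.irrefl (h ▸ hu)
    simp [hψ, hux, huy, hu]
  have hψv : ∀ v, G.Adj y v → v ≠ x → ψ v = 0 := by
    intro v hv hvx
    have hvy : v ≠ y := fun h => G.irrefl (h ▸ hv)
    simp [hψ, hvx, hvy, hnoc v hv hvx]
  -- Lipschitz-type bound on supports
  have F1 : ∀ u v, G.Adj x u → G.Adj y v → ψ u - ψ v ≤ (G.dist u v : ℝ) := by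
    intro u v hu hv
    have hdist0 : (0:ℝ) ≤ (G.dist u v : ℝ) := Nat.cast_nonneg _
    have hge1 : u ≠ v → (1:ℝ) ≤ (G.dist u v : ℝ) := by
      intro hne
      have := hconn.pos_dist_of_ne hne
      exact_mod_cast this
    by_cases huy : u = y
    · subst huy
      by_cases hvx : v = x
      · subst hvx; rw [hψy, hψx]; simpa using hdist0
      · rw [hψy, hψv v hv hvx]
        have huv : u ≠ v := fun h => G.irrefl (h ▸ hv)
        simpa using hge1 huv
    · rw [hψu u hu huy]
      by_cases hvx : v = x
      · subst hvx
        rw [hψx]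
        have huv : u ≠ v := fun h => G.irrefl (h ▸ hu)
        have := hge1 huv
        linarith
      · rw [hψv v hv hvx]
        have huv : u ≠ v := by
          intro h; subst h; exact hnt u hu hv
        have hnadj : ¬ G.Adj u v := by
          intro hadj
          exact hvx (hns u v hu hv hadj huy)
        have hd1 : G.dist u v ≠ 1 := fun h => hnadj ((SimpleGraph.dist_eq_one_iff_adj).mp h)
        have hd0 : G.dist u v ≠ 0 := by
          intro h
          exact huv ((hconn.dist_eq_zero_iff).mp h)
        have : 2 ≤ G.dist u v := by omega
        have : (2:ℝ) ≤ (G.dist u v : ℝ) := by exact_mod_cast this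
        linarith
  -- sums of ψ over the two neighborhoods
  have hycard : (G.neighborFinset x).card = 3 := by
    rw [SimpleGraph.card_neighborFinset_eq_degree, hcub]
  have hxcard : (G.neighborFinset y).card = 3 := by
    rw [SimpleGraph.card_neighborFinset_eq_degree, hcub]
  have hymem : y ∈ G.neighborFinset x := by rw [SimpleGraph.mem_neighborFinset]; exact hxy
  have hxmem : x ∈ G.neighborFinset y := by rw [SimpleGraph.mem_neighborFinset]; exact hxy.symm
  have F2 : ∑ u ∈ G.neighborFinset x, ψ u = 5 := by
    rw [← Finset.sum_erase_add _ _ hymem, hψy]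
    have : ∀ u ∈ (G.neighborFinset x).erase y, ψ u = 2 := by
      intro u hu
      obtain ⟨huy, humem⟩ := Finset.mem_erase.mp hu
      exact hψu u ((SimpleGraph.mem_neighborFinset _ _ _).mp humem) huy
    rw [Finset.sum_congr rfl this, Finset.sum_const, Finset.card_erase_of_mem hymem, hycard]
    norm_num
  have F3 : ∑ v ∈ G.neighborFinset y, ψ v = 1 := by
    rw [← Finset.sum_erase_add _ _ hxmem, hψx]
    have : ∀ v ∈ (G.neighborFinset y).erase x, ψ v = 0 := by
      intro v hv
      obtain ⟨hvx, hvmem⟩ := Finset.mem_erase.mp hv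
      exact hψv v ((SimpleGraph.mem_neighborFinset _ _ _).mp hvmem) hvx
    rw [Finset.sum_congr rfl this, Finset.sum_const]
    norm_num
  -- the coupling set
  set S : Set ℝ := {w : ℝ | ∃ π : V → V → ℝ,
    (∀ u v, 0 ≤ π u v) ∧
    (∀ u v, π u v ≠ 0 → G.Adj x u ∧ G.Adj y v) ∧
    (∀ u, ∑ v ∈ G.neighborFinset y, π u v = muZero G x u) ∧
    (∀ v, ∑ u ∈ G.neighborFinset x, π u v = muZero G y v) ∧
    w = ∑ u ∈ G.neighborFinset x, ∑ v ∈ G.neighborFinset y, (G.dist u v : ℝ) * π u v} with hS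
  have hne : S.Nonempty := by
    refine ⟨_, fun u v => if G.Adj x u ∧ G.Adj y v then (1:ℝ)/9 else 0, ?_, ?_, ?_, ?_, rfl⟩
    · intro u v; beta_reduce; positivity
    · intro u v h
      beta_reduce at h
      by_contra hc
      rw [if_neg hc] at h
      exact h rfl
    · intro u
      beta_reduce
      by_cases hu : G.Adj x u
      · have : ∀ v ∈ G.neighborFinset y, (if G.Adj x u ∧ G.Adj y v then (1:ℝ)/9 else 0) = 1/9 := by
          intro v hv
          rw [if_pos ⟨hu, (SimpleGraph.mem_neighborFinset _ _ _).mp hv⟩]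
        rw [Finset.sum_congr rfl this, Finset.sum_const, hxcard, muZero, if_pos hu, hcub]
        norm_num
      · have : ∀ v ∈ G.neighborFinset y, (if G.Adj x u ∧ G.Adj y v then (1:ℝ)/9 else 0) = 0 := by
          intro v hv
          rw [if_neg (fun hc => hu hc.1)]
        rw [Finset.sum_congr rfl this, Finset.sum_const, muZero, if_neg hu]
        norm_num
    · intro v
      beta_reduce
      by_cases hv : G.Adj y v
      · have : ∀ u ∈ G.neighborFinset x, (if G.Adj x u ∧ G.Adj y v then (1:ℝ)/9 else 0) = 1/9 := by
          intro u hu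
          rw [if_pos ⟨(SimpleGraph.mem_neighborFinset _ _ _).mp hu, hv⟩]
        rw [Finset.sum_congr rfl this, Finset.sum_const, hycard, muZero, if_pos hv, hcub]
        norm_num
      · have : ∀ u ∈ G.neighborFinset x, (if G.Adj x u ∧ G.Adj y v then (1:ℝ)/9 else 0) = 0 := by
          intro u hu
          rw [if_neg (fun hc => hv hc.2)]
        rw [Finset.sum_congr rfl this, Finset.sum_const, muZero, if_neg hv]
        norm_num
  -- every coupling costs at least 4/3
  have hlb : ∀ w ∈ S, (4:ℝ)/3 ≤ w := by
    rintro w ⟨π, hpos, hsupp, hm1, hm2, rfl⟩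
    have hterm : ∀ u ∈ G.neighborFinset x, ∀ v ∈ G.neighborFinset y,
        (ψ u - ψ v) * π u v ≤ (G.dist u v : ℝ) * π u v := by
      intro u hu v hv
      by_cases h0 : π u v = 0
      · rw [h0]; ring_nf; rfl
      · obtain ⟨h1, h2⟩ := hsupp u v h0
        exact mul_le_mul_of_nonneg_right (F1 u v h1 h2) (hpos u v)
    have hsum : ∑ u ∈ G.neighborFinset x, ∑ v ∈ G.neighborFinset y, (ψ u - ψ v) * π u v ≤
        ∑ u ∈ G.neighborFinset x, ∑ v ∈ G.neighborFinset y, (G.dist u v : ℝ) * π u v := by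
      apply Finset.sum_le_sum
      intro u hu
      exact Finset.sum_le_sum (fun v hv => hterm u hu v hv)
    have hexp : ∑ u ∈ G.neighborFinset x, ∑ v ∈ G.neighborFinset y, (ψ u - ψ v) * π u v
        = (4:ℝ)/3 := by
      have h1 : ∀ u ∈ G.neighborFinset x,
          ∑ v ∈ G.neighborFinset y, (ψ u - ψ v) * π u v
          = ψ u * muZero G x u - ∑ v ∈ G.neighborFinset y, ψ v * π u v := by
        intro u hu
        rw [← hm1 u, Finset.mul_sum, ← Finset.sum_sub_distrib]
        apply Finset.sum_congr rfl
        intro v hv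
        ring
      rw [Finset.sum_congr rfl h1, Finset.sum_sub_distrib]
      have h2 : ∑ u ∈ G.neighborFinset x, ψ u * muZero G x u = 5/3 := by
        have : ∀ u ∈ G.neighborFinset x, ψ u * muZero G x u = ψ u * (1/3) := by
          intro u hu
          rw [muZero, if_pos ((SimpleGraph.mem_neighborFinset _ _ _).mp hu), hcub]
          norm_num
        rw [Finset.sum_congr rfl this, ← Finset.sum_mul, F2]
        norm_num
      have h3 : ∑ u ∈ G.neighborFinset x, ∑ v ∈ G.neighborFinset y, ψ v * π u v = 1/3 := by
        rw [Finset.sum_comm]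
        have : ∀ v ∈ G.neighborFinset y, ∑ u ∈ G.neighborFinset x, ψ v * π u v
            = ψ v * (1/3) := by
          intro v hv
          rw [← Finset.mul_sum, hm2 v, muZero,
            if_pos ((SimpleGraph.mem_neighborFinset _ _ _).mp hv), hcub]
          norm_num
        rw [Finset.sum_congr rfl this, ← Finset.sum_mul, F3]
        norm_num
      rw [h2, h3]
      norm_num
    rw [← hexp]
    exact hsum
  have hW : Wone G x y ≤ 1 := by
    have := hcurv x y hxy
    rw [kappaZero] at this
    linarith
  have : (4:ℝ)/3 ≤ Wone G x y := by
    rw [Wone]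
    exact le_csInf hne hlb
  linarith

end NOE

set_option linter.unusedSectionVars false
set_option maxHeartbeats 1000000
open Finset SimpleGraph
open scoped RealInnerProductSpace
namespace NOE
variable {V : Type*} [Fintype V] [DecidableEq V] (G : SimpleGraph V)

lemma ite_cp {p : Prop} [Decidable p] (a b : ℝ) :
    (@ite ℝ p (Classical.propDecidable p) a b) = if p then a else b := by
  by_cases h : p
  · rw [if_pos h, if_pos h]
  · rw [if_neg h, if_neg h]

lemma lapMat_mulVec (f : V → ℝ) (v : V) :
    (lapMat G).mulVec f v = ∑ j : V, (if G.Adj v j then f v - f j else 0) := by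
  classical
  have hunf : (lapMat G).mulVec f v = ∑ j : V,
      ((if v = j then ∑ k : V, (if G.Adj v k then (1:ℝ) else 0) else 0) -
        (if G.Adj v j then 1 else 0)) * f j := by
    simp only [Matrix.mulVec, dotProduct, lapMat, ite_cp]
  rw [hunf]
  have step : ∀ j : V, ((if v = j then ∑ k : V, (if G.Adj v k then (1:ℝ) else 0) else 0) -
      (if G.Adj v j then 1 else 0)) * f j
      = (if v = j then (∑ k : V, (if G.Adj v k then (1:ℝ) else 0)) * f j else 0)
        - (if G.Adj v j then f j else 0) := by
    intro j
    split_ifs <;> ring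
  rw [Finset.sum_congr rfl (fun j _ => step j), Finset.sum_sub_distrib]
  have h1 : ∑ j : V, (if v = j then (∑ k : V, (if G.Adj v k then (1:ℝ) else 0)) * f j else 0)
      = (∑ k : V, (if G.Adj v k then (1:ℝ) else 0)) * f v := by
    rw [Finset.sum_eq_single_of_mem v (Finset.mem_univ v)]
    · rw [if_pos rfl]
    · intro j _ hj
      rw [if_neg (fun h => hj h.symm)]
  rw [h1, Finset.sum_mul, ← Finset.sum_sub_distrib]
  apply Finset.sum_congr rfl
  intro j _
  split_ifs <;> ring

lemma quad_expand (f : V → ℝ) :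
    ∑ v, f v * (lapMat G).mulVec f v
      = ∑ v, ∑ j, (if G.Adj v j then f v * (f v - f j) else 0) := by
  classical
  apply Finset.sum_congr rfl
  intro v _
  rw [lapMat_mulVec, Finset.mul_sum]
  apply Finset.sum_congr rfl
  intro j _
  split_ifs <;> ring

lemma two_quad (f : V → ℝ) :
    2 * (∑ v, f v * (lapMat G).mulVec f v)
      = ∑ v, ∑ j, (if G.Adj v j then (f v - f j)^2 else 0) := by
  classical
  rw [quad_expand, two_mul]
  nth_rewrite 2 [Finset.sum_comm]
  rw [← Finset.sum_add_distrib]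
  apply Finset.sum_congr rfl
  intro v _
  rw [← Finset.sum_add_distrib]
  apply Finset.sum_congr rfl
  intro j _
  have : G.Adj v j ↔ G.Adj j v := G.adj_comm v j
  split_ifs with h1 h2 h2
  · ring
  · exact absurd (this.mp h1) h2
  · exact absurd (this.mpr h2) h1
  · ring

lemma quad_nonneg (f : V → ℝ) : 0 ≤ ∑ v, f v * (lapMat G).mulVec f v := by
  classical
  have h := two_quad G f
  have h2 : 0 ≤ ∑ v : V, ∑ j : V, (if G.Adj v j then (f v - f j)^2 else 0) := by
    apply Finset.sum_nonneg
    intro v _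
    apply Finset.sum_nonneg
    intro j _
    split_ifs
    · positivity
    · rfl
  linarith

lemma eig_nonneg (t : ℝ) (f : V → ℝ) (hfne : f ≠ 0) (heig : (lapMat G).mulVec f = t • f) :
    0 ≤ t := by
  classical
  have hq : ∑ v, f v * (lapMat G).mulVec f v = t * ∑ v, f v * f v := by
    rw [heig, Finset.mul_sum]
    apply Finset.sum_congr rfl
    intro v _
    simp [Pi.smul_apply, smul_eq_mul]
    ring
  have hpos : 0 < ∑ v, f v * f v := by
    obtain ⟨w, hw⟩ := Function.ne_iff.mp hfne
    apply Finset.sum_pos' (fun v _ => mul_self_nonneg _)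
    exact ⟨w, Finset.mem_univ w, mul_self_pos.mpr hw⟩
  have := quad_nonneg G f
  nlinarith

lemma lambdaOne_nonneg : 0 ≤ lambdaOne G := by
  apply Real.sInf_nonneg
  rintro t ⟨htne, f, hfne, heig⟩
  exact eig_nonneg G t f hfne heig

lemma lambdaOne_bddBelow :
    BddBelow {t : ℝ | t ≠ 0 ∧ ∃ v : V → ℝ, v ≠ 0 ∧ (lapMat G).mulVec v = t • v} := by
  refine ⟨0, ?_⟩
  rintro t ⟨htne, f, hfne, heig⟩
  exact eig_nonneg G t f hfne heig

lemma const_of_adj (hconn : G.Connected) (f : V → ℝ)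
    (h : ∀ u w, G.Adj u w → f u = f w) (u w : V) : f u = f w := by
  obtain ⟨p⟩ := hconn.preconnected u w
  induction p with
  | nil => rfl
  | cons hadj p ih => rw [← ih]; exact h _ _ hadj

lemma kernel_const (hconn : G.Connected) (f : V → ℝ)
    (hker : (lapMat G).mulVec f = 0) (u w : V) : f u = f w := by
  classical
  apply const_of_adj G hconn f ?_ u w
  intro a b hab
  have hq : ∑ v, f v * (lapMat G).mulVec f v = 0 := by
    rw [hker]; simp
  have h2 := two_quad G f
  rw [hq, mul_zero] at h2
  have hterm : ∀ v ∈ (univ : Finset V), (0:ℝ) ≤ ∑ j, (if G.Adj v j then (f v - f j)^2 else 0) := by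
    intro v _
    apply Finset.sum_nonneg
    intro j _
    split_ifs
    · positivity
    · rfl
  have hz := (Finset.sum_eq_zero_iff_of_nonneg hterm).mp h2.symm a (Finset.mem_univ a)
  have hterm2 : ∀ j ∈ (univ : Finset V), (0:ℝ) ≤ (if G.Adj a j then (f a - f j)^2 else 0) := by
    intro j _
    split_ifs
    · positivity
    · rfl
  have hz2 := (Finset.sum_eq_zero_iff_of_nonneg hterm2).mp hz b (Finset.mem_univ b)
  rw [if_pos hab] at hz2
  have : f a - f b = 0 := by
    have := sq_eq_zero_iff.mp hz2
    exact this
  linarith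

lemma lapMat_isHermitian : (lapMat G).IsHermitian := by
  classical
  have hsymm : ∀ i j, lapMat G i j = lapMat G j i := by
    intro i j
    simp only [lapMat]
    by_cases h : i = j
    · subst h; rfl
    · have h2 : ¬ j = i := fun hh => h hh.symm
      rw [if_neg h, if_neg h2]
      by_cases h3 : G.Adj i j
      · rw [if_pos h3, if_pos ((G.adj_comm i j).mp h3)]
      · rw [if_neg h3, if_neg (fun hh => h3 ((G.adj_comm i j).mpr hh))]
  rw [Matrix.IsHermitian]
  ext i j
  rw [Matrix.conjTranspose_apply, star_trivial, hsymm]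

lemma lap_sym (x y : V → ℝ) : ∑ v, x v * ((lapMat G).mulVec y) v
    = ∑ v, ((lapMat G).mulVec x) v * y v := by
  have hL := lapMat_isHermitian G
  have h1 : ∑ v, x v * ((lapMat G).mulVec y) v
      = dotProduct x ((lapMat G).mulVec y) := rfl
  have h2 : ∑ v, ((lapMat G).mulVec x) v * y v
      = dotProduct ((lapMat G).mulVec x) y := rfl
  rw [h1, h2, Matrix.dotProduct_mulVec, ← Matrix.mulVec_transpose]
  have h3 : Matrix.transpose (lapMat G) = lapMat G := by
    have := hL
    rwa [Matrix.IsHermitian, Matrix.conjTranspose_eq_transpose_of_trivial] at this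
  rw [h3]

lemma lambdaOne_le (hconn : G.Connected) (f : V → ℝ) (hf0 : ∑ v, f v = 0) (hfne : f ≠ 0)
    (c : ℝ) (hRay : ∑ v, f v * (lapMat G).mulVec f v ≤ c * ∑ v, f v * f v) :
    lambdaOne G ≤ c := by
  classical
  have hL := lapMat_isHermitian G
  set b := hL.eigenvectorBasis with hb
  set eig := hL.eigenvalues with heigdef
  have h_inner : ∀ (x y : EuclideanSpace ℝ V), ⟪x, y⟫ = ∑ v, x v * y v := by
    intro x y
    rw [PiLp.inner_apply]
    apply Finset.sum_congr rfl
    intro v _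
    simp [RCLike.inner_apply, mul_comm]
  have hmv : ∀ i, (lapMat G).mulVec (fun v => (b i) v) = fun v => eig i * (b i) v := by
    intro i
    have h := hL.mulVec_eigenvectorBasis i
    rw [← hb, ← heigdef] at h
    exact h
  set F : EuclideanSpace ℝ V := WithLp.toLp 2 f with hF
  have hcomul : ∀ i, b.repr (WithLp.toLp 2 ((lapMat G).mulVec f) : EuclideanSpace ℝ V) i
      = eig i * b.repr F i := by
    intro i
    rw [OrthonormalBasis.repr_apply_apply, OrthonormalBasis.repr_apply_apply]
    rw [h_inner, h_inner]
    show ∑ v, (b i) v * ((lapMat G).mulVec f) v = eig i * ∑ v, (b i) v * f v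
    have hsx : ∑ v, (b i) v * ((lapMat G).mulVec f) v
        = ∑ v, ((lapMat G).mulVec (fun v => (b i) v)) v * f v := lap_sym G _ f
    rw [hsx, hmv i, Finset.mul_sum]
    apply Finset.sum_congr rfl
    intro v _
    ring
  have hrepr_inner : ∀ (x y : EuclideanSpace ℝ V), ⟪x, y⟫ = ∑ i, b.repr x i * b.repr y i := by
    intro x y
    rw [← b.repr.inner_map_map x y, h_inner]
  have hquad : ∑ v, f v * (lapMat G).mulVec f v = ∑ i, eig i * (b.repr F i) ^ 2 := by
    have h1 : ∑ v, f v * (lapMat G).mulVec f v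
        = ⟪F, (WithLp.toLp 2 ((lapMat G).mulVec f) : EuclideanSpace ℝ V)⟫ := by
      rw [h_inner]
    rw [h1, hrepr_inner]
    apply Finset.sum_congr rfl
    intro i _
    rw [hcomul i]
    ring
  have hnorm : ∑ v, f v * f v = ∑ i, (b.repr F i) ^ 2 := by
    have h1 : ∑ v, f v * f v = ⟪F, F⟫ := by rw [h_inner]
    rw [h1, hrepr_inner]
    apply Finset.sum_congr rfl
    intro i _
    ring
  have hbne : ∀ i, (fun v => (b i) v) ≠ (0 : V → ℝ) := by
    intro i h
    apply b.orthonormal.ne_zero i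
    apply (b.repr.map_eq_zero_iff).mp ?_
    · have : (b i : EuclideanSpace ℝ V) = 0 := by
        ext v
        exact congrFun h v
      rw [this, map_zero]
  have heignn : ∀ i, 0 ≤ eig i := fun i => eig_nonneg G (eig i) _ (hbne i) (hmv i)
  have hker : ∀ i, eig i = 0 → b.repr F i = 0 := by
    intro i hi
    have hmv0 : (lapMat G).mulVec (fun v => (b i) v) = 0 := by
      rw [hmv i, hi]
      funext v
      simp
    have hconst := kernel_const G hconn _ hmv0
    obtain ⟨v0⟩ := hconn.nonempty
    have hrep : b.repr F i = ∑ v, (b i) v * f v := by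
      rw [OrthonormalBasis.repr_apply_apply, h_inner]
    rw [hrep]
    calc ∑ v, (b i) v * f v = ∑ v, (b i) v0 * f v :=
          Finset.sum_congr rfl (fun v _ => by rw [hconst v v0])
    _ = (b i) v0 * ∑ v, f v := by rw [Finset.mul_sum]
    _ = 0 := by rw [hf0, mul_zero]
  set T := univ.filter (fun i => b.repr F i ≠ 0) with hT
  have hTne : T.Nonempty := by
    by_contra hTe
    rw [Finset.not_nonempty_iff_eq_empty] at hTe
    apply hfne
    have hall : ∀ i, b.repr F i = 0 := by
      intro i
      by_contra hi
      have hmem : i ∈ T := by rw [hT]; simp [hi]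
      rw [hTe] at hmem
      exact absurd hmem (Finset.notMem_empty i)
    have hzero : b.repr F = 0 := by
      ext i
      exact hall i
    have hF0 : F = 0 := by
      have h5 := congrArg b.repr.symm hzero
      rwa [b.repr.symm_apply_apply, map_zero] at h5
    have : f = (0 : V → ℝ) := by
      have h6 := congrArg WithLp.ofLp hF0
      rw [hF] at h6
      simpa using h6
    exact this
  set lam := (T.image eig).min' (hTne.image eig) with hlam
  obtain ⟨i0, hi0T, hi0⟩ := Finset.mem_image.mp ((T.image eig).min'_mem (hTne.image eig))
  have hco0 : b.repr F i0 ≠ 0 := by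
    rw [hT] at hi0T
    exact (Finset.mem_filter.mp hi0T).2
  have hlamne : lam ≠ 0 := by
    rw [hlam, ← hi0]
    intro h
    exact hco0 (hker i0 h)
  have hmem : lam ∈ {t : ℝ | t ≠ 0 ∧ ∃ v : V → ℝ, v ≠ 0 ∧ (lapMat G).mulVec v = t • v} := by
    refine ⟨hlamne, (fun v => (b i0) v), hbne i0, ?_⟩
    rw [hmv i0, hlam, ← hi0]
    funext v
    simp [smul_eq_mul]
  have h1 : lambdaOne G ≤ lam := by
    rw [lambdaOne]
    exact csInf_le (lambdaOne_bddBelow G) hmem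
  have hlam_le : ∀ i ∈ T, lam ≤ eig i := by
    intro i hi
    rw [hlam]
    exact Finset.min'_le _ _ (Finset.mem_image_of_mem eig hi)
  have hlow : lam * ∑ i, (b.repr F i) ^ 2 ≤ ∑ i, eig i * (b.repr F i) ^ 2 := by
    have e1 : ∑ i, (b.repr F i) ^ 2 = ∑ i ∈ T, (b.repr F i) ^ 2 := by
      symm
      apply Finset.sum_subset (Finset.subset_univ T)
      intro i _ hi
      rw [hT] at hi
      simp only [Finset.mem_filter, Finset.mem_univ, true_and, not_not] at hi
      rw [hi]; ring
    have e2 : ∑ i ∈ T, eig i * (b.repr F i) ^ 2 ≤ ∑ i, eig i * (b.repr F i) ^ 2 := by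
      apply Finset.sum_le_sum_of_subset_of_nonneg (Finset.subset_univ T)
      intro i _ _
      have := heignn i
      positivity
    have e3 : lam * ∑ i ∈ T, (b.repr F i) ^ 2 ≤ ∑ i ∈ T, eig i * (b.repr F i) ^ 2 := by
      rw [Finset.mul_sum]
      apply Finset.sum_le_sum
      intro i hi
      apply mul_le_mul_of_nonneg_right (hlam_le i hi)
      positivity
    rw [e1]
    linarith
  have hpos : 0 < ∑ v, f v * f v := by
    obtain ⟨w, hw⟩ := Function.ne_iff.mp hfne
    apply Finset.sum_pos' (fun v _ => mul_self_nonneg _)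
    exact ⟨w, Finset.mem_univ w, mul_self_pos.mpr hw⟩
  have hfin : lam * ∑ v, f v * f v ≤ c * ∑ v, f v * f v := by
    rw [hnorm]
    calc lam * ∑ i, (b.repr F i) ^ 2 ≤ ∑ i, eig i * (b.repr F i) ^ 2 := hlow
    _ = ∑ v, f v * (lapMat G).mulVec f v := hquad.symm
    _ ≤ c * ∑ v, f v * f v := hRay
    _ = c * ∑ i, (b.repr F i) ^ 2 := by rw [hnorm]
  have hlamc : lam ≤ c := le_of_mul_le_mul_right (by linarith [hfin]) hpos
  linarith

end NOE

set_option linter.unusedSectionVars false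
set_option maxHeartbeats 1000000
open Finset SimpleGraph
namespace NOE
variable {V : Type*} [Fintype V] [DecidableEq V] {G : SimpleGraph V}

section Glue
variable (x0 : V)

noncomputable def Bf (G : SimpleGraph V) (x0 : V) (r : ℕ) : Finset V :=
  univ.filter (fun z => lev G x0 z ≤ r)

lemma exists_lev_sub (hconn : G.Connected) :
    ∀ (d k : ℕ) (z : V), lev G x0 z = k + d → ∃ w, lev G x0 w = k := by
  intro d
  induction d with
  | zero => exact fun k z hz => ⟨z, by omega⟩
  | succ d ih =>
      intro k z hz
      obtain ⟨s, hs1, hs2⟩ := exists_parent hconn (x0 := x0) (t := z) (by omega)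
      exact ih k s (by omega)

lemma ball_growth (hconn : G.Connected) (r : ℕ) :
    min (r + 1) (Fintype.card V) ≤ (Bf G x0 r).card := by
  classical
  induction r with
  | zero =>
      have : x0 ∈ Bf G x0 0 := by simp [Bf, lev_x0]
      have h1 : 1 ≤ (Bf G x0 0).card := Finset.card_pos.mpr ⟨x0, this⟩
      have h2 : 1 ≤ Fintype.card V := Fintype.card_pos_iff.mpr ⟨x0⟩
      omega
  | succ r ih =>
      by_cases hfull : Fintype.card V ≤ (Bf G x0 r).card
      · have hsub : Bf G x0 r ⊆ Bf G x0 (r+1) := by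
          intro z hz
          simp only [Bf, Finset.mem_filter] at hz ⊢
          exact ⟨hz.1, by omega⟩
        have := Finset.card_le_card hsub
        omega
      · push_neg at hfull
        have hne : Bf G x0 r ≠ univ := by
          intro h
          rw [h, Finset.card_univ] at hfull
          omega
        obtain ⟨z, hz⟩ : ∃ z, z ∉ Bf G x0 r := by
          by_contra hc
          push_neg at hc
          exact hne (Finset.eq_univ_iff_forall.mpr hc)
        have hlevz : r + 1 ≤ lev G x0 z := by
          simp only [Bf, Finset.mem_filter, Finset.mem_univ, true_and, not_le] at hz
          omega
        obtain ⟨w, hw⟩ := exists_lev_sub x0 hconn (lev G x0 z - (r+1)) (r+1) z (by omega)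
        have hwin : w ∈ Bf G x0 (r+1) := by simp [Bf, hw]
        have hwout : w ∉ Bf G x0 r := by simp [Bf, hw]
        have hsub : Bf G x0 r ⊂ Bf G x0 (r+1) := by
          constructor
          · intro u hu
            simp only [Bf, Finset.mem_filter] at hu ⊢
            exact ⟨hu.1, by omega⟩
          · intro hsup
            exact hwout (hsup hwin)
        have := Finset.card_lt_card hsub
        omega

lemma mem_Bf {r : ℕ} {z : V} : z ∈ Bf G x0 r ↔ lev G x0 z ≤ r := by
  simp [Bf]

/-- The quantitative bound: a connected cubic graph in which every edge lies in a
triangle or square, with at least 100 vertices, has `λ₁ ≤ 189 / n`. -/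
theorem lambdaOne_small_aux (hconn : G.Connected) (hcub : ∀ v, G.degree v = 3) (hTS : TS G)
    (hn : 100 ≤ Fintype.card V) :
    lambdaOne G ≤ 189 / (Fintype.card V : ℝ) := by
  classical
  obtain ⟨x0⟩ := hconn.nonempty
  set n := Fintype.card V with hndef
  -- find the balanced radius
  have hPex : ∃ r, n ≤ 3 * (Bf G x0 r).card := by
    refine ⟨n, ?_⟩
    have := ball_growth x0 hconn n
    omega
  set r1 := Nat.find hPex with hr1
  have hP : n ≤ 3 * (Bf G x0 r1).card := Nat.find_spec hPex
  have hr1pos : 1 ≤ r1 := by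
    rcases Nat.eq_zero_or_pos r1 with h | h
    · exfalso
      have := hP
      rw [h] at this
      have hB0 : Bf G x0 0 ⊆ {x0} := by
        intro z hz
        rw [mem_Bf] at hz
        simp [lev_eq_zero hconn (by omega : lev G x0 z = 0)]
      have := Finset.card_le_card hB0
      simp at this
      omega
    · omega
  obtain ⟨r0, hr0⟩ : ∃ r0, r1 = r0 + 1 := ⟨r1 - 1, by omega⟩
  have hnotP : ¬ n ≤ 3 * (Bf G x0 r0).card := by
    rw [hr0] at hr1
    exact Nat.find_min hPex (by omega)
  set A := Bf G x0 (r0 + 1) with hA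
  have hAcard : n ≤ 3 * A.card := by rw [hA, ← hr0]; exact hP
  -- A is not much larger than Bf r0
  have hAsplit : A.card ≤ (Bf G x0 r0).card + 7 := by
    have hsub : A ⊆ Bf G x0 r0 ∪ sph G x0 (r0 + 1) := by
      intro z hz
      rw [hA, mem_Bf] at hz
      rw [Finset.mem_union, mem_Bf, sph, Finset.mem_filter]
      rcases Nat.lt_or_ge (lev G x0 z) (r0 + 1) with h | h
      · exact Or.inl (by omega)
      · exact Or.inr ⟨Finset.mem_univ _, by omega⟩
    calc A.card ≤ (Bf G x0 r0 ∪ sph G x0 (r0+1)).card := Finset.card_le_card hsub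
    _ ≤ (Bf G x0 r0).card + (sph G x0 (r0+1)).card := Finset.card_union_le _ _
    _ ≤ (Bf G x0 r0).card + 7 := by
        have := sph_card_le x0 hconn hcub hTS (r0 + 1)
        omega
  have hAn : 3 * A.card ≤ n + 20 := by omega
  have hAcardle : A.card ≤ n := by
    rw [hndef]
    exact Finset.card_le_univ A
  set B := n - A.card with hB
  have hBcard : n ≤ 3 * B := by omega
  have hABn : A.card + B = n := by omega
  -- the test function
  set β : ℝ := (A.card : ℝ) / n with hβ
  set f : V → ℝ := fun v => (if v ∈ A then (1:ℝ) else 0) - β with hf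
  have hfval : ∀ v, f v = (if v ∈ A then (1:ℝ) else 0) - β := fun v => rfl
  have hnpos : (0:ℝ) < n := by
    have : 0 < n := by omega
    exact_mod_cast this
  have hchi : ∑ v, (if v ∈ A then (1:ℝ) else 0) = A.card := by
    rw [Finset.sum_ite_mem]
    simp
  have hf0 : ∑ v, f v = 0 := by
    rw [Finset.sum_congr rfl (fun v _ => hfval v)]
    rw [Finset.sum_sub_distrib, hchi, Finset.sum_const, Finset.card_univ, ← hndef, hβ]
    rw [nsmul_eq_mul]
    field_simp
    ring
  have hx0A : x0 ∈ A := by rw [hA, mem_Bf, lev_x0]; omega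
  have hβlt : β < 1 := by
    rw [hβ, div_lt_one hnpos]
    have : A.card < n := by omega
    exact_mod_cast this
  have hfne : f ≠ 0 := by
    intro h
    have h6 := congrFun h x0
    rw [hfval x0, if_pos hx0A] at h6
    have : (0:V → ℝ) x0 = 0 := rfl
    rw [this] at h6
    linarith
  -- the Rayleigh quotient bound
  have hdeg3 : ∀ v : V, ∑ j, (if G.Adj v j then (1:ℝ) else 0) = 3 := by
    intro v
    rw [Finset.sum_boole]
    have h5 : univ.filter (fun j => G.Adj v j) = G.neighborFinset v := by
      ext j
      simp [SimpleGraph.mem_neighborFinset]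
    rw [h5, SimpleGraph.card_neighborFinset_eq_degree, hcub]
    norm_num
  have hmemA : ∀ z : V, z ∈ A ↔ lev G x0 z ≤ r0 + 1 := fun z => mem_Bf x0
  have hrow : ∀ v : V, (∑ j, if G.Adj v j then (f v - f j)^2 else 0) ≤
      (if lev G x0 v = r0 + 1 ∨ lev G x0 v = r0 + 2 then (3:ℝ) else 0) := by
    intro v
    by_cases hv : lev G x0 v = r0 + 1 ∨ lev G x0 v = r0 + 2
    · rw [if_pos hv, ← hdeg3 v]
      apply Finset.sum_le_sum
      intro j _
      by_cases hadj : G.Adj v j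
      · rw [if_pos hadj, if_pos hadj]
        have hfv : f v - f j = (if v ∈ A then (1:ℝ) else 0) - (if j ∈ A then (1:ℝ) else 0) := by
          rw [hfval v, hfval j]; ring
        rw [hfv]
        by_cases h1 : v ∈ A <;> by_cases h2 : j ∈ A <;> simp [h1, h2] <;> norm_num
      · rw [if_neg hadj, if_neg hadj]
    · rw [if_neg hv]
      apply le_of_eq
      apply Finset.sum_eq_zero
      intro j _
      by_cases hadj : G.Adj v j
      · rw [if_pos hadj]
        have hlev := lev_trichot hconn (x0 := x0) hadj
        have heq : (v ∈ A ↔ j ∈ A) := by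
          rw [hmemA, hmemA]
          rcases Nat.lt_or_ge (lev G x0 v) (r0 + 1) with h | h
          · omega
          · have : r0 + 3 ≤ lev G x0 v := by omega
            omega
        have : f v = f j := by
          rw [hfval v, hfval j]
          by_cases h1 : v ∈ A
          · rw [if_pos h1, if_pos (heq.mp h1)]
          · rw [if_neg h1, if_neg (fun h2 => h1 (heq.mpr h2))]
        rw [this]
        ring
      · rw [if_neg hadj]
  have hq21 : ∑ v, f v * (lapMat G).mulVec f v ≤ 21 := by
    have h2q := two_quad G f
    have hS : ∑ v : V, ∑ j : V, (if G.Adj v j then (f v - f j)^2 else 0) ≤ 42 := by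
      calc ∑ v : V, ∑ j : V, (if G.Adj v j then (f v - f j)^2 else 0)
          ≤ ∑ v : V, (if lev G x0 v = r0 + 1 ∨ lev G x0 v = r0 + 2 then (3:ℝ) else 0) :=
            Finset.sum_le_sum (fun v _ => hrow v)
      _ = 3 * ((univ.filter (fun v => lev G x0 v = r0 + 1 ∨ lev G x0 v = r0 + 2)).card : ℝ) := by
            rw [← Finset.sum_filter, Finset.sum_const]
            simp [mul_comm]
      _ ≤ 42 := by
            have hsubf : univ.filter (fun v => lev G x0 v = r0 + 1 ∨ lev G x0 v = r0 + 2)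
                ⊆ sph G x0 (r0+1) ∪ sph G x0 (r0+2) := by
              intro z hz
              rw [Finset.mem_filter] at hz
              rw [Finset.mem_union, sph, sph, Finset.mem_filter, Finset.mem_filter]
              rcases hz.2 with h | h
              · exact Or.inl ⟨Finset.mem_univ _, h⟩
              · exact Or.inr ⟨Finset.mem_univ _, h⟩
            have hc1 := sph_card_le x0 hconn hcub hTS (r0+1)
            have hc2 := sph_card_le x0 hconn hcub hTS (r0+2)
            have hcle : (univ.filter (fun v => lev G x0 v = r0 + 1 ∨ lev G x0 v = r0 + 2)).card
                ≤ 14 := by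
              calc _ ≤ (sph G x0 (r0+1) ∪ sph G x0 (r0+2)).card := Finset.card_le_card hsubf
              _ ≤ (sph G x0 (r0+1)).card + (sph G x0 (r0+2)).card := Finset.card_union_le _ _
              _ ≤ 14 := by omega
            have : ((univ.filter (fun v => lev G x0 v = r0 + 1 ∨ lev G x0 v = r0 + 2)).card : ℝ)
                ≤ 14 := by exact_mod_cast hcle
            linarith
    linarith
  -- the norm lower bound
  have hker : (univ.filter (fun v => ¬ v ∈ A)).card = B := by
    have : univ.filter (fun v => ¬ v ∈ A) = univ \ A := by
      ext z; simp
    rw [this, Finset.card_sdiff_of_subset (Finset.subset_univ A), Finset.card_univ]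
  have hffA : ∑ v, f v * f v = (A.card : ℝ) * (1 - β)^2 + (B : ℝ) * β^2 := by
    rw [← Finset.sum_filter_add_sum_filter_not univ (fun v => v ∈ A)]
    have h1 : ∀ v ∈ univ.filter (fun v => v ∈ A), f v * f v = (1 - β)^2 := by
      intro v hv
      rw [Finset.mem_filter] at hv
      rw [hfval v, if_pos hv.2]
      ring
    have h2 : ∀ v ∈ univ.filter (fun v => ¬ v ∈ A), f v * f v = β^2 := by
      intro v hv
      rw [Finset.mem_filter] at hv
      rw [hfval v, if_neg hv.2]
      ring
    rw [Finset.sum_congr rfl h1, Finset.sum_congr rfl h2, Finset.sum_const, Finset.sum_const,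
      hker]
    have : univ.filter (fun v => v ∈ A) = A := by ext z; simp
    rw [this]
    simp [mul_comm]
  have hffge : (n : ℝ) / 9 ≤ ∑ v, f v * f v := by
    rw [hffA]
    have ha3 : (n:ℝ) ≤ 3 * A.card := by exact_mod_cast hAcard
    have hb3 : (n:ℝ) ≤ 3 * B := by exact_mod_cast hBcard
    have hab : (A.card : ℝ) + B = n := by exact_mod_cast hABn
    have h1mβ : 1 - β = (B:ℝ)/n := by
      rw [hβ]
      field_simp
      linarith
    rw [h1mβ, hβ]
    have hBpos : (0:ℝ) ≤ (B:ℝ) := Nat.cast_nonneg _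
    have hApos : (0:ℝ) ≤ (A.card:ℝ) := Nat.cast_nonneg _
    have key : (A.card : ℝ) * ((B:ℝ)/n)^2 + (B:ℝ) * ((A.card:ℝ)/n)^2
        = (A.card:ℝ) * B / n := by
      have hn0 : (n:ℝ) ≠ 0 := ne_of_gt hnpos
      have e : (A.card : ℝ) * ((B:ℝ)/n)^2 + (B:ℝ) * ((A.card:ℝ)/n)^2
          = (A.card:ℝ) * B * ((A.card:ℝ) + B) / n^2 := by ring
      rw [e, hab, pow_two, ← div_div, mul_div_cancel_right₀ _ hn0]
    rw [key]
    rw [div_le_div_iff₀ (by norm_num) hnpos]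
    nlinarith
  have hRay : ∑ v, f v * (lapMat G).mulVec f v ≤ (189 / n) * ∑ v, f v * f v := by
    have : (189 / (n:ℝ)) * ((n:ℝ)/9) ≤ (189 / n) * ∑ v, f v * f v := by
      apply mul_le_mul_of_nonneg_left hffge
      positivity
    have heq : (189 / (n:ℝ)) * ((n:ℝ)/9) = 21 := by
      field_simp
      norm_num
    linarith
  exact lambdaOne_le G hconn f hf0 hfne _ hRay

end Glue
end NOE


/-- There is no family of non-negatively curved 3-regular expanders in
the Ollivier–Ricci sense: for a sequence of finite connected simple 3-regular graphs with
`|V(Gᵢ)| → ∞` and `κ₀ ≥ 0` on every edge, no `ε > 0` satisfies `λ₁(Gᵢ) ≥ ε` for all `i`;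
equivalently `liminf λ₁(Gᵢ) = 0`. -/
theorem no_ollivier_nonneg_cubic_expanders (V : ℕ → Type) [∀ i, Fintype (V i)]
    (G : ∀ i, SimpleGraph (V i)) [∀ i, ∀ v : V i, Fintype ((G i).neighborSet v)]
    (hconn : ∀ i, (G i).Connected)
    (hcubic : ∀ i (v : V i), (G i).degree v = 3)
    (hcard : Filter.Tendsto (fun i => Fintype.card (V i)) Filter.atTop Filter.atTop)
    (hcurv : ∀ i (x y : V i), (G i).Adj x y → 0 ≤ kappaZero (G i) x y) :
    (¬ ∃ ε : ℝ, 0 < ε ∧ ∀ i, ε ≤ lambdaOne (G i)) ∧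
      Filter.liminf (fun i => lambdaOne (G i)) Filter.atTop = 0 := by
  classical
  have key : ∀ i, 100 ≤ Fintype.card (V i) →
      lambdaOne (G i) ≤ 189 / (Fintype.card (V i) : ℝ) := by
    intro i hn
    have hTS : NOE.TS (G i) := NOE.TS_of_kappa (G i) (hconn i) (hcubic i) (hcurv i)
    refine NOE.lambdaOne_small_aux (hconn i) (fun v => ?_) hTS hn
    convert hcubic i v using 2 <;> exact Subsingleton.elim _ _
  have h1 : ¬ ∃ ε : ℝ, 0 < ε ∧ ∀ i, ε ≤ lambdaOne (G i) := by
    rintro ⟨ε, hε, hall⟩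
    obtain ⟨i, hi⟩ :=
      (hcard.eventually_ge_atTop (max 100 (⌈(189:ℝ)/ε⌉₊ + 1))).exists
    have hn : 100 ≤ Fintype.card (V i) := le_trans (le_max_left _ _) hi
    have hkey := key i hn
    have hcpos : (0:ℝ) < (Fintype.card (V i) : ℝ) := by
      exact_mod_cast (by omega : 0 < Fintype.card (V i))
    have hlt : 189 / (Fintype.card (V i) : ℝ) < ε := by
      have h2 : (⌈(189:ℝ)/ε⌉₊ + 1 : ℕ) ≤ Fintype.card (V i) :=
        le_trans (le_max_right _ _) hi
      have h3 : (189:ℝ)/ε < (Fintype.card (V i) : ℝ) := by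
        calc (189:ℝ)/ε ≤ ⌈(189:ℝ)/ε⌉₊ := Nat.le_ceil _
        _ < _ := by exact_mod_cast h2
      rw [div_lt_iff₀ hε] at h3
      rw [div_lt_iff₀ hcpos]
      linarith
    have := hall i
    linarith
  refine ⟨h1, ?_⟩
  have h2 : Filter.Tendsto (fun i => lambdaOne (G i)) Filter.atTop (nhds 0) := by
    refine squeeze_zero' (g := fun i => 189 / (Fintype.card (V i) : ℝ))
      (Filter.Eventually.of_forall (fun i => NOE.lambdaOne_nonneg (G i))) ?_ ?_
    · filter_upwards [hcard.eventually_ge_atTop 100] with i hi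
      exact key i hi
    · have hd : Filter.Tendsto (fun m : ℕ => (189:ℝ) / m) Filter.atTop (nhds 0) :=
        tendsto_const_div_atTop_nhds_zero_nat 189
      exact hd.comp hcard
  exact h2.liminf_eq
end

section
/- Let G be a finite simple 3-regular triangle-free graph in which every edge lies on a 4-cycle, and suppose G contains the ladder L_n (n ≥ 3) as a subgraph on vertices a_1,…,a_n,b_1,…,b_n with edges a_i a_{i+1}, b_i b_{i+1} (1 ≤ i ≤ n−1) and a_i b_i (1 ≤ i ≤ n), where the vertices a_2,…,a_{n−1},b_2,…,b_{n−1} already have all three of their neighbours inside the ladder. Then exactly one of the following holds: (i) a_1 ∼ a_n and b_1 ∼ b_n (so G contains and equals the prism Y_n), (ii) a_1 ∼ b_n and b_1 ∼ a_n (so G contains and equals the Möbius ladder M_n), or (iii) G contains the ladder L_{n+1} as a subgraph extending the given one. -/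
open Finset

variable {V : Type*}

lemma nbr_of_deg3 (G : SimpleGraph V) [∀ v, Fintype (G.neighborSet v)] {v x y z : V}
    (hd : G.degree v = 3) (hxy : x ≠ y) (hxz : x ≠ z) (hyz : y ≠ z)
    (hx : G.Adj v x) (hy : G.Adj v y) (hz : G.Adj v z) :
    ∀ w, G.Adj v w → w = x ∨ w = y ∨ w = z := by
  classical
  have hsub : ({x, y, z} : Finset V) ⊆ G.neighborFinset v := by
    intro w hw
    simp only [mem_insert, mem_singleton] at hw
    rcases hw with rfl | rfl | rfl <;> simpa [SimpleGraph.mem_neighborFinset]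
  have hcard : ({x, y, z} : Finset V).card = 3 := by
    rw [card_insert_of_notMem (by simp [hxy, hxz]), card_insert_of_notMem (by simp [hyz]),
      card_singleton]
  have heq : ({x, y, z} : Finset V) = G.neighborFinset v :=
    Finset.eq_of_subset_of_card_le hsub (by
      rw [SimpleGraph.card_neighborFinset_eq_degree, hd, hcard])
  intro w hw
  have : w ∈ ({x, y, z} : Finset V) := heq ▸ (G.mem_neighborFinset v w).2 hw
  simpa using this

lemma third_nbr (G : SimpleGraph V) [∀ v, Fintype (G.neighborSet v)] {v x y : V}
    (hd : G.degree v = 3) (hxy : x ≠ y) (hx : G.Adj v x) (hy : G.Adj v y) :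
    ∃ z, G.Adj v z ∧ z ≠ x ∧ z ≠ y ∧ ∀ w, G.Adj v w → w = x ∨ w = y ∨ w = z := by
  classical
  have hsub : ({x, y} : Finset V) ⊆ G.neighborFinset v := by
    intro w hw
    simp only [mem_insert, mem_singleton] at hw
    rcases hw with rfl | rfl <;> simpa [SimpleGraph.mem_neighborFinset]
  have hcard : ({x, y} : Finset V).card = 2 := by
    rw [card_insert_of_notMem (by simp [hxy]), card_singleton]
  have hne : (G.neighborFinset v \ {x, y}).Nonempty := by
    rw [← Finset.card_pos, Finset.card_sdiff_of_subset hsub, SimpleGraph.card_neighborFinset_eq_degree,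
      hd, hcard]
    norm_num
  obtain ⟨z, hz⟩ := hne
  rw [Finset.mem_sdiff] at hz
  obtain ⟨hz1, hz2⟩ := hz
  simp only [mem_insert, mem_singleton, not_or] at hz2
  have hadj : G.Adj v z := (G.mem_neighborFinset v z).1 hz1
  exact ⟨z, hadj, hz2.1, hz2.2,
    nbr_of_deg3 G hd hxy (Ne.symm hz2.1) (Ne.symm hz2.2) hx hy hadj⟩

lemma ladder_class (G : SimpleGraph V)
    (n : ℕ) (hn : 3 ≤ n) (a b : ℕ → V)
    (ha_inj : ∀ i < n, ∀ j < n, a i = a j → i = j)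
    (hab : ∀ i < n, ∀ j < n, a i ≠ b j)
    (hsata : ∀ i, 0 < i → i + 1 < n →
      ∀ w : V, G.Adj (a i) w → w = a (i - 1) ∨ w = a (i + 1) ∨ w = b i)
    (hsatb : ∀ i, 0 < i → i + 1 < n →
      ∀ w : V, G.Adj (b i) w → w = b (i - 1) ∨ w = b (i + 1) ∨ w = a i)
    {x : V} (hx : G.Adj (a (n - 1)) x) (hx1 : x ≠ a (n - 2)) (hx2 : x ≠ b (n - 1)) :
    x = a 0 ∨ x = b 0 ∨ (∀ i < n, x ≠ a i ∧ x ≠ b i) := by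
  by_cases hxa0 : x = a 0
  · exact Or.inl hxa0
  by_cases hxb0 : x = b 0
  · exact Or.inr (Or.inl hxb0)
  refine Or.inr (Or.inr fun i hi => ⟨?_, ?_⟩)
  · intro h
    subst h
    rcases Nat.eq_zero_or_pos i with rfl | hi0
    · exact hxa0 rfl
    rcases eq_or_lt_of_le (Nat.succ_le_of_lt hi) with hie | hilt
    · -- i + 1 = n, i.e. i = n - 1
      have : a i = a (n - 1) := by congr 1; omega
      rw [this] at hx
      exact G.irrefl hx
    · rcases hsata i hi0 hilt (a (n - 1)) hx.symm with h1 | h1 | h1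
      · have := ha_inj (n - 1) (by omega) (i - 1) (by omega) h1
        omega
      · have := ha_inj (n - 1) (by omega) (i + 1) (by omega) h1
        exact hx1 (by congr 1; omega)
      · exact hab (n - 1) (by omega) i hi h1
  · intro h
    subst h
    rcases Nat.eq_zero_or_pos i with rfl | hi0
    · exact hxb0 rfl
    rcases eq_or_lt_of_le (Nat.succ_le_of_lt hi) with hie | hilt
    · exact hx2 (by congr 1; omega)
    · rcases hsatb i hi0 hilt (a (n - 1)) hx.symm with h1 | h1 | h1
      · exact hab (n - 1) (by omega) (i - 1) (by omega) h1
      · exact hab (n - 1) (by omega) (i + 1) (by omega) h1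
      · have := ha_inj (n - 1) (by omega) i hi h1
        omega

lemma three_le_degree (G : SimpleGraph V) [∀ v, Fintype (G.neighborSet v)] {v x y z : V}
    (hxy : x ≠ y) (hxz : x ≠ z) (hyz : y ≠ z)
    (hx : G.Adj v x) (hy : G.Adj v y) (hz : G.Adj v z) : 3 ≤ G.degree v := by
  classical
  have hsub : ({x, y, z} : Finset V) ⊆ G.neighborFinset v := by
    intro w hw
    simp only [mem_insert, mem_singleton] at hw
    rcases hw with rfl | rfl | rfl <;> simpa [SimpleGraph.mem_neighborFinset]
  have hcard : ({x, y, z} : Finset V).card = 3 := by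
    rw [card_insert_of_notMem (by simp [hxy, hxz]), card_insert_of_notMem (by simp [hyz]),
      card_singleton]
  calc 3 = ({x, y, z} : Finset V).card := hcard.symm
    _ ≤ (G.neighborFinset v).card := Finset.card_le_card hsub
    _ = G.degree v := G.card_neighborFinset_eq_degree v

noncomputable def iso_of_equiv_hom {α β : Type*} (G : SimpleGraph α) (H : SimpleGraph β)
    [∀ v, Fintype (G.neighborSet v)] [∀ v, Fintype (H.neighborSet v)]
    (e : α ≃ β) (hhom : ∀ v w, G.Adj v w → H.Adj (e v) (e w))
    (hdeg : ∀ v, H.degree (e v) ≤ G.degree v) : G ≃g H := by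
  classical
  have key : ∀ v : α, H.neighborFinset (e v) = (G.neighborFinset v).image e := by
    intro v
    refine (Finset.eq_of_subset_of_card_le ?_ ?_).symm
    · intro w hw
      obtain ⟨u, hu, rfl⟩ := Finset.mem_image.1 hw
      exact (H.mem_neighborFinset _ _).2 (hhom v u ((G.mem_neighborFinset v u).1 hu))
    · rw [Finset.card_image_of_injective _ e.injective,
        SimpleGraph.card_neighborFinset_eq_degree, SimpleGraph.card_neighborFinset_eq_degree]
      exact hdeg v
  refine ⟨e, ?_⟩
  intro v w
  constructor
  · intro h
    have : e w ∈ H.neighborFinset (e v) := (H.mem_neighborFinset _ _).2 h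
    rw [key] at this
    obtain ⟨u, hu, hue⟩ := Finset.mem_image.1 this
    have : u = w := e.injective hue
    subst this
    exact (G.mem_neighborFinset _ _).1 hu
  · exact hhom v w

lemma ladder_surj (G : SimpleGraph V) (hconn : G.Connected)
    (n : ℕ) (hn : 0 < n) (a b : ℕ → V)
    (hstep : ∀ u, (∃ i, i < n ∧ (u = a i ∨ u = b i)) → ∀ w, G.Adj u w →
      ∃ i, i < n ∧ (w = a i ∨ w = b i)) :
    ∀ v, ∃ i, i < n ∧ (v = a i ∨ v = b i) := by
  have key : ∀ (u v : V) (_ : G.Walk u v), (∃ i, i < n ∧ (u = a i ∨ u = b i)) →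
      ∃ i, i < n ∧ (v = a i ∨ v = b i) := by
    intro u v p
    induction p with
    | nil => exact id
    | cons h q ih => exact fun hu => ih (hstep _ hu _ h)
  intro v
  exact (hconn (a 0) v).elim fun p => key _ _ p ⟨0, hn, Or.inl rfl⟩

lemma ladder_closed (G : SimpleGraph V)
    (n : ℕ) (hn : 3 ≤ n) (a b : ℕ → V)
    (hsata : ∀ i, 0 < i → i + 1 < n →
      ∀ w : V, G.Adj (a i) w → w = a (i - 1) ∨ w = a (i + 1) ∨ w = b i)
    (hsatb : ∀ i, 0 < i → i + 1 < n →
      ∀ w : V, G.Adj (b i) w → w = b (i - 1) ∨ w = b (i + 1) ∨ w = a i)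
    (sat_a0 : ∀ w, G.Adj (a 0) w → ∃ i, i < n ∧ (w = a i ∨ w = b i))
    (sat_b0 : ∀ w, G.Adj (b 0) w → ∃ i, i < n ∧ (w = a i ∨ w = b i))
    (sat_am : ∀ w, G.Adj (a (n - 1)) w → ∃ i, i < n ∧ (w = a i ∨ w = b i))
    (sat_bm : ∀ w, G.Adj (b (n - 1)) w → ∃ i, i < n ∧ (w = a i ∨ w = b i)) :
    ∀ u, (∃ i, i < n ∧ (u = a i ∨ u = b i)) → ∀ w, G.Adj u w →
      ∃ i, i < n ∧ (w = a i ∨ w = b i) := by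
  rintro u ⟨i, hi, rfl | rfl⟩ w hw
  · rcases Nat.eq_zero_or_pos i with rfl | hi0
    · exact sat_a0 w hw
    rcases eq_or_lt_of_le (Nat.succ_le_of_lt hi) with hie | hilt
    · have : a i = a (n - 1) := by congr 1; omega
      rw [this] at hw
      exact sat_am w hw
    · rcases hsata i hi0 hilt w hw with rfl | rfl | rfl
      · exact ⟨i - 1, by omega, Or.inl rfl⟩
      · exact ⟨i + 1, by omega, Or.inl rfl⟩
      · exact ⟨i, hi, Or.inr rfl⟩
  · rcases Nat.eq_zero_or_pos i with rfl | hi0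
    · exact sat_b0 w hw
    rcases eq_or_lt_of_le (Nat.succ_le_of_lt hi) with hie | hilt
    · have : b i = b (n - 1) := by congr 1; omega
      rw [this] at hw
      exact sat_bm w hw
    · rcases hsatb i hi0 hilt w hw with rfl | rfl | rfl
      · exact ⟨i - 1, by omega, Or.inr rfl⟩
      · exact ⟨i + 1, by omega, Or.inr rfl⟩
      · exact ⟨i, hi, Or.inl rfl⟩

section Helpers
variable (G : SimpleGraph V) [∀ v, Fintype (G.neighborSet v)]

lemma ladder_H2
    (hcubic : ∀ v : V, G.degree v = 3)
    (htrianglefree : G.CliqueFree 3)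
    (hsquares : ∀ x y : V, G.Adj x y →
      ∃ u v : V, G.Adj x u ∧ G.Adj u v ∧ G.Adj v y ∧ u ≠ y ∧ v ≠ x)
    (n : ℕ) (hn : 3 ≤ n) (a b : ℕ → V)
    (ha_inj : ∀ i < n, ∀ j < n, a i = a j → i = j)
    (hb_inj : ∀ i < n, ∀ j < n, b i = b j → i = j)
    (hab : ∀ i < n, ∀ j < n, a i ≠ b j)
    (hrung : ∀ i < n, G.Adj (a i) (b i))
    (hraila : ∀ i, i + 1 < n → G.Adj (a i) (a (i + 1)))
    (hrailb : ∀ i, i + 1 < n → G.Adj (b i) (b (i + 1)))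
    (hsata : ∀ i, 0 < i → i + 1 < n →
      ∀ w : V, G.Adj (a i) w → w = a (i - 1) ∨ w = a (i + 1) ∨ w = b i)
    (hsatb : ∀ i, 0 < i → i + 1 < n →
      ∀ w : V, G.Adj (b i) w → w = b (i - 1) ∨ w = b (i + 1) ∨ w = a i)
    (haA : G.Adj (a (n - 1)) (a 0))
    {b' : V} (hb'adj : G.Adj (b (n - 1)) b') (hb'1 : b' ≠ b (n - 2))
    (hb'2 : b' ≠ a (n - 1)) : b' = b 0 := by
  classical
  -- first, n ≥ 4
  have hn4 : 4 ≤ n := by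
    by_contra hc
    have h3 : n = 3 := by omega
    subst h3
    exact htrianglefree {a 0, a 1, a 2}
      (SimpleGraph.is3Clique_triple_iff.2
        ⟨hraila 0 (by omega), haA.symm, hraila 1 (by omega)⟩)
  have hAm2 : G.Adj (a (n - 1)) (a (n - 2)) := by
    have h := hraila (n - 2) (by omega)
    rw [show n - 2 + 1 = n - 1 from by omega] at h
    exact h.symm
  have hBm2 : G.Adj (b (n - 1)) (b (n - 2)) := by
    have h := hrailb (n - 2) (by omega)
    rw [show n - 2 + 1 = n - 1 from by omega] at h
    exact h.symm
  have satA : ∀ w, G.Adj (a (n - 1)) w → w = a (n - 2) ∨ w = b (n - 1) ∨ w = a 0 :=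
    nbr_of_deg3 G (hcubic _)
      (hab (n - 2) (by omega) (n - 1) (by omega))
      (fun h => by have := ha_inj (n - 2) (by omega) 0 (by omega) h; omega)
      (Ne.symm (hab 0 (by omega) (n - 1) (by omega)))
      hAm2 (hrung (n - 1) (by omega)) haA
  have sat0 : ∀ w, G.Adj (a 0) w → w = a 1 ∨ w = b 0 ∨ w = a (n - 1) :=
    nbr_of_deg3 G (hcubic _)
      (hab 1 (by omega) 0 (by omega))
      (fun h => by have := ha_inj 1 (by omega) (n - 1) (by omega) h; omega)
      (Ne.symm (hab (n - 1) (by omega) 0 (by omega)))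
      (hraila 0 (by omega)) (hrung 0 (by omega)) haA.symm
  have satB : ∀ w, G.Adj (b (n - 1)) w → w = b (n - 2) ∨ w = a (n - 1) ∨ w = b' :=
    nbr_of_deg3 G (hcubic _)
      (Ne.symm (hab (n - 1) (by omega) (n - 2) (by omega)))
      hb'1.symm hb'2.symm
      hBm2 (hrung (n - 1) (by omega)).symm hb'adj
  have hb'a0 : b' ≠ a 0 := by
    intro h
    rw [h] at hb'adj
    rcases sat0 (b (n - 1)) hb'adj.symm with h1 | h1 | h1
    · exact (hab 1 (by omega) (n - 1) (by omega)) h1.symm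
    · have := hb_inj (n - 1) (by omega) 0 (by omega) h1
      omega
    · exact (hab (n - 1) (by omega) (n - 1) (by omega)) h1.symm
  by_contra hgoal
  have hout : ∀ i < n, b' ≠ b i ∧ b' ≠ a i := by
    have := ladder_class G n hn b a hb_inj
      (fun i hi j hj => (hab j hj i hi).symm) hsatb hsata hb'adj hb'1 hb'2
    rcases this with h | h | h
    · exact absurd h hgoal
    · exact absurd h hb'a0
    · exact h
  obtain ⟨u, v, h1, h2, h3, hu, hv⟩ := hsquares (b (n - 1)) b' hb'adj
  rcases satB u h1 with rfl | rfl | rfl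
  · -- u = b (n - 2)
    rcases hsatb (n - 2) (by omega) (by omega) v h2 with rfl | rfl | rfl
    · -- v = b (n - 3)
      rcases hsatb (n - 3) (by omega) (by omega) b' h3 with h4 | h4 | h4
      · exact (hout (n - 3 - 1) (by omega)).1 h4
      · exact (hout (n - 3 + 1) (by omega)).1 h4
      · exact (hout (n - 3) (by omega)).2 h4
    · exact hv (by congr 1; omega)
    · -- v = a (n - 2)
      rcases hsata (n - 2) (by omega) (by omega) b' h3 with h4 | h4 | h4
      · exact (hout (n - 2 - 1) (by omega)).2 h4
      · exact (hout (n - 2 + 1) (by omega)).2 h4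
      · exact (hout (n - 2) (by omega)).1 h4
  · -- u = a (n - 1)
    rcases satA v h2 with rfl | rfl | rfl
    · -- v = a (n - 2)
      rcases hsata (n - 2) (by omega) (by omega) b' h3 with h4 | h4 | h4
      · exact (hout (n - 2 - 1) (by omega)).2 h4
      · exact (hout (n - 2 + 1) (by omega)).2 h4
      · exact (hout (n - 2) (by omega)).1 h4
    · exact hv rfl
    · -- v = a 0
      rcases sat0 b' h3 with h4 | h4 | h4
      · exact (hout 1 (by omega)).2 h4
      · exact hgoal h4
      · exact (hout (n - 1) (by omega)).2 h4
  · exact hu rfl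

lemma ladder_H2'
    (hcubic : ∀ v : V, G.degree v = 3)
    (hsquares : ∀ x y : V, G.Adj x y →
      ∃ u v : V, G.Adj x u ∧ G.Adj u v ∧ G.Adj v y ∧ u ≠ y ∧ v ≠ x)
    (n : ℕ) (hn : 3 ≤ n) (a b : ℕ → V)
    (ha_inj : ∀ i < n, ∀ j < n, a i = a j → i = j)
    (hb_inj : ∀ i < n, ∀ j < n, b i = b j → i = j)
    (hab : ∀ i < n, ∀ j < n, a i ≠ b j)
    (hrung : ∀ i < n, G.Adj (a i) (b i))
    (hraila : ∀ i, i + 1 < n → G.Adj (a i) (a (i + 1)))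
    (hrailb : ∀ i, i + 1 < n → G.Adj (b i) (b (i + 1)))
    (hsata : ∀ i, 0 < i → i + 1 < n →
      ∀ w : V, G.Adj (a i) w → w = a (i - 1) ∨ w = a (i + 1) ∨ w = b i)
    (hsatb : ∀ i, 0 < i → i + 1 < n →
      ∀ w : V, G.Adj (b i) w → w = b (i - 1) ∨ w = b (i + 1) ∨ w = a i)
    (haB0 : G.Adj (a (n - 1)) (b 0))
    {b' : V} (hb'adj : G.Adj (b (n - 1)) b') (hb'1 : b' ≠ b (n - 2))
    (hb'2 : b' ≠ a (n - 1)) : b' = a 0 := by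
  classical
  have hBm2 : G.Adj (b (n - 1)) (b (n - 2)) := by
    have h := hrailb (n - 2) (by omega)
    rw [show n - 2 + 1 = n - 1 from by omega] at h
    exact h.symm
  have satb0 : ∀ w, G.Adj (b 0) w → w = b 1 ∨ w = a 0 ∨ w = a (n - 1) :=
    nbr_of_deg3 G (hcubic _)
      (Ne.symm (hab 0 (by omega) 1 (by omega)))
      (Ne.symm (hab (n - 1) (by omega) 1 (by omega)))
      (fun h => by have := ha_inj 0 (by omega) (n - 1) (by omega) h; omega)
      (hrailb 0 (by omega)) (hrung 0 (by omega)).symm haB0.symm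
  have satA : ∀ w, G.Adj (a (n - 1)) w → w = a (n - 2) ∨ w = b (n - 1) ∨ w = b 0 :=
    nbr_of_deg3 G (hcubic _)
      (hab (n - 2) (by omega) (n - 1) (by omega))
      (hab (n - 2) (by omega) 0 (by omega))
      (fun h => by have := hb_inj (n - 1) (by omega) 0 (by omega) h; omega)
      (by
        have h := hraila (n - 2) (by omega)
        rw [show n - 2 + 1 = n - 1 from by omega] at h
        exact h.symm)
      (hrung (n - 1) (by omega)) haB0
  have satB : ∀ w, G.Adj (b (n - 1)) w → w = b (n - 2) ∨ w = a (n - 1) ∨ w = b' :=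
    nbr_of_deg3 G (hcubic _)
      (Ne.symm (hab (n - 1) (by omega) (n - 2) (by omega)))
      hb'1.symm hb'2.symm
      hBm2 (hrung (n - 1) (by omega)).symm hb'adj
  by_contra hgoal
  have hb'b0 : b' ≠ b 0 := by
    intro h
    rw [h] at hb'adj
    rcases satb0 (b (n - 1)) hb'adj.symm with h1 | h1 | h1
    · have := hb_inj (n - 1) (by omega) 1 (by omega) h1
      omega
    · exact (hab 0 (by omega) (n - 1) (by omega)) h1.symm
    · exact (hab (n - 1) (by omega) (n - 1) (by omega)) h1.symm
  have hout : ∀ i < n, b' ≠ b i ∧ b' ≠ a i := by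
    have := ladder_class G n hn b a hb_inj
      (fun i hi j hj => (hab j hj i hi).symm) hsatb hsata hb'adj hb'1 hb'2
    rcases this with h | h | h
    · exact absurd h hb'b0
    · exact absurd h hgoal
    · exact h
  obtain ⟨u, v, h1, h2, h3, hu, hv⟩ := hsquares (b (n - 1)) b' hb'adj
  rcases satB u h1 with rfl | rfl | rfl
  · -- u = b (n - 2)
    rcases hsatb (n - 2) (by omega) (by omega) v h2 with rfl | rfl | rfl
    · -- v = b (n - 3)
      rcases Nat.lt_or_ge n 4 with hn3 | hn4
      · rw [show n - 2 - 1 = 0 from by omega] at h3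
        rcases satb0 b' h3 with h4 | h4 | h4
        · exact (hout 1 (by omega)).1 h4
        · exact hgoal h4
        · exact (hout (n - 1) (by omega)).2 h4
      · rcases hsatb (n - 3) (by omega) (by omega) b' h3 with h4 | h4 | h4
        · exact (hout (n - 3 - 1) (by omega)).1 h4
        · exact (hout (n - 3 + 1) (by omega)).1 h4
        · exact (hout (n - 3) (by omega)).2 h4
    · exact hv (by congr 1; omega)
    · -- v = a (n - 2)
      rcases hsata (n - 2) (by omega) (by omega) b' h3 with h4 | h4 | h4
      · exact (hout (n - 2 - 1) (by omega)).2 h4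
      · exact (hout (n - 2 + 1) (by omega)).2 h4
      · exact (hout (n - 2) (by omega)).1 h4
  · -- u = a (n - 1)
    rcases satA v h2 with rfl | rfl | rfl
    · rcases hsata (n - 2) (by omega) (by omega) b' h3 with h4 | h4 | h4
      · exact (hout (n - 2 - 1) (by omega)).2 h4
      · exact (hout (n - 2 + 1) (by omega)).2 h4
      · exact (hout (n - 2) (by omega)).1 h4
    · exact hv rfl
    · rcases satb0 b' h3 with h4 | h4 | h4
      · exact (hout 1 (by omega)).1 h4
      · exact hgoal h4
      · exact (hout (n - 1) (by omega)).2 h4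
  · exact hu rfl

lemma ladder_H3
    (hcubic : ∀ v : V, G.degree v = 3)
    (hsquares : ∀ x y : V, G.Adj x y →
      ∃ u v : V, G.Adj x u ∧ G.Adj u v ∧ G.Adj v y ∧ u ≠ y ∧ v ≠ x)
    (n : ℕ) (hn : 3 ≤ n) (a b : ℕ → V)
    (ha_inj : ∀ i < n, ∀ j < n, a i = a j → i = j)
    (hb_inj : ∀ i < n, ∀ j < n, b i = b j → i = j)
    (hab : ∀ i < n, ∀ j < n, a i ≠ b j)
    (hrung : ∀ i < n, G.Adj (a i) (b i))
    (hraila : ∀ i, i + 1 < n → G.Adj (a i) (a (i + 1)))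
    (hrailb : ∀ i, i + 1 < n → G.Adj (b i) (b (i + 1)))
    (hsata : ∀ i, 0 < i → i + 1 < n →
      ∀ w : V, G.Adj (a i) w → w = a (i - 1) ∨ w = a (i + 1) ∨ w = b i)
    (hsatb : ∀ i, 0 < i → i + 1 < n →
      ∀ w : V, G.Adj (b i) w → w = b (i - 1) ∨ w = b (i + 1) ∨ w = a i)
    {a' b' : V}
    (ha'adj : G.Adj (a (n - 1)) a') (ha'1 : a' ≠ a (n - 2)) (ha'2 : a' ≠ b (n - 1))
    (hb'adj : G.Adj (b (n - 1)) b') (hb'1 : b' ≠ b (n - 2)) (hb'2 : b' ≠ a (n - 1))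
    (haout : ∀ i < n, a' ≠ a i ∧ a' ≠ b i) (hbout : ∀ i < n, b' ≠ b i ∧ b' ≠ a i) :
    G.Adj a' b' := by
  classical
  by_contra hnadj
  have hAm2 : G.Adj (a (n - 1)) (a (n - 2)) := by
    have h := hraila (n - 2) (by omega)
    rw [show n - 2 + 1 = n - 1 from by omega] at h
    exact h.symm
  have hBm2 : G.Adj (b (n - 1)) (b (n - 2)) := by
    have h := hrailb (n - 2) (by omega)
    rw [show n - 2 + 1 = n - 1 from by omega] at h
    exact h.symm
  have satA : ∀ w, G.Adj (a (n - 1)) w → w = a (n - 2) ∨ w = b (n - 1) ∨ w = a' :=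
    nbr_of_deg3 G (hcubic _)
      (hab (n - 2) (by omega) (n - 1) (by omega))
      ha'1.symm ha'2.symm
      hAm2 (hrung (n - 1) (by omega)) ha'adj
  have satB : ∀ w, G.Adj (b (n - 1)) w → w = b (n - 2) ∨ w = a (n - 1) ∨ w = b' :=
    nbr_of_deg3 G (hcubic _)
      (Ne.symm (hab (n - 1) (by omega) (n - 2) (by omega)))
      hb'1.symm hb'2.symm
      hBm2 (hrung (n - 1) (by omega)).symm hb'adj
  -- step 1 : n = 3 and a 0 adjacent to a'
  have step1 : n = 3 ∧ G.Adj (a 0) a' := by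
    obtain ⟨u, v, h1, h2, h3, hu, hv⟩ := hsquares (a (n - 1)) a' ha'adj
    rcases satA u h1 with rfl | rfl | rfl
    · -- u = a (n - 2)
      rcases hsata (n - 2) (by omega) (by omega) v h2 with rfl | rfl | rfl
      · -- v = a (n - 2 - 1)
        rcases Nat.lt_or_ge n 4 with hn3 | hn4
        · rw [show n - 2 - 1 = 0 from by omega] at h3
          exact ⟨by omega, h3⟩
        · exfalso
          rcases hsata (n - 2 - 1) (by omega) (by omega) a' h3 with h4 | h4 | h4
          · exact (haout (n - 2 - 1 - 1) (by omega)).1 h4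
          · exact (haout (n - 2 - 1 + 1) (by omega)).1 h4
          · exact (haout (n - 2 - 1) (by omega)).2 h4
      · exact absurd (by congr 1; omega) hv
      · exfalso
        rcases hsatb (n - 2) (by omega) (by omega) a' h3 with h4 | h4 | h4
        · exact (haout (n - 2 - 1) (by omega)).2 h4
        · exact (haout (n - 2 + 1) (by omega)).2 h4
        · exact (haout (n - 2) (by omega)).1 h4
    · -- u = b (n - 1)
      exfalso
      rcases satB v h2 with rfl | rfl | rfl
      · rcases hsatb (n - 2) (by omega) (by omega) a' h3 with h4 | h4 | h4
        · exact (haout (n - 2 - 1) (by omega)).2 h4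
        · exact (haout (n - 2 + 1) (by omega)).2 h4
        · exact (haout (n - 2) (by omega)).1 h4
      · exact hv rfl
      · exact hnadj h3.symm
    · exact absurd rfl hu
  -- step 2 : b 0 adjacent to b'
  have step2 : G.Adj (b 0) b' := by
    obtain ⟨u, v, h1, h2, h3, hu, hv⟩ := hsquares (b (n - 1)) b' hb'adj
    rcases satB u h1 with rfl | rfl | rfl
    · rcases hsatb (n - 2) (by omega) (by omega) v h2 with rfl | rfl | rfl
      · rcases Nat.lt_or_ge n 4 with hn3 | hn4
        · rw [show n - 2 - 1 = 0 from by omega] at h3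
          exact h3
        · exfalso
          rcases hsatb (n - 2 - 1) (by omega) (by omega) b' h3 with h4 | h4 | h4
          · exact (hbout (n - 2 - 1 - 1) (by omega)).1 h4
          · exact (hbout (n - 2 - 1 + 1) (by omega)).1 h4
          · exact (hbout (n - 2 - 1) (by omega)).2 h4
      · exact absurd (by congr 1; omega) hv
      · exfalso
        rcases hsata (n - 2) (by omega) (by omega) b' h3 with h4 | h4 | h4
        · exact (hbout (n - 2 - 1) (by omega)).2 h4
        · exact (hbout (n - 2 + 1) (by omega)).2 h4
        · exact (hbout (n - 2) (by omega)).1 h4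
    · exfalso
      rcases satA v h2 with rfl | rfl | rfl
      · rcases hsata (n - 2) (by omega) (by omega) b' h3 with h4 | h4 | h4
        · exact (hbout (n - 2 - 1) (by omega)).2 h4
        · exact (hbout (n - 2 + 1) (by omega)).2 h4
        · exact (hbout (n - 2) (by omega)).1 h4
      · exact hv rfl
      · exact hnadj h3
    · exact absurd rfl hu
  obtain ⟨hn3, ha0⟩ := step1
  subst hn3
  -- now n = 3
  have sat_a0 : ∀ w, G.Adj (a 0) w → w = a 1 ∨ w = b 0 ∨ w = a' :=
    nbr_of_deg3 G (hcubic _)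
      (hab 1 (by omega) 0 (by omega))
      (fun h => (haout 1 (by omega)).1 h.symm)
      (fun h => (haout 0 (by omega)).2 h.symm)
      (hraila 0 (by omega)) (hrung 0 (by omega)) ha0
  have sat_b0 : ∀ w, G.Adj (b 0) w → w = b 1 ∨ w = a 0 ∨ w = b' :=
    nbr_of_deg3 G (hcubic _)
      (Ne.symm (hab 0 (by omega) 1 (by omega)))
      (fun h => (hbout 1 (by omega)).1 h.symm)
      (fun h => (hbout 0 (by omega)).2 h.symm)
      (hrailb 0 (by omega)) (hrung 0 (by omega)).symm step2
  have sat_a1 := hsata 1 (by omega) (by omega)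
  have sat_b1 := hsatb 1 (by omega) (by omega)
  obtain ⟨t, hta, ht2, ht0, sat_a'⟩ :=
    third_nbr G (hcubic a')
      (fun h : a (3 - 1) = a 0 => by have := ha_inj 2 (by omega) 0 (by omega) h; omega)
      ha'adj.symm ha0.symm
  have hb1t : t ≠ b 1 := by
    intro h
    rw [h] at hta
    rcases sat_b1 a' hta.symm with h4 | h4 | h4
    · exact (haout 0 (by omega)).2 h4
    · exact (haout 2 (by omega)).2 h4
    · exact (haout 1 (by omega)).1 h4
  obtain ⟨u, v, h1, h2, h3, hu, hv⟩ := hsquares a' t hta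
  rcases sat_a' u h1 with rfl | rfl | rfl
  · -- u = a (3 - 1) = a 2
    rcases satA v h2 with rfl | rfl | rfl
    · -- v = a 1
      rcases sat_a1 t h3 with h4 | h4 | h4
      · exact ht0 h4
      · exact ht2 h4
      · exact hb1t h4
    · -- v = b 2
      rcases satB t h3 with h4 | h4 | h4
      · exact hb1t h4
      · exact ht2 h4
      · rw [h4] at hta; exact hnadj hta
    · exact hv rfl
  · -- u = a 0
    rcases sat_a0 v h2 with rfl | rfl | rfl
    · rcases sat_a1 t h3 with h4 | h4 | h4
      · exact ht0 h4
      · exact ht2 h4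
      · exact hb1t h4
    · -- v = b 0
      rcases sat_b0 t h3 with h4 | h4 | h4
      · exact hb1t h4
      · exact ht0 h4
      · rw [h4] at hta; exact hnadj hta
    · exact hv rfl
  · exact hu rfl

lemma prism_iso (G : SimpleGraph V) [∀ v, Fintype (G.neighborSet v)]
    (hcubic : ∀ v : V, G.degree v = 3)
    (n : ℕ) (hn : 3 ≤ n) (a b : ℕ → V)
    (ha_inj : ∀ i < n, ∀ j < n, a i = a j → i = j)
    (hb_inj : ∀ i < n, ∀ j < n, b i = b j → i = j)
    (hab : ∀ i < n, ∀ j < n, a i ≠ b j)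
    (hrung : ∀ i < n, G.Adj (a i) (b i))
    (hraila : ∀ i, i + 1 < n → G.Adj (a i) (a (i + 1)))
    (hrailb : ∀ i, i + 1 < n → G.Adj (b i) (b (i + 1)))
    (hwa : G.Adj (a (n - 1)) (a 0)) (hwb : G.Adj (b (n - 1)) (b 0))
    (hsurj : ∀ v, ∃ i, i < n ∧ (v = a i ∨ v = b i)) :
    Nonempty (G ≃g prismGraph n) := by
  classical
  haveI : NeZero n := ⟨by omega⟩
  haveI : Fact (1 < n) := ⟨by omega⟩
  have hone : (1 : ZMod n) ≠ 0 := by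
    intro h
    rw [← Nat.cast_one, ZMod.natCast_eq_zero_iff] at h
    have := Nat.le_of_dvd (by norm_num) h
    omega
  have htwo : (2 : ZMod n) ≠ 0 := by
    intro h
    rw [← Nat.cast_ofNat, ZMod.natCast_eq_zero_iff] at h
    have := Nat.le_of_dvd (by norm_num) h
    omega
  let f : ZMod n × Bool → V := fun p => if p.2 then b p.1.val else a p.1.val
  have hf : ∀ p : ZMod n × Bool, f p = if p.2 then b p.1.val else a p.1.val :=
    fun _ => rfl
  have hinj : Function.Injective f := by
    rintro ⟨i, s⟩ ⟨j, t⟩ h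
    cases s <;> cases t <;> simp only [hf, if_true, if_false, Bool.false_eq_true] at h
    · have := ha_inj i.val (ZMod.val_lt i) j.val (ZMod.val_lt j) h
      exact Prod.ext (ZMod.val_injective n this) rfl
    · exact absurd h (hab i.val (ZMod.val_lt i) j.val (ZMod.val_lt j))
    · exact absurd h.symm (hab j.val (ZMod.val_lt j) i.val (ZMod.val_lt i))
    · have := hb_inj i.val (ZMod.val_lt i) j.val (ZMod.val_lt j) h
      exact Prod.ext (ZMod.val_injective n this) rfl
  have hsurj' : Function.Surjective f := by
    intro v
    obtain ⟨i, hi, rfl | rfl⟩ := hsurj v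
    · exact ⟨((i : ZMod n), false), by simp [hf, ZMod.val_cast_of_lt hi]⟩
    · exact ⟨((i : ZMod n), true), by simp [hf, ZMod.val_cast_of_lt hi]⟩
  -- the two basic adjacency moves
  have hom1 : ∀ (i : ZMod n) (s : Bool), G.Adj (f (i, s)) (f (i + 1, s)) := by
    intro i s
    have hv : (i + 1).val = (i.val + 1) % n := by
      rw [ZMod.val_add, ZMod.val_one]
    rcases Nat.lt_or_ge (i.val + 1) n with hlt | hge
    · have hv' : (i + 1).val = i.val + 1 := by rw [hv, Nat.mod_eq_of_lt hlt]
      cases s <;> simp only [hf, if_true, if_false, Bool.false_eq_true] <;> rw [hv']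
      · exact hraila i.val hlt
      · exact hrailb i.val hlt
    · have hival : i.val = n - 1 := by have := ZMod.val_lt i; omega
      have hv' : (i + 1).val = 0 := by
        rw [hv, hival, show n - 1 + 1 = n from by omega, Nat.mod_self]
      cases s <;> simp only [hf, if_true, if_false, Bool.false_eq_true] <;> rw [hv', hival]
      · exact hwa
      · exact hwb
  have hom2 : ∀ (i : ZMod n) (s : Bool), G.Adj (f (i, s)) (f (i, !s)) := by
    intro i s
    cases s <;> simp only [hf, if_true, if_false, Bool.not_true, Bool.not_false,
      Bool.false_eq_true]
    · exact hrung i.val (ZMod.val_lt i)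
    · exact (hrung i.val (ZMod.val_lt i)).symm
  have hom : ∀ p q, (prismGraph n).Adj p q → G.Adj (f p) (f q) := by
    rintro ⟨i, s⟩ ⟨j, t⟩ hpq
    rw [prismGraph, SimpleGraph.fromRel_adj] at hpq
    obtain ⟨hne, h | h⟩ := hpq
    · rcases h with ⟨hs, hj⟩ | ⟨hij, hst⟩
      · dsimp at hs hj; subst hs; subst hj
        exact hom1 i s
      · dsimp at hij hst; subst hij
        have ht : t = !s := Bool.eq_not_of_ne (Ne.symm hst)
        subst ht
        exact hom2 i s
    · rcases h with ⟨hs, hj⟩ | ⟨hij, hst⟩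
      · dsimp at hs hj; subst hs; subst hj
        exact (hom1 j t).symm
      · dsimp at hij hst; subst hij
        have hs : s = !t := Bool.eq_not_of_ne (Ne.symm hst)
        subst hs
        first
        | exact (hom2 i t).symm
        | exact (hom2 j t).symm
  have hdeg : ∀ p, G.degree (f p) ≤ (prismGraph n).degree p := by
    rintro ⟨i, s⟩
    rw [hcubic]
    have hadj1 : (prismGraph n).Adj (i, s) (i + 1, s) := by
      rw [prismGraph, SimpleGraph.fromRel_adj]
      refine ⟨?_, Or.inl (Or.inl ⟨rfl, rfl⟩)⟩
      intro h
      have h1 : i = i + 1 := congrArg Prod.fst h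
      exact hone (left_eq_add.mp h1)
    have hadj2 : (prismGraph n).Adj (i, s) (i - 1, s) := by
      rw [prismGraph, SimpleGraph.fromRel_adj]
      refine ⟨?_, Or.inr (Or.inl ⟨rfl, (sub_add_cancel i 1).symm⟩)⟩
      intro h
      have h1 : i = i - 1 := congrArg Prod.fst h
      exact hone (by linear_combination h1)
    have hadj3 : (prismGraph n).Adj (i, s) (i, !s) := by
      rw [prismGraph, SimpleGraph.fromRel_adj]
      refine ⟨?_, Or.inl (Or.inr ⟨rfl, by cases s <;> simp⟩)⟩
      intro h
      have h2 : s = !s := congrArg Prod.snd h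
      cases s <;> exact Bool.noConfusion h2
    refine three_le_degree (prismGraph n) ?_ ?_ ?_ hadj1 hadj2 hadj3
    · intro h
      have h1 : i + 1 = i - 1 := congrArg Prod.fst h
      apply htwo
      linear_combination h1
    · intro h
      have h2 : (s : Bool) = !s := congrArg Prod.snd h
      cases s <;> exact Bool.noConfusion h2
    · intro h
      have h2 : (s : Bool) = !s := congrArg Prod.snd h
      cases s <;> exact Bool.noConfusion h2
  exact ⟨(iso_of_equiv_hom (prismGraph n) G (Equiv.ofBijective f ⟨hinj, hsurj'⟩)
    hom hdeg).symm⟩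

lemma mobius_iso (G : SimpleGraph V) [∀ v, Fintype (G.neighborSet v)]
    (hcubic : ∀ v : V, G.degree v = 3)
    (n : ℕ) (hn : 3 ≤ n) (a b : ℕ → V)
    (ha_inj : ∀ i < n, ∀ j < n, a i = a j → i = j)
    (hb_inj : ∀ i < n, ∀ j < n, b i = b j → i = j)
    (hab : ∀ i < n, ∀ j < n, a i ≠ b j)
    (hrung : ∀ i < n, G.Adj (a i) (b i))
    (hraila : ∀ i, i + 1 < n → G.Adj (a i) (a (i + 1)))
    (hrailb : ∀ i, i + 1 < n → G.Adj (b i) (b (i + 1)))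
    (hwa : G.Adj (a (n - 1)) (b 0)) (hwb : G.Adj (b (n - 1)) (a 0))
    (hsurj : ∀ v, ∃ i, i < n ∧ (v = a i ∨ v = b i)) :
    Nonempty (G ≃g mobiusLadder n) := by
  classical
  haveI : NeZero (2 * n) := ⟨by omega⟩
  haveI : Fact (1 < 2 * n) := ⟨by omega⟩
  have hnval : ((n : ℕ) : ZMod (2 * n)).val = n := ZMod.val_cast_of_lt (by omega)
  have hcast : ∀ k : ℕ, k < 2 * n → ((k : ZMod (2 * n))).val = k :=
    fun k hk => ZMod.val_cast_of_lt hk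
  let f : ZMod (2 * n) → V := fun k => if k.val < n then a k.val else b (k.val - n)
  have hf : ∀ k : ZMod (2 * n), f k = if k.val < n then a k.val else b (k.val - n) :=
    fun _ => rfl
  have hinj : Function.Injective f := by
    intro k l h
    rw [hf, hf] at h
    have hk := ZMod.val_lt k
    have hl := ZMod.val_lt l
    split_ifs at h with h1 h2 h2
    · exact ZMod.val_injective _ (ha_inj k.val h1 l.val h2 h)
    · exact absurd h (hab k.val h1 (l.val - n) (by omega))
    · exact absurd h.symm (hab l.val h2 (k.val - n) (by omega))
    · have : k.val - n = l.val - n := hb_inj (k.val - n) (by omega) (l.val - n) (by omega) h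
      exact ZMod.val_injective _ (by omega)
  have hsurj' : Function.Surjective f := by
    intro v
    obtain ⟨i, hi, rfl | rfl⟩ := hsurj v
    · refine ⟨(i : ZMod (2 * n)), ?_⟩
      rw [hf, hcast i (by omega), if_pos hi]
    · refine ⟨((n + i : ℕ) : ZMod (2 * n)), ?_⟩
      rw [hf, hcast (n + i) (by omega), if_neg (by omega)]
      congr 1
      omega
  -- basic adjacency moves
  have hom1 : ∀ p : ZMod (2 * n), G.Adj (f p) (f (p + 1)) := by
    intro p
    have hp := ZMod.val_lt p
    have hv : (p + 1).val = (p.val + 1) % (2 * n) := by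
      rw [ZMod.val_add, ZMod.val_one]
    rcases Nat.lt_or_ge (p.val + 1) (2 * n) with hlt | hge
    · have hv' : (p + 1).val = p.val + 1 := by rw [hv, Nat.mod_eq_of_lt hlt]
      rcases Nat.lt_or_ge (p.val + 1) n with h1 | h1
      · rw [hf, hf, hv', if_pos (by omega), if_pos h1]
        exact hraila p.val h1
      · rcases Nat.lt_or_ge p.val n with h2 | h2
        · -- p.val = n - 1, p+1 ↦ b 0
          rw [hf, hf, hv', if_pos h2, if_neg (by omega)]
          have e1 : p.val = n - 1 := by omega
          have e2 : p.val + 1 - n = 0 := by omega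
          rw [e2, e1]
          exact hwa
        · rw [hf, hf, hv', if_neg (by omega), if_neg (by omega)]
          have e2 : p.val + 1 - n = (p.val - n) + 1 := by omega
          rw [e2]
          exact hrailb (p.val - n) (by omega)
    · -- p.val = 2n - 1, wraps to 0
      have e1 : p.val = 2 * n - 1 := by omega
      have hv' : (p + 1).val = 0 := by
        rw [hv, e1, show 2 * n - 1 + 1 = 2 * n from by omega, Nat.mod_self]
      rw [hf, hf, hv', if_neg (by omega), if_pos (by omega)]
      have e2 : p.val - n = n - 1 := by omega
      rw [e2]
      exact hwb
  have hom2 : ∀ p : ZMod (2 * n), G.Adj (f p) (f (p + (n : ZMod (2 * n)))) := by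
    intro p
    have hp := ZMod.val_lt p
    have hv : (p + (n : ZMod (2 * n))).val = (p.val + n) % (2 * n) := by
      rw [ZMod.val_add, hnval]
    rcases Nat.lt_or_ge p.val n with h1 | h1
    · have hv' : (p + (n : ZMod (2 * n))).val = p.val + n := by
        rw [hv, Nat.mod_eq_of_lt (by omega)]
      rw [hf, hf, hv', if_pos h1, if_neg (by omega)]
      have e : p.val + n - n = p.val := by omega
      rw [e]
      exact hrung p.val h1
    · have hv' : (p + (n : ZMod (2 * n))).val = p.val - n := by
        rw [hv, show p.val + n = (p.val - n) + 1 * (2 * n) from by omega,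
          Nat.add_mul_mod_self_right, Nat.mod_eq_of_lt (by omega)]
      rw [hf, hf, hv', if_neg (by omega), if_pos (by omega)]
      exact (hrung (p.val - n) (by omega)).symm
  have hflip : ∀ p q : ZMod (2 * n), p = q + (n : ZMod (2 * n)) →
      q = p + (n : ZMod (2 * n)) := by
    intro p q h
    rw [h, add_assoc, ← Nat.cast_add, show n + n = 2 * n from by omega,
      ZMod.natCast_self, add_zero]
  have hom : ∀ p q, (mobiusLadder n).Adj p q → G.Adj (f p) (f q) := by
    intro p q hpq
    rw [mobiusLadder, SimpleGraph.fromRel_adj] at hpq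
    obtain ⟨hne, (h | h) | (h | h)⟩ := hpq
    · rw [h]; exact hom1 p
    · rw [h]; exact hom2 p
    · rw [h]; exact (hom1 q).symm
    · rw [hflip p q h]; exact hom2 p
  have hone : (1 : ZMod (2 * n)) ≠ 0 := by
    intro h
    rw [← Nat.cast_one, ZMod.natCast_eq_zero_iff] at h
    have := Nat.le_of_dvd (by norm_num) h
    omega
  have hcastne : ∀ k : ℕ, 0 < k → k < 2 * n → ((k : ℕ) : ZMod (2 * n)) ≠ 0 := by
    intro k hk0 hk h
    rw [ZMod.natCast_eq_zero_iff] at h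
    have := Nat.le_of_dvd hk0 h
    omega
  have hdeg : ∀ p, G.degree (f p) ≤ (mobiusLadder n).degree p := by
    intro p
    rw [hcubic]
    have hadj1 : (mobiusLadder n).Adj p (p + 1) := by
      rw [mobiusLadder, SimpleGraph.fromRel_adj]
      exact ⟨fun h => hone (by linear_combination -h), Or.inl (Or.inl rfl)⟩
    have hadj2 : (mobiusLadder n).Adj p (p - 1) := by
      rw [mobiusLadder, SimpleGraph.fromRel_adj]
      refine ⟨fun h => hone (by linear_combination h), Or.inr (Or.inl (by ring))⟩
    have hadj3 : (mobiusLadder n).Adj p (p + (n : ZMod (2 * n))) := by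
      rw [mobiusLadder, SimpleGraph.fromRel_adj]
      refine ⟨fun h => hcastne n (by omega) (by omega) (by linear_combination -h),
        Or.inl (Or.inr rfl)⟩
    refine three_le_degree (mobiusLadder n) ?_ ?_ ?_ hadj1 hadj2 hadj3
    · intro h
      have : ((2 : ℕ) : ZMod (2 * n)) = 0 := by push_cast; linear_combination h
      exact hcastne 2 (by omega) (by omega) this
    · intro h
      have : ((n : ℕ) : ZMod (2 * n)) = 1 := by linear_combination -h
      have h2 : ((n - 1 : ℕ) : ZMod (2 * n)) = 0 := by
        push_cast [Nat.cast_sub (by omega : 1 ≤ n)]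
        rw [this]; ring
      exact hcastne (n - 1) (by omega) (by omega) h2
    · intro h
      have : ((n + 1 : ℕ) : ZMod (2 * n)) = 0 := by push_cast; linear_combination -h
      exact hcastne (n + 1) (by omega) (by omega) this
  exact ⟨(iso_of_equiv_hom (mobiusLadder n) G (Equiv.ofBijective f ⟨hinj, hsurj'⟩)
    hom hdeg).symm⟩

end Helpers

/-- Let `G` be a finite connected simple 3-regular triangle-free graph
in which every edge lies on a 4-cycle, containing a ladder `L n` (`n ≥ 3`) on vertices
`a 0, …, a (n-1), b 0, …, b (n-1)` whose interior vertices already have all three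
neighbours inside the ladder. Then exactly one of the following holds:
(i) `a 0 ∼ a (n-1)` and `b 0 ∼ b (n-1)` (and `G` is the prism `Y n`),
(ii) `a 0 ∼ b (n-1)` and `b 0 ∼ a (n-1)` (and `G` is the Möbius ladder `M n`), or
(iii) `G` contains a ladder `L (n+1)` extending the given one. -/
theorem ladder_extension_trichotomy {V : Type*} [Fintype V] (G : SimpleGraph V)
    [∀ v, Fintype (G.neighborSet v)]
    (hconn : G.Connected)
    (hcubic : ∀ v : V, G.degree v = 3)
    (htrianglefree : G.CliqueFree 3)
    (hsquares : ∀ x y : V, G.Adj x y →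
      ∃ u v : V, G.Adj x u ∧ G.Adj u v ∧ G.Adj v y ∧ u ≠ y ∧ v ≠ x)
    (n : ℕ) (hn : 3 ≤ n) (a b : ℕ → V)
    (ha_inj : ∀ i < n, ∀ j < n, a i = a j → i = j)
    (hb_inj : ∀ i < n, ∀ j < n, b i = b j → i = j)
    (hab : ∀ i < n, ∀ j < n, a i ≠ b j)
    (hrung : ∀ i < n, G.Adj (a i) (b i))
    (hraila : ∀ i, i + 1 < n → G.Adj (a i) (a (i + 1)))
    (hrailb : ∀ i, i + 1 < n → G.Adj (b i) (b (i + 1)))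
    (hsata : ∀ i, 0 < i → i + 1 < n →
      ∀ w : V, G.Adj (a i) w → w = a (i - 1) ∨ w = a (i + 1) ∨ w = b i)
    (hsatb : ∀ i, 0 < i → i + 1 < n →
      ∀ w : V, G.Adj (b i) w → w = b (i - 1) ∨ w = b (i + 1) ∨ w = a i) :
    letI P1 : Prop := G.Adj (a 0) (a (n - 1)) ∧ G.Adj (b 0) (b (n - 1)) ∧
      Nonempty (G ≃g prismGraph n)
    letI P2 : Prop := G.Adj (a 0) (b (n - 1)) ∧ G.Adj (b 0) (a (n - 1)) ∧
      Nonempty (G ≃g mobiusLadder n)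
    letI P3 : Prop := ∃ a' b' : V,
      (∀ i < n, a' ≠ a i ∧ a' ≠ b i ∧ b' ≠ a i ∧ b' ≠ b i) ∧ a' ≠ b' ∧
      G.Adj (a (n - 1)) a' ∧ G.Adj (b (n - 1)) b' ∧ G.Adj a' b'
    (P1 ∧ ¬P2 ∧ ¬P3) ∨ (¬P1 ∧ P2 ∧ ¬P3) ∨ (¬P1 ∧ ¬P2 ∧ P3) := by
  classical
  have hba : ∀ i < n, ∀ j < n, b i ≠ a j := fun i hi j hj => (hab j hj i hi).symm
  have hrung' : ∀ i < n, G.Adj (b i) (a i) := fun i hi => (hrung i hi).symm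
  have hAm2 : G.Adj (a (n - 1)) (a (n - 2)) := by
    have h := hraila (n - 2) (by omega)
    rw [show n - 2 + 1 = n - 1 from by omega] at h
    exact h.symm
  have hBm2 : G.Adj (b (n - 1)) (b (n - 2)) := by
    have h := hrailb (n - 2) (by omega)
    rw [show n - 2 + 1 = n - 1 from by omega] at h
    exact h.symm
  obtain ⟨a', ha'adj, ha'1, ha'2, satA⟩ :=
    third_nbr G (hcubic _) (hab (n - 2) (by omega) (n - 1) (by omega))
      hAm2 (hrung (n - 1) (by omega))
  obtain ⟨b', hb'adj, hb'1, hb'2, satB⟩ :=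
    third_nbr G (hcubic _) (Ne.symm (hab (n - 1) (by omega) (n - 2) (by omega)))
      hBm2 (hrung (n - 1) (by omega)).symm
  have hclassa := ladder_class G n hn a b ha_inj hab hsata hsatb ha'adj ha'1 ha'2
  rcases hclassa with ha0 | hb0 | haout
  · -- Case (i) : prism
    have hwa : G.Adj (a (n - 1)) (a 0) := ha0 ▸ ha'adj
    have hb'b0 : b' = b 0 :=
      ladder_H2 G hcubic htrianglefree hsquares n hn a b ha_inj hb_inj hab hrung
        hraila hrailb hsata hsatb hwa hb'adj hb'1 hb'2
    have hwb : G.Adj (b (n - 1)) (b 0) := hb'b0 ▸ hb'adj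
    rw [ha0] at satA
    rw [hb'b0] at satB
    have sat_a0 : ∀ w, G.Adj (a 0) w → w = a 1 ∨ w = b 0 ∨ w = a (n - 1) :=
      nbr_of_deg3 G (hcubic _)
        (hab 1 (by omega) 0 (by omega))
        (fun h => by have := ha_inj 1 (by omega) (n - 1) (by omega) h; omega)
        (Ne.symm (hab (n - 1) (by omega) 0 (by omega)))
        (hraila 0 (by omega)) (hrung 0 (by omega)) hwa.symm
    have sat_b0 : ∀ w, G.Adj (b 0) w → w = b 1 ∨ w = a 0 ∨ w = b (n - 1) :=
      nbr_of_deg3 G (hcubic _)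
        (Ne.symm (hab 0 (by omega) 1 (by omega)))
        (fun h => by have := hb_inj 1 (by omega) (n - 1) (by omega) h; omega)
        (hab 0 (by omega) (n - 1) (by omega))
        (hrailb 0 (by omega)) (hrung 0 (by omega)).symm hwb.symm
    have hstep := ladder_closed G n hn a b hsata hsatb
      (fun w hw => by
        rcases sat_a0 w hw with rfl | rfl | rfl
        · exact ⟨1, by omega, Or.inl rfl⟩
        · exact ⟨0, by omega, Or.inr rfl⟩
        · exact ⟨n - 1, by omega, Or.inl rfl⟩)
      (fun w hw => by
        rcases sat_b0 w hw with rfl | rfl | rfl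
        · exact ⟨1, by omega, Or.inr rfl⟩
        · exact ⟨0, by omega, Or.inl rfl⟩
        · exact ⟨n - 1, by omega, Or.inr rfl⟩)
      (fun w hw => by
        rcases satA w hw with rfl | rfl | rfl
        · exact ⟨n - 2, by omega, Or.inl rfl⟩
        · exact ⟨n - 1, by omega, Or.inr rfl⟩
        · exact ⟨0, by omega, Or.inl rfl⟩)
      (fun w hw => by
        rcases satB w hw with rfl | rfl | rfl
        · exact ⟨n - 2, by omega, Or.inr rfl⟩
        · exact ⟨n - 1, by omega, Or.inl rfl⟩
        · exact ⟨0, by omega, Or.inr rfl⟩)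
    have hsurjv := ladder_surj G hconn n (by omega) a b hstep
    refine Or.inl ⟨⟨hwa.symm, hwb.symm, ?_⟩, ?_, ?_⟩
    · exact prism_iso G hcubic n hn a b ha_inj hb_inj hab hrung hraila hrailb
        hwa hwb hsurjv
    · rintro ⟨h1, -, -⟩
      rcases satB (a 0) h1.symm with h2 | h2 | h2
      · exact hab 0 (by omega) (n - 2) (by omega) h2
      · have := ha_inj 0 (by omega) (n - 1) (by omega) h2
        omega
      · exact hab 0 (by omega) 0 (by omega) h2
    · rintro ⟨x, y, hxy, -, hax, -, -⟩
      rcases satA x hax with rfl | rfl | rfl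
      · exact (hxy (n - 2) (by omega)).1 rfl
      · exact (hxy (n - 1) (by omega)).2.1 rfl
      · exact (hxy 0 (by omega)).1 rfl
  · -- Case (ii) : Möbius
    have hwa : G.Adj (a (n - 1)) (b 0) := hb0 ▸ ha'adj
    have hb'a0 : b' = a 0 :=
      ladder_H2' G hcubic hsquares n hn a b ha_inj hb_inj hab hrung
        hraila hrailb hsata hsatb hwa hb'adj hb'1 hb'2
    have hwb : G.Adj (b (n - 1)) (a 0) := hb'a0 ▸ hb'adj
    rw [hb0] at satA
    rw [hb'a0] at satB
    have sat_a0 : ∀ w, G.Adj (a 0) w → w = a 1 ∨ w = b 0 ∨ w = b (n - 1) :=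
      nbr_of_deg3 G (hcubic _)
        (hab 1 (by omega) 0 (by omega))
        (hab 1 (by omega) (n - 1) (by omega))
        (fun h => by have := hb_inj 0 (by omega) (n - 1) (by omega) h; omega)
        (hraila 0 (by omega)) (hrung 0 (by omega)) hwb.symm
    have sat_b0 : ∀ w, G.Adj (b 0) w → w = b 1 ∨ w = a 0 ∨ w = a (n - 1) :=
      nbr_of_deg3 G (hcubic _)
        (Ne.symm (hab 0 (by omega) 1 (by omega)))
        (Ne.symm (hab (n - 1) (by omega) 1 (by omega)))
        (fun h => by have := ha_inj 0 (by omega) (n - 1) (by omega) h; omega)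
        (hrailb 0 (by omega)) (hrung 0 (by omega)).symm hwa.symm
    have hstep := ladder_closed G n hn a b hsata hsatb
      (fun w hw => by
        rcases sat_a0 w hw with rfl | rfl | rfl
        · exact ⟨1, by omega, Or.inl rfl⟩
        · exact ⟨0, by omega, Or.inr rfl⟩
        · exact ⟨n - 1, by omega, Or.inr rfl⟩)
      (fun w hw => by
        rcases sat_b0 w hw with rfl | rfl | rfl
        · exact ⟨1, by omega, Or.inr rfl⟩
        · exact ⟨0, by omega, Or.inl rfl⟩
        · exact ⟨n - 1, by omega, Or.inl rfl⟩)
      (fun w hw => by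
        rcases satA w hw with rfl | rfl | rfl
        · exact ⟨n - 2, by omega, Or.inl rfl⟩
        · exact ⟨n - 1, by omega, Or.inr rfl⟩
        · exact ⟨0, by omega, Or.inr rfl⟩)
      (fun w hw => by
        rcases satB w hw with rfl | rfl | rfl
        · exact ⟨n - 2, by omega, Or.inr rfl⟩
        · exact ⟨n - 1, by omega, Or.inl rfl⟩
        · exact ⟨0, by omega, Or.inl rfl⟩)
    have hsurjv := ladder_surj G hconn n (by omega) a b hstep
    refine Or.inr (Or.inl ⟨?_, ⟨hwb.symm, hwa.symm, ?_⟩, ?_⟩)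
    · rintro ⟨h1, -, -⟩
      rcases satA (a 0) h1.symm with h2 | h2 | h2
      · have := ha_inj 0 (by omega) (n - 2) (by omega) h2
        omega
      · exact hab 0 (by omega) (n - 1) (by omega) h2
      · exact hab 0 (by omega) 0 (by omega) h2
    · exact mobius_iso G hcubic n hn a b ha_inj hb_inj hab hrung hraila hrailb
        hwa hwb hsurjv
    · rintro ⟨x, y, hxy, -, hax, -, -⟩
      rcases satA x hax with rfl | rfl | rfl
      · exact (hxy (n - 2) (by omega)).1 rfl
      · exact (hxy (n - 1) (by omega)).2.1 rfl
      · exact (hxy 0 (by omega)).2.1 rfl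
  · -- a' is outside the ladder
    have hclassb := ladder_class G n hn b a hb_inj hba hsatb hsata hb'adj hb'1 hb'2
    rcases hclassb with hbb0 | hba0 | hbout
    · exfalso
      have : a' = a 0 :=
        ladder_H2 G hcubic htrianglefree hsquares n hn b a hb_inj ha_inj hba hrung'
          hrailb hraila hsatb hsata (hbb0 ▸ hb'adj) ha'adj ha'1 ha'2
      exact (haout 0 (by omega)).1 this
    · exfalso
      have : a' = b 0 :=
        ladder_H2' G hcubic hsquares n hn b a hb_inj ha_inj hba hrung'
          hrailb hraila hsatb hsata (hba0 ▸ hb'adj) ha'adj ha'1 ha'2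
      exact (haout 0 (by omega)).2 this
    · -- Case (iii) : extension
      have hadj : G.Adj a' b' :=
        ladder_H3 G hcubic hsquares n hn a b ha_inj hb_inj hab hrung hraila hrailb
          hsata hsatb ha'adj ha'1 ha'2 hb'adj hb'1 hb'2 haout hbout
      refine Or.inr (Or.inr ⟨?_, ?_, ?_⟩)
      · rintro ⟨h1, -, -⟩
        rcases satA (a 0) h1.symm with h2 | h2 | h2
        · have := ha_inj 0 (by omega) (n - 2) (by omega) h2
          omega
        · exact hab 0 (by omega) (n - 1) (by omega) h2
        · exact (haout 0 (by omega)).1 h2.symm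
      · rintro ⟨h1, -, -⟩
        rcases satB (a 0) h1.symm with h2 | h2 | h2
        · exact hab 0 (by omega) (n - 2) (by omega) h2
        · have := ha_inj 0 (by omega) (n - 1) (by omega) h2
          omega
        · exact (hbout 0 (by omega)).2 h2.symm
      · exact ⟨a', b',
          fun i hi => ⟨(haout i hi).1, (haout i hi).2, (hbout i hi).2, (hbout i hi).1⟩,
          hadj.ne, ha'adj, hb'adj, hadj⟩
end
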